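/- arXiv:2209.05670 — 3 statements merged into one kernel-verified Lean document; each statement's English description precedes it below -/
import Mathlib

section
/- Let R be a commutative ring, let t be a unit of R, and let s ∈ R satisfy s² = (1 − t)·s. Then the operation x ▷ y = t·x + s·y makes R into a rack; that is, for every y ∈ R the map x ↦ x ▷ y is a bijection of R, and (x ▷ y) ▷ z = (x ▷ z) ▷ (y ▷ z) for all x, y, z ∈ R. -/
/-- The `(t,s)`-rack operation `x ▷ y = t·x + s·y` on a commutative ring `R`, with `t`
a unit and `s² = (1 − t)·s`, makes `R` into a rack: each right translation is a
bijection and the operation is right self-distributive. -/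
theorem ts_rack_axioms {R : Type*} [CommRing R] (t s : R) (ht : IsUnit t)
    (hs : s ^ 2 = (1 - t) * s) :
    (∀ y : R, Function.Bijective (fun x : R => t * x + s * y)) ∧
    (∀ x y z : R,
      t * (t * x + s * y) + s * z = t * (t * x + s * z) + s * (t * y + s * z)) := by
  obtain ⟨u, rfl⟩ := ht
  constructor
  · intro y
    constructor
    · intro a b hab
      simp only at hab
      have h : (u : R) * a = u * b := by exact add_right_cancel hab
      calc a = (u⁻¹ : Rˣ) * ((u : R) * a) := by simp [← mul_assoc, ← Units.val_mul]
        _ = (u⁻¹ : Rˣ) * ((u : R) * b) := by rw [h]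
        _ = b := by simp [← mul_assoc, ← Units.val_mul]
    · intro b
      refine ⟨(u⁻¹ : Rˣ) * (b - s * y), ?_⟩
      simp [← mul_assoc, ← Units.val_mul]
  · intro x y z
    linear_combination (-z) * hs
end

section
/- Let K = ℚ(t) be the field of rational functions over ℚ in the variable t. If x₁, …, x₄₅ ∈ K satisfy all 45 equations of the Alexander quandle coloring system of the Allen–Swenberg link with parameter t, then x₁ = x₂ = ⋯ = x₄₅. In other words, over the generic parameter t the solution space of this system is exactly the one-dimensional space of constant tuples. -/
set_option maxHeartbeats 4000000 in
/-- Over the field `K = ℚ(t)` of rational functions with generic parameter `t = X`,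
every solution of the Alexander quandle coloring system of the Allen–Swenberg link
is a constant tuple. -/
theorem allen_swenberg_coloring_monochromatic_generic
    (x1 x2 x3 x4 x5 x6 x7 x8 x9 x10 x11 x12 x13 x14 x15 x16 x17 x18 x19 x20 x21 x22 x23 x24 x25 x26 x27 x28 x29 x30 x31 x32 x33 x34 x35 x36 x37 x38 x39 x40 x41 x42 x43 x44 x45 : RatFunc ℚ)
    (h1 : x2 = (RatFunc.X : RatFunc ℚ) * x1 + (1 - (RatFunc.X : RatFunc ℚ)) * x26)
    (h2 : x26 = (RatFunc.X : RatFunc ℚ) * x27 + (1 - (RatFunc.X : RatFunc ℚ)) * x1)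
    (h3 : x1 = (RatFunc.X : RatFunc ℚ) * x2 + (1 - (RatFunc.X : RatFunc ℚ)) * x3)
    (h4 : x3 = (RatFunc.X : RatFunc ℚ) * x4 + (1 - (RatFunc.X : RatFunc ℚ)) * x1)
    (h5 : x4 = (RatFunc.X : RatFunc ℚ) * x5 + (1 - (RatFunc.X : RatFunc ℚ)) * x3)
    (h6 : x5 = (RatFunc.X : RatFunc ℚ) * x6 + (1 - (RatFunc.X : RatFunc ℚ)) * x7)
    (h7 : x8 = (RatFunc.X : RatFunc ℚ) * x7 + (1 - (RatFunc.X : RatFunc ℚ)) * x6)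
    (h8 : x29 = (RatFunc.X : RatFunc ℚ) * x28 + (1 - (RatFunc.X : RatFunc ℚ)) * x6)
    (h9 : x3 = (RatFunc.X : RatFunc ℚ) * x6 + (1 - (RatFunc.X : RatFunc ℚ)) * x28)
    (h10 : x9 = (RatFunc.X : RatFunc ℚ) * x8 + (1 - (RatFunc.X : RatFunc ℚ)) * x7)
    (h11 : x7 = (RatFunc.X : RatFunc ℚ) * x10 + (1 - (RatFunc.X : RatFunc ℚ)) * x9)
    (h12 : x11 = (RatFunc.X : RatFunc ℚ) * x9 + (1 - (RatFunc.X : RatFunc ℚ)) * x10)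
    (h13 : x10 = (RatFunc.X : RatFunc ℚ) * x12 + (1 - (RatFunc.X : RatFunc ℚ)) * x11)
    (h14 : x13 = (RatFunc.X : RatFunc ℚ) * x11 + (1 - (RatFunc.X : RatFunc ℚ)) * x12)
    (h15 : x12 = (RatFunc.X : RatFunc ℚ) * x14 + (1 - (RatFunc.X : RatFunc ℚ)) * x13)
    (h16 : x19 = (RatFunc.X : RatFunc ℚ) * x15 + (1 - (RatFunc.X : RatFunc ℚ)) * x14)
    (h17 : x22 = (RatFunc.X : RatFunc ℚ) * x15 + (1 - (RatFunc.X : RatFunc ℚ)) * x13)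
    (h18 : x20 = (RatFunc.X : RatFunc ℚ) * x16 + (1 - (RatFunc.X : RatFunc ℚ)) * x14)
    (h19 : x21 = (RatFunc.X : RatFunc ℚ) * x16 + (1 - (RatFunc.X : RatFunc ℚ)) * x13)
    (h20 : x14 = (RatFunc.X : RatFunc ℚ) * x17 + (1 - (RatFunc.X : RatFunc ℚ)) * x21)
    (h21 : x13 = (RatFunc.X : RatFunc ℚ) * x18 + (1 - (RatFunc.X : RatFunc ℚ)) * x21)
    (h22 : x20 = (RatFunc.X : RatFunc ℚ) * x17 + (1 - (RatFunc.X : RatFunc ℚ)) * x22)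
    (h23 : x19 = (RatFunc.X : RatFunc ℚ) * x18 + (1 - (RatFunc.X : RatFunc ℚ)) * x22)
    (h24 : x21 = (RatFunc.X : RatFunc ℚ) * x23 + (1 - (RatFunc.X : RatFunc ℚ)) * x20)
    (h25 : x22 = (RatFunc.X : RatFunc ℚ) * x24 + (1 - (RatFunc.X : RatFunc ℚ)) * x20)
    (h26 : x26 = (RatFunc.X : RatFunc ℚ) * x23 + (1 - (RatFunc.X : RatFunc ℚ)) * x19)
    (h27 : x25 = (RatFunc.X : RatFunc ℚ) * x24 + (1 - (RatFunc.X : RatFunc ℚ)) * x19)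
    (h28 : x30 = (RatFunc.X : RatFunc ℚ) * x28 + (1 - (RatFunc.X : RatFunc ℚ)) * x29)
    (h29 : x29 = (RatFunc.X : RatFunc ℚ) * x31 + (1 - (RatFunc.X : RatFunc ℚ)) * x30)
    (h30 : x32 = (RatFunc.X : RatFunc ℚ) * x30 + (1 - (RatFunc.X : RatFunc ℚ)) * x31)
    (h31 : x31 = (RatFunc.X : RatFunc ℚ) * x33 + (1 - (RatFunc.X : RatFunc ℚ)) * x32)
    (h32 : x34 = (RatFunc.X : RatFunc ℚ) * x32 + (1 - (RatFunc.X : RatFunc ℚ)) * x33)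
    (h33 : x33 = (RatFunc.X : RatFunc ℚ) * x35 + (1 - (RatFunc.X : RatFunc ℚ)) * x34)
    (h34 : x40 = (RatFunc.X : RatFunc ℚ) * x36 + (1 - (RatFunc.X : RatFunc ℚ)) * x35)
    (h35 : x38 = (RatFunc.X : RatFunc ℚ) * x36 + (1 - (RatFunc.X : RatFunc ℚ)) * x34)
    (h36 : x41 = (RatFunc.X : RatFunc ℚ) * x37 + (1 - (RatFunc.X : RatFunc ℚ)) * x35)
    (h37 : x39 = (RatFunc.X : RatFunc ℚ) * x37 + (1 - (RatFunc.X : RatFunc ℚ)) * x34)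
    (h38 : x35 = (RatFunc.X : RatFunc ℚ) * x42 + (1 - (RatFunc.X : RatFunc ℚ)) * x39)
    (h39 : x34 = (RatFunc.X : RatFunc ℚ) * x43 + (1 - (RatFunc.X : RatFunc ℚ)) * x39)
    (h40 : x41 = (RatFunc.X : RatFunc ℚ) * x42 + (1 - (RatFunc.X : RatFunc ℚ)) * x38)
    (h41 : x40 = (RatFunc.X : RatFunc ℚ) * x43 + (1 - (RatFunc.X : RatFunc ℚ)) * x38)
    (h42 : x25 = (RatFunc.X : RatFunc ℚ) * x44 + (1 - (RatFunc.X : RatFunc ℚ)) * x40)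
    (h43 : x39 = (RatFunc.X : RatFunc ℚ) * x44 + (1 - (RatFunc.X : RatFunc ℚ)) * x41)
    (h44 : x27 = (RatFunc.X : RatFunc ℚ) * x45 + (1 - (RatFunc.X : RatFunc ℚ)) * x40)
    (h45 : x38 = (RatFunc.X : RatFunc ℚ) * x45 + (1 - (RatFunc.X : RatFunc ℚ)) * x41)    : x1 = x2 ∧ x2 = x3 ∧ x3 = x4 ∧ x4 = x5 ∧ x5 = x6 ∧ x6 = x7 ∧ x7 = x8 ∧ x8 = x9 ∧ x9 = x10 ∧ x10 = x11 ∧ x11 = x12 ∧ x12 = x13 ∧ x13 = x14 ∧ x14 = x15 ∧ x15 = x16 ∧ x16 = x17 ∧ x17 = x18 ∧ x18 = x19 ∧ x19 = x20 ∧ x20 = x21 ∧ x21 = x22 ∧ x22 = x23 ∧ x23 = x24 ∧ x24 = x25 ∧ x25 = x26 ∧ x26 = x27 ∧ x27 = x28 ∧ x28 = x29 ∧ x29 = x30 ∧ x30 = x31 ∧ x31 = x32 ∧ x32 = x33 ∧ x33 = x34 ∧ x34 = x35 ∧ x35 = x36 ∧ x36 = x37 ∧ x37 = x38 ∧ x38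 = x39 ∧ x39 = x40 ∧ x40 = x41 ∧ x41 = x42 ∧ x42 = x43 ∧ x43 = x44 ∧ x44 = x45 := by
  
  obtain ⟨t, ht⟩ : ∃ u : RatFunc ℚ, u = RatFunc.X := ⟨_, rfl⟩
  rw [← ht] at h1 h2 h3 h4 h5 h6 h7 h8 h9 h10 h11 h12 h13 h14 h15 h16 h17 h18 h19 h20 h21 h22 h23 h24 h25 h26 h27 h28 h29 h30 h31 h32 h33 h34 h35 h36 h37 h38 h39 h40 h41 h42 h43 h44 h45
  have hX1 : t ≠ 1 := by
    rw [ht]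
    intro h
    have h2 : algebraMap (Polynomial ℚ) (RatFunc ℚ) Polynomial.X
        = algebraMap (Polynomial ℚ) (RatFunc ℚ) 1 := by
      simpa [RatFunc.algebraMap_X] using h
    have h3 := RatFunc.algebraMap_injective ℚ h2
    simpa [Polynomial.coeff_one] using congrArg (fun p => Polynomial.coeff p 1) h3
  have hD : (t^4*(t-1) : RatFunc ℚ) ≠ 0 :=
    mul_ne_zero (pow_ne_zero 4 (ht ▸ RatFunc.X_ne_zero))
      (sub_ne_zero.mpr hX1)
  have e1 : (t^4*(t-1)) * (x1 - x2) = 0 := by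
    linear_combination (t^4 - t^3) * h3 + (t^4 - t^3) * h4 + (t^5 - t^4) * h5 + (t^6 - t^5) * h6 + (t^6 - 2*t^5 + t^4) * h7 + (- t^6 + 2*t^5 - t^4) * h8 + (- t^6 + t^5) * h9 + (t^5 - 2*t^4 + t^3) * h10 + (- t^6 + 3*t^5 - 3*t^4 + t^3) * h11 + (- t^6 + 4*t^5 - 5*t^4 + 2*t^3) * h12 + (- 2*t^6 + 6*t^5 - 6*t^4 + 2*t^3) * h13 + (- 2*t^6 + 7*t^5 - 8*t^4 + 3*t^3) * h14 + (- 3*t^6 + 9*t^5 - 9*t^4 + 3*t^3) * h15 + (t^7 - 4*t^6 + 5*t^5 - 2*t^4) * h16 + (- t^7 + 4*t^6 - 5*t^5 + 2*t^4) * h17 + (- t^7 + 3*t^6 - 3*t^5 + t^4) * h18 + (t^7 - 3*t^6 + 3*t^5 - t^4) * h19 + (- 2*t^7 + 6*t^6 - 6*t^5 + 2*t^4) * h20 + (2*t^7 - 7*t^6 + 8*t^5 - 3*t^4) * h21 + (2*t^7 - 6*t^6 + 6*t^5 - 2*t^4) * h22 + (- 2*t^7 + 7*t^6 - 8*t^5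 + 3*t^4) * h23 + (- t^6 + 2*t^5 - t^4) * h25 + (t^6 - 2*t^5 + t^4) * h27 + (t^6 - 2*t^5 + t^4) * h29 + (t^6 - 3*t^5 + 3*t^4 - t^3) * h30 + (2*t^6 - 5*t^5 + 4*t^4 - t^3) * h31 + (2*t^6 - 6*t^5 + 6*t^4 - 2*t^3) * h32 + (3*t^6 - 8*t^5 + 7*t^4 - 2*t^3) * h33 + (- t^7 + 3*t^6 - 3*t^5 + t^4) * h34 + (t^7 - 3*t^6 + 3*t^5 - t^4) * h35 + (t^7 - 2*t^6 + t^5) * h36 + (- t^7 + 2*t^6 - t^5) * h37 + (2*t^7 - 5*t^6 + 4*t^5 - t^4) * h38 + (- 2*t^7 + 6*t^6 - 6*t^5 + 2*t^4) * h39 + (- 2*t^7 + 5*t^6 - 4*t^5 + t^4) * h40 + (2*t^7 - 6*t^6 + 6*t^5 - 2*t^4) * h41 + (- t^6 + 2*t^5 - t^4) * h42 + (t^6 - 2*t^5 + t^4) * h43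
  have e2 : (t^4*(t-1)) * (x2 - x3) = 0 := by
    linear_combination (- t^4 + t^3) * h3 + (t^3) * h4 + (t^4) * h5 + (t^5) * h6 + (t^5 - t^4) * h7 + (- t^5 + t^4) * h8 + (- t^5) * h9 + (t^4 - t^3) * h10 + (- t^5 + 2*t^4 - t^3) * h11 + (- t^5 + 3*t^4 - 2*t^3) * h12 + (- 2*t^5 + 4*t^4 - 2*t^3) * h13 + (- 2*t^5 + 5*t^4 - 3*t^3) * h14 + (- 3*t^5 + 6*t^4 - 3*t^3) * h15 + (t^6 - 3*t^5 + 2*t^4) * h16 + (- t^6 + 3*t^5 - 2*t^4) * h17 + (- t^6 + 2*t^5 - t^4) * h18 + (t^6 - 2*t^5 + t^4) * h19 + (- 2*t^6 + 4*t^5 - 2*t^4) * h20 + (2*t^6 - 5*t^5 + 3*t^4) * h21 + (2*t^6 - 4*t^5 + 2*t^4) * h22 + (- 2*t^6 + 5*t^5 - 3*t^4) * h23 + (- t^5 + t^4) * h25 + (t^5 - t^4) * h27 + (t^5 - t^4) * h29 + (t^5 - 2*t^4 + t^3) * h30 + (2*t^5 - 3*t^4 + t^3) * h31 + (2*t^5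 - 4*t^4 + 2*t^3) * h32 + (3*t^5 - 5*t^4 + 2*t^3) * h33 + (- t^6 + 2*t^5 - t^4) * h34 + (t^6 - 2*t^5 + t^4) * h35 + (t^6 - t^5) * h36 + (- t^6 + t^5) * h37 + (2*t^6 - 3*t^5 + t^4) * h38 + (- 2*t^6 + 4*t^5 - 2*t^4) * h39 + (- 2*t^6 + 3*t^5 - t^4) * h40 + (2*t^6 - 4*t^5 + 2*t^4) * h41 + (- t^5 + t^4) * h42 + (t^5 - t^4) * h43
  have e3 : (t^4*(t-1)) * (x3 - x4) = 0 := by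
    linear_combination (- t^5 + t^4) * h5 + (- t^6 + t^5) * h6 + (- t^6 + 2*t^5 - t^4) * h7 + (t^6 - 2*t^5 + t^4) * h8 + (t^6 - t^5) * h9 + (- t^5 + 2*t^4 - t^3) * h10 + (t^6 - 3*t^5 + 3*t^4 - t^3) * h11 + (t^6 - 4*t^5 + 5*t^4 - 2*t^3) * h12 + (2*t^6 - 6*t^5 + 6*t^4 - 2*t^3) * h13 + (2*t^6 - 7*t^5 + 8*t^4 - 3*t^3) * h14 + (3*t^6 - 9*t^5 + 9*t^4 - 3*t^3) * h15 + (- t^7 + 4*t^6 - 5*t^5 + 2*t^4) * h16 + (t^7 - 4*t^6 + 5*t^5 - 2*t^4) * h17 + (t^7 - 3*t^6 + 3*t^5 - t^4) * h18 + (- t^7 + 3*t^6 - 3*t^5 + t^4) * h19 + (2*t^7 - 6*t^6 + 6*t^5 - 2*t^4) * h20 + (- 2*t^7 + 7*t^6 - 8*t^5 + 3*t^4) * h21 + (- 2*t^7 + 6*t^6 - 6*t^5 + 2*t^4) * h22 + (2*t^7 - 7*t^6 + 8*t^5 - 3*t^4) * h23 + (t^6 - 2*t^5 + t^4) * h25 +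 (- t^6 + 2*t^5 - t^4) * h27 + (- t^6 + 2*t^5 - t^4) * h29 + (- t^6 + 3*t^5 - 3*t^4 + t^3) * h30 + (- 2*t^6 + 5*t^5 - 4*t^4 + t^3) * h31 + (- 2*t^6 + 6*t^5 - 6*t^4 + 2*t^3) * h32 + (- 3*t^6 + 8*t^5 - 7*t^4 + 2*t^3) * h33 + (t^7 - 3*t^6 + 3*t^5 - t^4) * h34 + (- t^7 + 3*t^6 - 3*t^5 + t^4) * h35 + (- t^7 + 2*t^6 - t^5) * h36 + (t^7 - 2*t^6 + t^5) * h37 + (- 2*t^7 + 5*t^6 - 4*t^5 + t^4) * h38 + (2*t^7 - 6*t^6 + 6*t^5 - 2*t^4) * h39 + (2*t^7 - 5*t^6 + 4*t^5 - t^4) * h40 + (- 2*t^7 + 6*t^6 - 6*t^5 + 2*t^4) * h41 + (t^6 - 2*t^5 + t^4) * h42 + (- t^6 + 2*t^5 - t^4) * h43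
  have e4 : (t^4*(t-1)) * (x4 - x5) = 0 := by
    linear_combination (t^5 - t^4) * h5 + (t^6 - 2*t^5 + t^4) * h6 + (t^6 - 3*t^5 + 3*t^4 - t^3) * h7 + (- t^6 + 3*t^5 - 3*t^4 + t^3) * h8 + (- t^6 + 2*t^5 - t^4) * h9 + (t^5 - 3*t^4 + 3*t^3 - t^2) * h10 + (- t^6 + 4*t^5 - 6*t^4 + 4*t^3 - t^2) * h11 + (- t^6 + 5*t^5 - 9*t^4 + 7*t^3 - 2*t^2) * h12 + (- 2*t^6 + 8*t^5 - 12*t^4 + 8*t^3 - 2*t^2) * h13 + (- 2*t^6 + 9*t^5 - 15*t^4 + 11*t^3 - 3*t^2) * h14 + (- 3*t^6 + 12*t^5 - 18*t^4 + 12*t^3 - 3*t^2) * h15 + (t^7 - 5*t^6 + 9*t^5 - 7*t^4 + 2*t^3) * h16 + (- t^7 + 5*t^6 - 9*t^5 + 7*t^4 - 2*t^3) * h17 + (- t^7 + 4*t^6 - 6*t^5 + 4*t^4 - t^3) * h18 + (t^7 - 4*t^6 + 6*t^5 - 4*t^4 + t^3) * h19 + (- 2*t^7 + 8*t^6 - 12*t^5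 + 8*t^4 - 2*t^3) * h20 + (2*t^7 - 9*t^6 + 15*t^5 - 11*t^4 + 3*t^3) * h21 + (2*t^7 - 8*t^6 + 12*t^5 - 8*t^4 + 2*t^3) * h22 + (- 2*t^7 + 9*t^6 - 15*t^5 + 11*t^4 - 3*t^3) * h23 + (- t^6 + 3*t^5 - 3*t^4 + t^3) * h25 + (t^6 - 3*t^5 + 3*t^4 - t^3) * h27 + (t^6 - 3*t^5 + 3*t^4 - t^3) * h29 + (t^6 - 4*t^5 + 6*t^4 - 4*t^3 + t^2) * h30 + (2*t^6 - 7*t^5 + 9*t^4 - 5*t^3 + t^2) * h31 + (2*t^6 - 8*t^5 + 12*t^4 - 8*t^3 + 2*t^2) * h32 + (3*t^6 - 11*t^5 + 15*t^4 - 9*t^3 + 2*t^2) * h33 + (- t^7 + 4*t^6 - 6*t^5 + 4*t^4 - t^3) * h34 + (t^7 - 4*t^6 + 6*t^5 - 4*t^4 + t^3) * h35 + (t^7 - 3*t^6 + 3*t^5 - t^4) * h36 + (- t^7 + 3*t^6 - 3*t^5 + t^4) * h37 + (2*t^7 - 7*t^6 + 9*t^5 - 5*t^4 + t^3) * h38 +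 (- 2*t^7 + 8*t^6 - 12*t^5 + 8*t^4 - 2*t^3) * h39 + (- 2*t^7 + 7*t^6 - 9*t^5 + 5*t^4 - t^3) * h40 + (2*t^7 - 8*t^6 + 12*t^5 - 8*t^4 + 2*t^3) * h41 + (- t^6 + 3*t^5 - 3*t^4 + t^3) * h42 + (t^6 - 3*t^5 + 3*t^4 - t^3) * h43
  have e5 : (t^4*(t-1)) * (x5 - x6) = 0 := by
    linear_combination (- t^4 + t^3) * h1 + (- t^3 + t^2) * h3 + (- t^4 + t^2) * h4 + (- t^5 + t^3) * h5 + (- t^6 + t^5) * h6 + (- t^6 + 2*t^5 - 2*t^4 + 2*t^3 - t^2) * h7 + (t^6 - 2*t^5 + 2*t^4 - 2*t^3 + t^2) * h8 + (t^6 - t^5 + t^4 - t^3) * h9 + (- t^5 + 2*t^4 - 2*t^3 + 2*t^2 - t) * h10 + (t^6 - 4*t^5 + 6*t^4 - 5*t^3 + 3*t^2 - t) * h11 + (t^6 - 5*t^5 + 9*t^4 - 9*t^3 + 6*t^2 - 2*t) * h12 + (2*t^6 - 8*t^5 + 13*t^4 - 12*t^3 + 7*t^2 - 2*t) * h13 +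 (2*t^6 - 9*t^5 + 16*t^4 - 16*t^3 + 10*t^2 - 3*t) * h14 + (3*t^6 - 12*t^5 + 20*t^4 - 19*t^3 + 11*t^2 - 3*t) * h15 + (- t^7 + 5*t^6 - 9*t^5 + 9*t^4 - 6*t^3 + 2*t^2) * h16 + (t^7 - 5*t^6 + 9*t^5 - 9*t^4 + 6*t^3 - 2*t^2) * h17 + (t^7 - 4*t^6 + 6*t^5 - 5*t^4 + 3*t^3 - t^2) * h18 + (- t^7 + 4*t^6 - 6*t^5 + 5*t^4 - 3*t^3 + t^2) * h19 + (2*t^7 - 8*t^6 + 13*t^5 - 12*t^4 + 7*t^3 - 2*t^2) * h20 + (- 2*t^7 + 9*t^6 - 16*t^5 + 16*t^4 - 10*t^3 + 3*t^2) * h21 + (- 2*t^7 + 8*t^6 - 13*t^5 + 12*t^4 - 7*t^3 + 2*t^2) * h22 + (2*t^7 - 9*t^6 + 16*t^5 - 16*t^4 + 10*t^3 - 3*t^2) * h23 + (- t^5 + 2*t^4 - t^3) * h24 + (t^6 - 2*t^5 + 2*t^4 - 2*t^3 + t^2) * h25 + (t^5 - 2*t^4 + t^3) * h26 + (- t^6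 + 2*t^5 - 2*t^4 + 2*t^3 - t^2) * h27 + (- t^6 + 2*t^5 - 2*t^4 + 2*t^3 - t^2) * h29 + (- t^6 + 3*t^5 - 4*t^4 + 4*t^3 - 3*t^2 + t) * h30 + (- 2*t^6 + 5*t^5 - 6*t^4 + 6*t^3 - 4*t^2 + t) * h31 + (- 2*t^6 + 6*t^5 - 8*t^4 + 8*t^3 - 6*t^2 + 2*t) * h32 + (- 3*t^6 + 8*t^5 - 10*t^4 + 10*t^3 - 7*t^2 + 2*t) * h33 + (t^7 - 3*t^6 + 4*t^5 - 4*t^4 + 3*t^3 - t^2) * h34 + (- t^7 + 3*t^6 - 4*t^5 + 4*t^4 - 3*t^3 + t^2) * h35 + (- t^7 + 2*t^6 - 2*t^5 + 2*t^4 - t^3) * h36 + (t^7 - 2*t^6 + 2*t^5 - 2*t^4 + t^3) * h37 + (- 2*t^7 + 5*t^6 - 6*t^5 + 6*t^4 - 4*t^3 + t^2) * h38 + (2*t^7 - 6*t^6 + 8*t^5 - 8*t^4 + 6*t^3 - 2*t^2) * h39 + (2*t^7 - 5*t^6 + 6*t^5 - 6*t^4 + 4*t^3 - t^2) * h40 +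 (- 2*t^7 + 6*t^6 - 8*t^5 + 8*t^4 - 6*t^3 + 2*t^2) * h41 + (t^6 - 2*t^5 + 2*t^4 - 2*t^3 + t^2) * h42 + (- t^6 + 2*t^5 - 2*t^4 + 2*t^3 - t^2) * h43
  have e6 : (t^4*(t-1)) * (x6 - x7) = 0 := by
    linear_combination (- t^3) * h1 + (- t^2) * h3 + (- t^3 - t^2) * h4 + (- t^4 - t^3) * h5 + (- t^5 - t^4) * h6 + (- t^5 + t^4 - t^3 + t^2) * h7 + (t^5 - t^4 + t^3 - t^2) * h8 + (t^5 + t^3) * h9 + (- t^4 + t^3 - t^2 + t) * h10 + (t^5 - 3*t^4 + 3*t^3 - 2*t^2 + t) * h11 + (t^5 - 4*t^4 + 5*t^3 - 4*t^2 + 2*t) * h12 + (2*t^5 - 6*t^4 + 7*t^3 - 5*t^2 + 2*t) * h13 + (2*t^5 - 7*t^4 + 9*t^3 - 7*t^2 + 3*t) * h14 + (3*t^5 - 9*t^4 + 11*t^3 - 8*t^2 + 3*t) * h15 + (- t^6 + 4*t^5 - 5*t^4 + 4*t^3 - 2*t^2) * h16 + (t^6 - 4*t^5 + 5*t^4 -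 4*t^3 + 2*t^2) * h17 + (t^6 - 3*t^5 + 3*t^4 - 2*t^3 + t^2) * h18 + (- t^6 + 3*t^5 - 3*t^4 + 2*t^3 - t^2) * h19 + (2*t^6 - 6*t^5 + 7*t^4 - 5*t^3 + 2*t^2) * h20 + (- 2*t^6 + 7*t^5 - 9*t^4 + 7*t^3 - 3*t^2) * h21 + (- 2*t^6 + 6*t^5 - 7*t^4 + 5*t^3 - 2*t^2) * h22 + (2*t^6 - 7*t^5 + 9*t^4 - 7*t^3 + 3*t^2) * h23 + (- t^4 + t^3) * h24 + (t^5 - t^4 + t^3 - t^2) * h25 + (t^4 - t^3) * h26 + (- t^5 + t^4 - t^3 + t^2) * h27 + (- t^5 + t^4 - t^3 + t^2) * h29 + (- t^5 + 2*t^4 - 2*t^3 + 2*t^2 - t) * h30 + (- 2*t^5 + 3*t^4 - 3*t^3 + 3*t^2 - t) * h31 + (- 2*t^5 + 4*t^4 - 4*t^3 + 4*t^2 - 2*t) * h32 + (- 3*t^5 + 5*t^4 - 5*t^3 + 5*t^2 - 2*t) * h33 + (t^6 - 2*t^5 + 2*t^4 - 2*t^3 + t^2) * h34 + (- t^6 +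 2*t^5 - 2*t^4 + 2*t^3 - t^2) * h35 + (- t^6 + t^5 - t^4 + t^3) * h36 + (t^6 - t^5 + t^4 - t^3) * h37 + (- 2*t^6 + 3*t^5 - 3*t^4 + 3*t^3 - t^2) * h38 + (2*t^6 - 4*t^5 + 4*t^4 - 4*t^3 + 2*t^2) * h39 + (2*t^6 - 3*t^5 + 3*t^4 - 3*t^3 + t^2) * h40 + (- 2*t^6 + 4*t^5 - 4*t^4 + 4*t^3 - 2*t^2) * h41 + (t^5 - t^4 + t^3 - t^2) * h42 + (- t^5 + t^4 - t^3 + t^2) * h43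
  have e7 : (t^4*(t-1)) * (x7 - x8) = 0 := by
    linear_combination (- t^4 + t^3) * h1 + (- t^3 + t^2) * h3 + (- t^4 + t^2) * h4 + (- t^5 + t^3) * h5 + (- t^6 + t^4) * h6 + (- t^6 + t^5 - t^4 + 2*t^3 - t^2) * h7 + (t^6 - 2*t^5 + 2*t^4 - 2*t^3 + t^2) * h8 + (t^6 - t^5 + t^4 - t^3) * h9 + (- t^5 + 2*t^4 - 2*t^3 + 2*t^2 - t) * h10 + (t^6 - 4*t^5 + 6*t^4 - 5*t^3 + 3*t^2 - t) * h11 + (t^6 - 5*t^5 + 9*t^4 - 9*t^3 + 6*t^2 - 2*t) * h12 + (2*t^6 - 8*t^5 + 13*t^4 - 12*t^3 + 7*t^2 - 2*t) * h13 + (2*t^6 - 9*t^5 + 16*t^4 - 16*t^3 + 10*t^2 - 3*t) * h14 + (3*t^6 - 12*t^5 + 20*t^4 - 19*t^3 + 11*t^2 - 3*t) * h15 + (- t^7 + 5*t^6 - 9*t^5 + 9*t^4 - 6*t^3 + 2*t^2) * h16 + (t^7 - 5*t^6 + 9*t^5 - 9*t^4 + 6*t^3 - 2*t^2) * h17 +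 (t^7 - 4*t^6 + 6*t^5 - 5*t^4 + 3*t^3 - t^2) * h18 + (- t^7 + 4*t^6 - 6*t^5 + 5*t^4 - 3*t^3 + t^2) * h19 + (2*t^7 - 8*t^6 + 13*t^5 - 12*t^4 + 7*t^3 - 2*t^2) * h20 + (- 2*t^7 + 9*t^6 - 16*t^5 + 16*t^4 - 10*t^3 + 3*t^2) * h21 + (- 2*t^7 + 8*t^6 - 13*t^5 + 12*t^4 - 7*t^3 + 2*t^2) * h22 + (2*t^7 - 9*t^6 + 16*t^5 - 16*t^4 + 10*t^3 - 3*t^2) * h23 + (- t^5 + 2*t^4 - t^3) * h24 + (t^6 - 2*t^5 + 2*t^4 - 2*t^3 + t^2) * h25 + (t^5 - 2*t^4 + t^3) * h26 + (- t^6 + 2*t^5 - 2*t^4 + 2*t^3 - t^2) * h27 + (- t^6 + 2*t^5 - 2*t^4 + 2*t^3 - t^2) * h29 + (- t^6 + 3*t^5 - 4*t^4 + 4*t^3 - 3*t^2 + t) * h30 + (- 2*t^6 + 5*t^5 - 6*t^4 + 6*t^3 - 4*t^2 + t) * h31 + (- 2*t^6 + 6*t^5 - 8*t^4 + 8*t^3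 - 6*t^2 + 2*t) * h32 + (- 3*t^6 + 8*t^5 - 10*t^4 + 10*t^3 - 7*t^2 + 2*t) * h33 + (t^7 - 3*t^6 + 4*t^5 - 4*t^4 + 3*t^3 - t^2) * h34 + (- t^7 + 3*t^6 - 4*t^5 + 4*t^4 - 3*t^3 + t^2) * h35 + (- t^7 + 2*t^6 - 2*t^5 + 2*t^4 - t^3) * h36 + (t^7 - 2*t^6 + 2*t^5 - 2*t^4 + t^3) * h37 + (- 2*t^7 + 5*t^6 - 6*t^5 + 6*t^4 - 4*t^3 + t^2) * h38 + (2*t^7 - 6*t^6 + 8*t^5 - 8*t^4 + 6*t^3 - 2*t^2) * h39 + (2*t^7 - 5*t^6 + 6*t^5 - 6*t^4 + 4*t^3 - t^2) * h40 + (- 2*t^7 + 6*t^6 - 8*t^5 + 8*t^4 - 6*t^3 + 2*t^2) * h41 + (t^6 - 2*t^5 + 2*t^4 - 2*t^3 + t^2) * h42 + (- t^6 + 2*t^5 - 2*t^4 + 2*t^3 - t^2) * h43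
  have e8 : (t^4*(t-1)) * (x8 - x9) = 0 := by
    linear_combination (- t^5 + 2*t^4 - t^3) * h1 + (- t^4 + 2*t^3 - t^2) * h3 + (- t^5 + t^4 + t^3 - t^2) * h4 + (- t^6 + t^5 + t^4 - t^3) * h5 + (- t^7 + t^6 + t^5 - t^4) * h6 + (- t^7 + 2*t^6 - 2*t^5 + 3*t^4 - 3*t^3 + t^2) * h7 + (t^7 - 3*t^6 + 4*t^5 - 4*t^4 + 3*t^3 - t^2) * h8 + (t^7 - 2*t^6 + 2*t^5 - 2*t^4 + t^3) * h9 + (- t^6 + 2*t^5 - 3*t^4 + 4*t^3 - 3*t^2 + t) * h10 + (t^7 - 5*t^6 + 10*t^5 - 11*t^4 + 8*t^3 - 4*t^2 + t) * h11 + (t^7 - 6*t^6 + 14*t^5 - 18*t^4 + 15*t^3 - 8*t^2 + 2*t) * h12 + (2*t^7 - 10*t^6 + 21*t^5 - 25*t^4 + 19*t^3 - 9*t^2 + 2*t) * h13 + (2*t^7 - 11*t^6 + 25*t^5 - 32*t^4 + 26*t^3 - 13*t^2 + 3*t) * h14 + (3*t^7 - 15*t^6 + 32*t^5 - 39*t^4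 + 30*t^3 - 14*t^2 + 3*t) * h15 + (- t^8 + 6*t^7 - 14*t^6 + 18*t^5 - 15*t^4 + 8*t^3 - 2*t^2) * h16 + (t^8 - 6*t^7 + 14*t^6 - 18*t^5 + 15*t^4 - 8*t^3 + 2*t^2) * h17 + (t^8 - 5*t^7 + 10*t^6 - 11*t^5 + 8*t^4 - 4*t^3 + t^2) * h18 + (- t^8 + 5*t^7 - 10*t^6 + 11*t^5 - 8*t^4 + 4*t^3 - t^2) * h19 + (2*t^8 - 10*t^7 + 21*t^6 - 25*t^5 + 19*t^4 - 9*t^3 + 2*t^2) * h20 + (- 2*t^8 + 11*t^7 - 25*t^6 + 32*t^5 - 26*t^4 + 13*t^3 - 3*t^2) * h21 + (- 2*t^8 + 10*t^7 - 21*t^6 + 25*t^5 - 19*t^4 + 9*t^3 - 2*t^2) * h22 + (2*t^8 - 11*t^7 + 25*t^6 - 32*t^5 + 26*t^4 - 13*t^3 + 3*t^2) * h23 + (- t^6 + 3*t^5 - 3*t^4 + t^3) * h24 + (t^7 - 3*t^6 + 4*t^5 - 4*t^4 + 3*t^3 - t^2) * h25 + (t^6 - 3*t^5 + 3*t^4 -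 t^3) * h26 + (- t^7 + 3*t^6 - 4*t^5 + 4*t^4 - 3*t^3 + t^2) * h27 + (- t^7 + 3*t^6 - 4*t^5 + 4*t^4 - 3*t^3 + t^2) * h29 + (- t^7 + 4*t^6 - 7*t^5 + 8*t^4 - 7*t^3 + 4*t^2 - t) * h30 + (- 2*t^7 + 7*t^6 - 11*t^5 + 12*t^4 - 10*t^3 + 5*t^2 - t) * h31 + (- 2*t^7 + 8*t^6 - 14*t^5 + 16*t^4 - 14*t^3 + 8*t^2 - 2*t) * h32 + (- 3*t^7 + 11*t^6 - 18*t^5 + 20*t^4 - 17*t^3 + 9*t^2 - 2*t) * h33 + (t^8 - 4*t^7 + 7*t^6 - 8*t^5 + 7*t^4 - 4*t^3 + t^2) * h34 + (- t^8 + 4*t^7 - 7*t^6 + 8*t^5 - 7*t^4 + 4*t^3 - t^2) * h35 + (- t^8 + 3*t^7 - 4*t^6 + 4*t^5 - 3*t^4 + t^3) * h36 + (t^8 - 3*t^7 + 4*t^6 - 4*t^5 + 3*t^4 - t^3) * h37 + (- 2*t^8 + 7*t^7 - 11*t^6 + 12*t^5 - 10*t^4 + 5*t^3 - t^2) * h38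 + (2*t^8 - 8*t^7 + 14*t^6 - 16*t^5 + 14*t^4 - 8*t^3 + 2*t^2) * h39 + (2*t^8 - 7*t^7 + 11*t^6 - 12*t^5 + 10*t^4 - 5*t^3 + t^2) * h40 + (- 2*t^8 + 8*t^7 - 14*t^6 + 16*t^5 - 14*t^4 + 8*t^3 - 2*t^2) * h41 + (t^7 - 3*t^6 + 4*t^5 - 4*t^4 + 3*t^3 - t^2) * h42 + (- t^7 + 3*t^6 - 4*t^5 + 4*t^4 - 3*t^3 + t^2) * h43
  have e9 : (t^4*(t-1)) * (x9 - x10) = 0 := by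
    linear_combination (t^4 - t^3) * h1 + (t^3 - t^2) * h3 + (t^4 - t^2) * h4 + (t^5 - t^3) * h5 + (t^6 - t^4) * h6 + (t^6 - t^5 + t^4 - 2*t^3 + t^2) * h7 + (- t^6 + 2*t^5 - 2*t^4 + 2*t^3 - t^2) * h8 + (- t^6 + t^5 - t^4 + t^3) * h9 + (t^5 - t^4 + t^3 - 2*t^2 + t) * h10 + (- t^6 + 4*t^5 - 5*t^4 + 4*t^3 - 3*t^2 + t) * h11 + (- t^6 + 5*t^5 - 9*t^4 + 9*t^3 - 6*t^2 + 2*t) * h12 + (- 2*t^6 + 8*t^5 - 13*t^4 + 12*t^3 - 7*t^2 + 2*t) * h13 + (- 2*t^6 + 9*t^5 - 16*t^4 + 16*t^3 - 10*t^2 + 3*t) * h14 + (- 3*t^6 + 12*t^5 - 20*t^4 + 19*t^3 - 11*t^2 + 3*t) * h15 + (t^7 - 5*t^6 + 9*t^5 - 9*t^4 + 6*t^3 - 2*t^2) * h16 + (- t^7 + 5*t^6 - 9*t^5 + 9*t^4 - 6*t^3 + 2*t^2) * h17 + (- t^7 + 4*t^6 - 6*t^5 + 5*t^4 - 3*t^3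 + t^2) * h18 + (t^7 - 4*t^6 + 6*t^5 - 5*t^4 + 3*t^3 - t^2) * h19 + (- 2*t^7 + 8*t^6 - 13*t^5 + 12*t^4 - 7*t^3 + 2*t^2) * h20 + (2*t^7 - 9*t^6 + 16*t^5 - 16*t^4 + 10*t^3 - 3*t^2) * h21 + (2*t^7 - 8*t^6 + 13*t^5 - 12*t^4 + 7*t^3 - 2*t^2) * h22 + (- 2*t^7 + 9*t^6 - 16*t^5 + 16*t^4 - 10*t^3 + 3*t^2) * h23 + (t^5 - 2*t^4 + t^3) * h24 + (- t^6 + 2*t^5 - 2*t^4 + 2*t^3 - t^2) * h25 + (- t^5 + 2*t^4 - t^3) * h26 + (t^6 - 2*t^5 + 2*t^4 - 2*t^3 + t^2) * h27 + (t^6 - 2*t^5 + 2*t^4 - 2*t^3 + t^2) * h29 + (t^6 - 3*t^5 + 4*t^4 - 4*t^3 + 3*t^2 - t) * h30 + (2*t^6 - 5*t^5 + 6*t^4 - 6*t^3 + 4*t^2 - t) * h31 + (2*t^6 - 6*t^5 + 8*t^4 - 8*t^3 + 6*t^2 - 2*t) * h32 + (3*t^6 - 8*t^5 + 10*t^4 -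 10*t^3 + 7*t^2 - 2*t) * h33 + (- t^7 + 3*t^6 - 4*t^5 + 4*t^4 - 3*t^3 + t^2) * h34 + (t^7 - 3*t^6 + 4*t^5 - 4*t^4 + 3*t^3 - t^2) * h35 + (t^7 - 2*t^6 + 2*t^5 - 2*t^4 + t^3) * h36 + (- t^7 + 2*t^6 - 2*t^5 + 2*t^4 - t^3) * h37 + (2*t^7 - 5*t^6 + 6*t^5 - 6*t^4 + 4*t^3 - t^2) * h38 + (- 2*t^7 + 6*t^6 - 8*t^5 + 8*t^4 - 6*t^3 + 2*t^2) * h39 + (- 2*t^7 + 5*t^6 - 6*t^5 + 6*t^4 - 4*t^3 + t^2) * h40 + (2*t^7 - 6*t^6 + 8*t^5 - 8*t^4 + 6*t^3 - 2*t^2) * h41 + (- t^6 + 2*t^5 - 2*t^4 + 2*t^3 - t^2) * h42 + (t^6 - 2*t^5 + 2*t^4 - 2*t^3 + t^2) * h43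
  have e10 : (t^4*(t-1)) * (x10 - x11) = 0 := by
    linear_combination (- t^5 + t^4) * h1 + (- t^4 + t^3) * h3 + (- t^5 + t^3) * h4 + (- t^6 + t^4) * h5 + (- t^7 + t^5) * h6 + (- t^7 + t^6 - t^5 + 2*t^4 - t^3) * h7 + (t^7 - 2*t^6 + 2*t^5 - 2*t^4 + t^3) * h8 + (t^7 - t^6 + t^5 - t^4) * h9 + (- t^6 + t^5 - t^4 + 2*t^3 - t^2) * h10 + (t^7 - 4*t^6 + 5*t^5 - 4*t^4 + 3*t^3 - t^2) * h11 + (t^7 - 5*t^6 + 8*t^5 - 8*t^4 + 6*t^3 - 2*t^2) * h12 + (2*t^7 - 8*t^6 + 13*t^5 - 12*t^4 + 7*t^3 - 2*t^2) * h13 + (2*t^7 - 9*t^6 + 16*t^5 - 16*t^4 + 10*t^3 - 3*t^2) * h14 + (3*t^7 - 12*t^6 + 20*t^5 - 19*t^4 + 11*t^3 - 3*t^2) * h15 + (- t^8 + 5*t^7 - 9*t^6 + 9*t^5 - 6*t^4 + 2*t^3) * h16 + (t^8 - 5*t^7 + 9*t^6 - 9*t^5 + 6*t^4 - 2*t^3)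 * h17 + (t^8 - 4*t^7 + 6*t^6 - 5*t^5 + 3*t^4 - t^3) * h18 + (- t^8 + 4*t^7 - 6*t^6 + 5*t^5 - 3*t^4 + t^3) * h19 + (2*t^8 - 8*t^7 + 13*t^6 - 12*t^5 + 7*t^4 - 2*t^3) * h20 + (- 2*t^8 + 9*t^7 - 16*t^6 + 16*t^5 - 10*t^4 + 3*t^3) * h21 + (- 2*t^8 + 8*t^7 - 13*t^6 + 12*t^5 - 7*t^4 + 2*t^3) * h22 + (2*t^8 - 9*t^7 + 16*t^6 - 16*t^5 + 10*t^4 - 3*t^3) * h23 + (- t^6 + 2*t^5 - t^4) * h24 + (t^7 - 2*t^6 + 2*t^5 - 2*t^4 + t^3) * h25 + (t^6 - 2*t^5 + t^4) * h26 + (- t^7 + 2*t^6 - 2*t^5 + 2*t^4 - t^3) * h27 + (- t^7 + 2*t^6 - 2*t^5 + 2*t^4 - t^3) * h29 + (- t^7 + 3*t^6 - 4*t^5 + 4*t^4 - 3*t^3 + t^2) * h30 + (- 2*t^7 + 5*t^6 - 6*t^5 + 6*t^4 - 4*t^3 + t^2) * h31 + (- 2*t^7 + 6*t^6 - 8*t^5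 + 8*t^4 - 6*t^3 + 2*t^2) * h32 + (- 3*t^7 + 8*t^6 - 10*t^5 + 10*t^4 - 7*t^3 + 2*t^2) * h33 + (t^8 - 3*t^7 + 4*t^6 - 4*t^5 + 3*t^4 - t^3) * h34 + (- t^8 + 3*t^7 - 4*t^6 + 4*t^5 - 3*t^4 + t^3) * h35 + (- t^8 + 2*t^7 - 2*t^6 + 2*t^5 - t^4) * h36 + (t^8 - 2*t^7 + 2*t^6 - 2*t^5 + t^4) * h37 + (- 2*t^8 + 5*t^7 - 6*t^6 + 6*t^5 - 4*t^4 + t^3) * h38 + (2*t^8 - 6*t^7 + 8*t^6 - 8*t^5 + 6*t^4 - 2*t^3) * h39 + (2*t^8 - 5*t^7 + 6*t^6 - 6*t^5 + 4*t^4 - t^3) * h40 + (- 2*t^8 + 6*t^7 - 8*t^6 + 8*t^5 - 6*t^4 + 2*t^3) * h41 + (t^7 - 2*t^6 + 2*t^5 - 2*t^4 + t^3) * h42 + (- t^7 + 2*t^6 - 2*t^5 + 2*t^4 - t^3) * h43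
  have e11 : (t^4*(t-1)) * (x11 - x12) = 0 := by
    linear_combination (t^4 - t^3) * h1 + (t^3 - t^2) * h3 + (t^4 - t^2) * h4 + (t^5 - t^3) * h5 + (t^6 - t^4) * h6 + (t^6 - t^5 + t^4 - 2*t^3 + t^2) * h7 + (- t^6 + 2*t^5 - 2*t^4 + 2*t^3 - t^2) * h8 + (- t^6 + t^5 - t^4 + t^3) * h9 + (t^5 - t^4 + t^3 - 2*t^2 + t) * h10 + (- t^6 + 4*t^5 - 5*t^4 + 4*t^3 - 3*t^2 + t) * h11 + (- t^6 + 5*t^5 - 8*t^4 + 8*t^3 - 6*t^2 + 2*t) * h12 + (- 2*t^6 + 8*t^5 - 12*t^4 + 11*t^3 - 7*t^2 + 2*t) * h13 + (- 2*t^6 + 9*t^5 - 16*t^4 + 16*t^3 - 10*t^2 + 3*t) * h14 + (- 3*t^6 + 12*t^5 - 20*t^4 + 19*t^3 - 11*t^2 + 3*t) * h15 + (t^7 - 5*t^6 + 9*t^5 - 9*t^4 + 6*t^3 - 2*t^2) * h16 + (- t^7 + 5*t^6 - 9*t^5 + 9*t^4 - 6*t^3 + 2*t^2) * h17 + (- t^7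 + 4*t^6 - 6*t^5 + 5*t^4 - 3*t^3 + t^2) * h18 + (t^7 - 4*t^6 + 6*t^5 - 5*t^4 + 3*t^3 - t^2) * h19 + (- 2*t^7 + 8*t^6 - 13*t^5 + 12*t^4 - 7*t^3 + 2*t^2) * h20 + (2*t^7 - 9*t^6 + 16*t^5 - 16*t^4 + 10*t^3 - 3*t^2) * h21 + (2*t^7 - 8*t^6 + 13*t^5 - 12*t^4 + 7*t^3 - 2*t^2) * h22 + (- 2*t^7 + 9*t^6 - 16*t^5 + 16*t^4 - 10*t^3 + 3*t^2) * h23 + (t^5 - 2*t^4 + t^3) * h24 + (- t^6 + 2*t^5 - 2*t^4 + 2*t^3 - t^2) * h25 + (- t^5 + 2*t^4 - t^3) * h26 + (t^6 - 2*t^5 + 2*t^4 - 2*t^3 + t^2) * h27 + (t^6 - 2*t^5 + 2*t^4 - 2*t^3 + t^2) * h29 + (t^6 - 3*t^5 + 4*t^4 - 4*t^3 + 3*t^2 - t) * h30 + (2*t^6 - 5*t^5 + 6*t^4 - 6*t^3 + 4*t^2 - t) * h31 + (2*t^6 - 6*t^5 + 8*t^4 - 8*t^3 + 6*t^2 - 2*t)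 * h32 + (3*t^6 - 8*t^5 + 10*t^4 - 10*t^3 + 7*t^2 - 2*t) * h33 + (- t^7 + 3*t^6 - 4*t^5 + 4*t^4 - 3*t^3 + t^2) * h34 + (t^7 - 3*t^6 + 4*t^5 - 4*t^4 + 3*t^3 - t^2) * h35 + (t^7 - 2*t^6 + 2*t^5 - 2*t^4 + t^3) * h36 + (- t^7 + 2*t^6 - 2*t^5 + 2*t^4 - t^3) * h37 + (2*t^7 - 5*t^6 + 6*t^5 - 6*t^4 + 4*t^3 - t^2) * h38 + (- 2*t^7 + 6*t^6 - 8*t^5 + 8*t^4 - 6*t^3 + 2*t^2) * h39 + (- 2*t^7 + 5*t^6 - 6*t^5 + 6*t^4 - 4*t^3 + t^2) * h40 + (2*t^7 - 6*t^6 + 8*t^5 - 8*t^4 + 6*t^3 - 2*t^2) * h41 + (- t^6 + 2*t^5 - 2*t^4 + 2*t^3 - t^2) * h42 + (t^6 - 2*t^5 + 2*t^4 - 2*t^3 + t^2) * h43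
  have e12 : (t^4*(t-1)) * (x12 - x13) = 0 := by
    linear_combination (- t^5 + t^4) * h1 + (- t^4 + t^3) * h3 + (- t^5 + t^3) * h4 + (- t^6 + t^4) * h5 + (- t^7 + t^5) * h6 + (- t^7 + t^6 - t^5 + 2*t^4 - t^3) * h7 + (t^7 - 2*t^6 + 2*t^5 - 2*t^4 + t^3) * h8 + (t^7 - t^6 + t^5 - t^4) * h9 + (- t^6 + t^5 - t^4 + 2*t^3 - t^2) * h10 + (t^7 - 4*t^6 + 5*t^5 - 4*t^4 + 3*t^3 - t^2) * h11 + (t^7 - 5*t^6 + 8*t^5 - 8*t^4 + 6*t^3 - 2*t^2) * h12 + (2*t^7 - 8*t^6 + 12*t^5 - 11*t^4 + 7*t^3 - 2*t^2) * h13 + (2*t^7 - 9*t^6 + 15*t^5 - 15*t^4 + 10*t^3 - 3*t^2) * h14 + (3*t^7 - 12*t^6 + 20*t^5 - 19*t^4 + 11*t^3 - 3*t^2) * h15 + (- t^8 + 5*t^7 - 9*t^6 + 9*t^5 - 6*t^4 + 2*t^3) * h16 + (t^8 - 5*t^7 + 9*t^6 - 9*t^5 + 6*t^4 - 2*t^3)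 * h17 + (t^8 - 4*t^7 + 6*t^6 - 5*t^5 + 3*t^4 - t^3) * h18 + (- t^8 + 4*t^7 - 6*t^6 + 5*t^5 - 3*t^4 + t^3) * h19 + (2*t^8 - 8*t^7 + 13*t^6 - 12*t^5 + 7*t^4 - 2*t^3) * h20 + (- 2*t^8 + 9*t^7 - 16*t^6 + 16*t^5 - 10*t^4 + 3*t^3) * h21 + (- 2*t^8 + 8*t^7 - 13*t^6 + 12*t^5 - 7*t^4 + 2*t^3) * h22 + (2*t^8 - 9*t^7 + 16*t^6 - 16*t^5 + 10*t^4 - 3*t^3) * h23 + (- t^6 + 2*t^5 - t^4) * h24 + (t^7 - 2*t^6 + 2*t^5 - 2*t^4 + t^3) * h25 + (t^6 - 2*t^5 + t^4) * h26 + (- t^7 + 2*t^6 - 2*t^5 + 2*t^4 - t^3) * h27 + (- t^7 + 2*t^6 - 2*t^5 + 2*t^4 - t^3) * h29 + (- t^7 + 3*t^6 - 4*t^5 + 4*t^4 - 3*t^3 + t^2) * h30 + (- 2*t^7 + 5*t^6 - 6*t^5 + 6*t^4 - 4*t^3 + t^2) * h31 + (- 2*t^7 + 6*t^6 - 8*t^5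 + 8*t^4 - 6*t^3 + 2*t^2) * h32 + (- 3*t^7 + 8*t^6 - 10*t^5 + 10*t^4 - 7*t^3 + 2*t^2) * h33 + (t^8 - 3*t^7 + 4*t^6 - 4*t^5 + 3*t^4 - t^3) * h34 + (- t^8 + 3*t^7 - 4*t^6 + 4*t^5 - 3*t^4 + t^3) * h35 + (- t^8 + 2*t^7 - 2*t^6 + 2*t^5 - t^4) * h36 + (t^8 - 2*t^7 + 2*t^6 - 2*t^5 + t^4) * h37 + (- 2*t^8 + 5*t^7 - 6*t^6 + 6*t^5 - 4*t^4 + t^3) * h38 + (2*t^8 - 6*t^7 + 8*t^6 - 8*t^5 + 6*t^4 - 2*t^3) * h39 + (2*t^8 - 5*t^7 + 6*t^6 - 6*t^5 + 4*t^4 - t^3) * h40 + (- 2*t^8 + 6*t^7 - 8*t^6 + 8*t^5 - 6*t^4 + 2*t^3) * h41 + (t^7 - 2*t^6 + 2*t^5 - 2*t^4 + t^3) * h42 + (- t^7 + 2*t^6 - 2*t^5 + 2*t^4 - t^3) * h43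
  have e13 : (t^4*(t-1)) * (x13 - x14) = 0 := by
    linear_combination (t^4 - t^3) * h1 + (t^3 - t^2) * h3 + (t^4 - t^2) * h4 + (t^5 - t^3) * h5 + (t^6 - t^4) * h6 + (t^6 - t^5 + t^4 - 2*t^3 + t^2) * h7 + (- t^6 + 2*t^5 - 2*t^4 + 2*t^3 - t^2) * h8 + (- t^6 + t^5 - t^4 + t^3) * h9 + (t^5 - t^4 + t^3 - 2*t^2 + t) * h10 + (- t^6 + 4*t^5 - 5*t^4 + 4*t^3 - 3*t^2 + t) * h11 + (- t^6 + 5*t^5 - 8*t^4 + 8*t^3 - 6*t^2 + 2*t) * h12 + (- 2*t^6 + 8*t^5 - 12*t^4 + 11*t^3 - 7*t^2 + 2*t) * h13 + (- 2*t^6 + 9*t^5 - 15*t^4 + 15*t^3 - 10*t^2 + 3*t) * h14 + (- 3*t^6 + 12*t^5 - 19*t^4 + 18*t^3 - 11*t^2 + 3*t) * h15 + (t^7 - 5*t^6 + 9*t^5 - 9*t^4 + 6*t^3 - 2*t^2) * h16 + (- t^7 + 5*t^6 - 9*t^5 + 9*t^4 - 6*t^3 + 2*t^2) * h17 + (- t^7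 + 4*t^6 - 6*t^5 + 5*t^4 - 3*t^3 + t^2) * h18 + (t^7 - 4*t^6 + 6*t^5 - 5*t^4 + 3*t^3 - t^2) * h19 + (- 2*t^7 + 8*t^6 - 13*t^5 + 12*t^4 - 7*t^3 + 2*t^2) * h20 + (2*t^7 - 9*t^6 + 16*t^5 - 16*t^4 + 10*t^3 - 3*t^2) * h21 + (2*t^7 - 8*t^6 + 13*t^5 - 12*t^4 + 7*t^3 - 2*t^2) * h22 + (- 2*t^7 + 9*t^6 - 16*t^5 + 16*t^4 - 10*t^3 + 3*t^2) * h23 + (t^5 - 2*t^4 + t^3) * h24 + (- t^6 + 2*t^5 - 2*t^4 + 2*t^3 - t^2) * h25 + (- t^5 + 2*t^4 - t^3) * h26 + (t^6 - 2*t^5 + 2*t^4 - 2*t^3 + t^2) * h27 + (t^6 - 2*t^5 + 2*t^4 - 2*t^3 + t^2) * h29 + (t^6 - 3*t^5 + 4*t^4 - 4*t^3 + 3*t^2 - t) * h30 + (2*t^6 - 5*t^5 + 6*t^4 - 6*t^3 + 4*t^2 - t) * h31 + (2*t^6 - 6*t^5 + 8*t^4 - 8*t^3 + 6*t^2 - 2*t)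 * h32 + (3*t^6 - 8*t^5 + 10*t^4 - 10*t^3 + 7*t^2 - 2*t) * h33 + (- t^7 + 3*t^6 - 4*t^5 + 4*t^4 - 3*t^3 + t^2) * h34 + (t^7 - 3*t^6 + 4*t^5 - 4*t^4 + 3*t^3 - t^2) * h35 + (t^7 - 2*t^6 + 2*t^5 - 2*t^4 + t^3) * h36 + (- t^7 + 2*t^6 - 2*t^5 + 2*t^4 - t^3) * h37 + (2*t^7 - 5*t^6 + 6*t^5 - 6*t^4 + 4*t^3 - t^2) * h38 + (- 2*t^7 + 6*t^6 - 8*t^5 + 8*t^4 - 6*t^3 + 2*t^2) * h39 + (- 2*t^7 + 5*t^6 - 6*t^5 + 6*t^4 - 4*t^3 + t^2) * h40 + (2*t^7 - 6*t^6 + 8*t^5 - 8*t^4 + 6*t^3 - 2*t^2) * h41 + (- t^6 + 2*t^5 - 2*t^4 + 2*t^3 - t^2) * h42 + (t^6 - 2*t^5 + 2*t^4 - 2*t^3 + t^2) * h43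
  have e14 : (t^4*(t-1)) * (x14 - x15) = 0 := by
    linear_combination (t^4 - 3*t^3 + 2*t^2) * h1 + (t^3 - 3*t^2 + 2*t) * h3 + (t^4 - 2*t^3 - t^2 + 2*t) * h4 + (t^5 - 2*t^4 - t^3 + 2*t^2) * h5 + (t^6 - 2*t^5 - t^4 + 2*t^3) * h6 + (t^6 - 3*t^5 + 3*t^4 - 4*t^3 + 5*t^2 - 2*t) * h7 + (- t^6 + 4*t^5 - 6*t^4 + 6*t^3 - 5*t^2 + 2*t) * h8 + (- t^6 + 3*t^5 - 3*t^4 + 3*t^3 - 2*t^2) * h9 + (t^5 - 3*t^4 + 3*t^3 - 4*t^2 + 5*t - 2) * h10 + (- t^6 + 6*t^5 - 13*t^4 + 14*t^3 - 11*t^2 + 7*t - 2) * h11 + (- t^6 + 7*t^5 - 18*t^4 + 24*t^3 - 22*t^2 + 14*t - 4) * h12 + (- 2*t^6 + 12*t^5 - 28*t^4 + 35*t^3 - 29*t^2 + 16*t - 4) * h13 + (- 2*t^6 + 13*t^5 - 33*t^4 + 45*t^3 - 40*t^2 + 23*t - 6) * h14 + (- 3*t^6 + 18*t^5 - 43*t^4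 + 56*t^3 - 47*t^2 + 25*t - 6) * h15 + (t^7 - 7*t^6 + 18*t^5 - 24*t^4 + 22*t^3 - 14*t^2 + 4*t) * h16 + (- t^7 + 7*t^6 - 18*t^5 + 25*t^4 - 23*t^3 + 14*t^2 - 4*t) * h17 + (- t^7 + 6*t^6 - 13*t^5 + 15*t^4 - 12*t^3 + 7*t^2 - 2*t) * h18 + (t^7 - 6*t^6 + 13*t^5 - 15*t^4 + 12*t^3 - 7*t^2 + 2*t) * h19 + (- 2*t^7 + 12*t^6 - 28*t^5 + 36*t^4 - 30*t^3 + 16*t^2 - 4*t) * h20 + (2*t^7 - 13*t^6 + 33*t^5 - 45*t^4 + 40*t^3 - 23*t^2 + 6*t) * h21 + (2*t^7 - 12*t^6 + 28*t^5 - 36*t^4 + 30*t^3 - 16*t^2 + 4*t) * h22 + (- 2*t^7 + 13*t^6 - 33*t^5 + 45*t^4 - 40*t^3 + 23*t^2 - 6*t) * h23 + (t^5 - 4*t^4 + 5*t^3 - 2*t^2) * h24 + (- t^6 + 4*t^5 - 6*t^4 + 6*t^3 - 5*t^2 + 2*t) * h25 + (- t^5 + 4*t^4 - 5*t^3 + 2*t^2)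 * h26 + (t^6 - 4*t^5 + 6*t^4 - 6*t^3 + 5*t^2 - 2*t) * h27 + (t^6 - 4*t^5 + 6*t^4 - 6*t^3 + 5*t^2 - 2*t) * h29 + (t^6 - 5*t^5 + 10*t^4 - 12*t^3 + 11*t^2 - 7*t + 2) * h30 + (2*t^6 - 9*t^5 + 16*t^4 - 18*t^3 + 16*t^2 - 9*t + 2) * h31 + (2*t^6 - 10*t^5 + 20*t^4 - 24*t^3 + 22*t^2 - 14*t + 4) * h32 + (3*t^6 - 14*t^5 + 26*t^4 - 30*t^3 + 27*t^2 - 16*t + 4) * h33 + (- t^7 + 5*t^6 - 10*t^5 + 12*t^4 - 11*t^3 + 7*t^2 - 2*t) * h34 + (t^7 - 5*t^6 + 10*t^5 - 12*t^4 + 11*t^3 - 7*t^2 + 2*t) * h35 + (t^7 - 4*t^6 + 6*t^5 - 6*t^4 + 5*t^3 - 2*t^2) * h36 + (- t^7 + 4*t^6 - 6*t^5 + 6*t^4 - 5*t^3 + 2*t^2) * h37 + (2*t^7 - 9*t^6 + 16*t^5 - 18*t^4 + 16*t^3 - 9*t^2 + 2*t) * h38 + (- 2*t^7 + 10*t^6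 - 20*t^5 + 24*t^4 - 22*t^3 + 14*t^2 - 4*t) * h39 + (- 2*t^7 + 9*t^6 - 16*t^5 + 18*t^4 - 16*t^3 + 9*t^2 - 2*t) * h40 + (2*t^7 - 10*t^6 + 20*t^5 - 24*t^4 + 22*t^3 - 14*t^2 + 4*t) * h41 + (- t^6 + 4*t^5 - 6*t^4 + 6*t^3 - 5*t^2 + 2*t) * h42 + (t^6 - 4*t^5 + 6*t^4 - 6*t^3 + 5*t^2 - 2*t) * h43
  have e15 : (t^4*(t-1)) * (x15 - x16) = 0 := by
    linear_combination (t^3 - t^2) * h1 + (t^2 - t) * h3 + (t^3 - t) * h4 + (t^4 - t^2) * h5 + (t^5 - t^3) * h6 + (t^5 - t^4 + t^3 - 2*t^2 + t) * h7 + (- t^5 + 2*t^4 - 2*t^3 + 2*t^2 - t) * h8 + (- t^5 + t^4 - t^3 + t^2) * h9 + (t^4 - t^3 + t^2 - 2*t + 1) * h10 + (- t^5 + 4*t^4 - 5*t^3 + 4*t^2 - 3*t + 1) * h11 + (- t^5 + 5*t^4 - 8*t^3 + 8*t^2 - 6*t + 2) * h12 + (- 2*t^5 + 8*t^4 - 12*t^3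 + 11*t^2 - 7*t + 2) * h13 + (- 2*t^5 + 9*t^4 - 15*t^3 + 15*t^2 - 10*t + 3) * h14 + (- 3*t^5 + 12*t^4 - 19*t^3 + 18*t^2 - 11*t + 3) * h15 + (t^6 - 5*t^5 + 8*t^4 - 8*t^3 + 6*t^2 - 2*t) * h16 + (- t^6 + 5*t^5 - 9*t^4 + 9*t^3 - 6*t^2 + 2*t) * h17 + (- t^6 + 4*t^5 - 5*t^4 + 4*t^3 - 3*t^2 + t) * h18 + (t^6 - 4*t^5 + 6*t^4 - 5*t^3 + 3*t^2 - t) * h19 + (- 2*t^6 + 8*t^5 - 12*t^4 + 11*t^3 - 7*t^2 + 2*t) * h20 + (2*t^6 - 9*t^5 + 15*t^4 - 15*t^3 + 10*t^2 - 3*t) * h21 + (2*t^6 - 8*t^5 + 12*t^4 - 11*t^3 + 7*t^2 - 2*t) * h22 + (- 2*t^6 + 9*t^5 - 15*t^4 + 15*t^3 - 10*t^2 + 3*t) * h23 + (t^4 - 2*t^3 + t^2) * h24 + (- t^5 + 2*t^4 - 2*t^3 + 2*t^2 - t) * h25 + (- t^4 + 2*t^3 - t^2) * h26 + (t^5 -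 2*t^4 + 2*t^3 - 2*t^2 + t) * h27 + (t^5 - 2*t^4 + 2*t^3 - 2*t^2 + t) * h29 + (t^5 - 3*t^4 + 4*t^3 - 4*t^2 + 3*t - 1) * h30 + (2*t^5 - 5*t^4 + 6*t^3 - 6*t^2 + 4*t - 1) * h31 + (2*t^5 - 6*t^4 + 8*t^3 - 8*t^2 + 6*t - 2) * h32 + (3*t^5 - 8*t^4 + 10*t^3 - 10*t^2 + 7*t - 2) * h33 + (- t^6 + 3*t^5 - 4*t^4 + 4*t^3 - 3*t^2 + t) * h34 + (t^6 - 3*t^5 + 4*t^4 - 4*t^3 + 3*t^2 - t) * h35 + (t^6 - 2*t^5 + 2*t^4 - 2*t^3 + t^2) * h36 + (- t^6 + 2*t^5 - 2*t^4 + 2*t^3 - t^2) * h37 + (2*t^6 - 5*t^5 + 6*t^4 - 6*t^3 + 4*t^2 - t) * h38 + (- 2*t^6 + 6*t^5 - 8*t^4 + 8*t^3 - 6*t^2 + 2*t) * h39 + (- 2*t^6 + 5*t^5 - 6*t^4 + 6*t^3 - 4*t^2 + t) * h40 + (2*t^6 - 6*t^5 + 8*t^4 - 8*t^3 + 6*t^2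 - 2*t) * h41 + (- t^5 + 2*t^4 - 2*t^3 + 2*t^2 - t) * h42 + (t^5 - 2*t^4 + 2*t^3 - 2*t^2 + t) * h43
  have e16 : (t^4*(t-1)) * (x16 - x17) = 0 := by
    linear_combination (2*t^5 - 7*t^4 + 8*t^3 - 3*t^2) * h1 + (2*t^4 - 7*t^3 + 8*t^2 - 3*t) * h3 + (2*t^5 - 5*t^4 + t^3 + 5*t^2 - 3*t) * h4 + (2*t^6 - 5*t^5 + t^4 + 5*t^3 - 3*t^2) * h5 + (2*t^7 - 5*t^6 + t^5 + 5*t^4 - 3*t^3) * h6 + (2*t^7 - 7*t^6 + 10*t^5 - 12*t^4 + 15*t^3 - 11*t^2 + 3*t) * h7 + (- 2*t^7 + 9*t^6 - 17*t^5 + 20*t^4 - 18*t^3 + 11*t^2 - 3*t) * h8 + (- 2*t^7 + 7*t^6 - 10*t^5 + 10*t^4 - 8*t^3 + 3*t^2) * h9 + (2*t^6 - 7*t^5 + 10*t^4 - 12*t^3 + 15*t^2 - 11*t + 3) * h10 + (- 2*t^7 + 13*t^6 - 33*t^5 + 45*t^4 - 41*t^3 + 29*t^2 - 14*t + 3) *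 h11 + (- 2*t^7 + 15*t^6 - 44*t^5 + 71*t^4 - 76*t^3 + 58*t^2 - 28*t + 6) * h12 + (- 4*t^7 + 26*t^6 - 70*t^5 + 106*t^4 - 105*t^3 + 72*t^2 - 31*t + 6) * h13 + (- 4*t^7 + 28*t^6 - 81*t^5 + 132*t^4 - 140*t^3 + 101*t^2 - 45*t + 9) * h14 + (- 6*t^7 + 39*t^6 - 107*t^5 + 167*t^4 - 169*t^3 + 115*t^2 - 48*t + 9) * h15 + (2*t^8 - 15*t^7 + 45*t^6 - 74*t^5 + 79*t^4 - 59*t^3 + 28*t^2 - 6*t) * h16 + (- 2*t^8 + 15*t^7 - 45*t^6 + 74*t^5 - 79*t^4 + 59*t^3 - 28*t^2 + 6*t) * h17 + (- 2*t^8 + 13*t^7 - 34*t^6 + 49*t^5 - 47*t^4 + 32*t^3 - 14*t^2 + 3*t) * h18 + (2*t^8 - 13*t^7 + 34*t^6 - 49*t^5 + 46*t^4 - 31*t^3 + 14*t^2 - 3*t) * h19 + (- 4*t^8 + 26*t^7 - 71*t^6 + 110*t^5 - 110*t^4 + 74*t^3 - 31*t^2 + 6*t) * h20 + (4*t^8 -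 28*t^7 + 82*t^6 - 135*t^5 + 143*t^4 - 102*t^3 + 45*t^2 - 9*t) * h21 + (4*t^8 - 26*t^7 + 71*t^6 - 110*t^5 + 111*t^4 - 75*t^3 + 31*t^2 - 6*t) * h22 + (- 4*t^8 + 28*t^7 - 82*t^6 + 135*t^5 - 143*t^4 + 102*t^3 - 45*t^2 + 9*t) * h23 + (2*t^6 - 9*t^5 + 15*t^4 - 11*t^3 + 3*t^2) * h24 + (- 2*t^7 + 9*t^6 - 17*t^5 + 20*t^4 - 18*t^3 + 11*t^2 - 3*t) * h25 + (- 2*t^6 + 9*t^5 - 15*t^4 + 11*t^3 - 3*t^2) * h26 + (2*t^7 - 9*t^6 + 17*t^5 - 20*t^4 + 18*t^3 - 11*t^2 + 3*t) * h27 + (2*t^7 - 9*t^6 + 17*t^5 - 20*t^4 + 18*t^3 - 11*t^2 + 3*t) * h29 + (2*t^7 - 11*t^6 + 26*t^5 - 37*t^4 + 38*t^3 - 29*t^2 + 14*t - 3) * h30 + (4*t^7 - 20*t^6 + 43*t^5 - 57*t^4 + 56*t^3 - 40*t^2 + 17*t - 3) * h31 + (4*t^7 - 22*t^6 + 52*t^5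 - 74*t^4 + 76*t^3 - 58*t^2 + 28*t - 6) * h32 + (6*t^7 - 31*t^6 + 69*t^5 - 94*t^4 + 94*t^3 - 69*t^2 + 31*t - 6) * h33 + (- 2*t^8 + 11*t^7 - 26*t^6 + 37*t^5 - 38*t^4 + 29*t^3 - 14*t^2 + 3*t) * h34 + (2*t^8 - 11*t^7 + 26*t^6 - 37*t^5 + 38*t^4 - 29*t^3 + 14*t^2 - 3*t) * h35 + (2*t^8 - 9*t^7 + 17*t^6 - 20*t^5 + 18*t^4 - 11*t^3 + 3*t^2) * h36 + (- 2*t^8 + 9*t^7 - 17*t^6 + 20*t^5 - 18*t^4 + 11*t^3 - 3*t^2) * h37 + (4*t^8 - 20*t^7 + 43*t^6 - 57*t^5 + 56*t^4 - 40*t^3 + 17*t^2 - 3*t) * h38 + (- 4*t^8 + 22*t^7 - 52*t^6 + 74*t^5 - 76*t^4 + 58*t^3 - 28*t^2 + 6*t) * h39 + (- 4*t^8 + 20*t^7 - 43*t^6 + 57*t^5 - 56*t^4 + 40*t^3 - 17*t^2 + 3*t) * h40 + (4*t^8 - 22*t^7 + 52*t^6 - 74*t^5 + 76*t^4 - 58*t^3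 + 28*t^2 - 6*t) * h41 + (- 2*t^7 + 9*t^6 - 17*t^5 + 20*t^4 - 18*t^3 + 11*t^2 - 3*t) * h42 + (2*t^7 - 9*t^6 + 17*t^5 - 20*t^4 + 18*t^3 - 11*t^2 + 3*t) * h43
  have e17 : (t^4*(t-1)) * (x17 - x18) = 0 := by
    linear_combination (- t^3 + t^2) * h1 + (- t^2 + t) * h3 + (- t^3 + t) * h4 + (- t^4 + t^2) * h5 + (- t^5 + t^3) * h6 + (- t^5 + t^4 - t^3 + 2*t^2 - t) * h7 + (t^5 - 2*t^4 + 2*t^3 - 2*t^2 + t) * h8 + (t^5 - t^4 + t^3 - t^2) * h9 + (- t^4 + t^3 - t^2 + 2*t - 1) * h10 + (t^5 - 4*t^4 + 5*t^3 - 4*t^2 + 3*t - 1) * h11 + (t^5 - 5*t^4 + 8*t^3 - 8*t^2 + 6*t - 2) * h12 + (2*t^5 - 8*t^4 + 12*t^3 - 11*t^2 + 7*t - 2) * h13 + (2*t^5 - 9*t^4 + 15*t^3 - 15*t^2 + 10*t - 3) * h14 + (3*t^5 - 12*t^4 + 19*t^3 - 18*t^2 + 11*t - 3) * h15 + (- t^6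 + 5*t^5 - 9*t^4 + 9*t^3 - 6*t^2 + 2*t) * h16 + (t^6 - 5*t^5 + 9*t^4 - 9*t^3 + 6*t^2 - 2*t) * h17 + (t^6 - 4*t^5 + 6*t^4 - 5*t^3 + 3*t^2 - t) * h18 + (- t^6 + 4*t^5 - 6*t^4 + 5*t^3 - 3*t^2 + t) * h19 + (2*t^6 - 8*t^5 + 12*t^4 - 11*t^3 + 7*t^2 - 2*t) * h20 + (- 2*t^6 + 9*t^5 - 15*t^4 + 15*t^3 - 10*t^2 + 3*t) * h21 + (- 2*t^6 + 8*t^5 - 13*t^4 + 12*t^3 - 7*t^2 + 2*t) * h22 + (2*t^6 - 9*t^5 + 16*t^4 - 16*t^3 + 10*t^2 - 3*t) * h23 + (- t^4 + 2*t^3 - t^2) * h24 + (t^5 - 2*t^4 + 2*t^3 - 2*t^2 + t) * h25 + (t^4 - 2*t^3 + t^2) * h26 + (- t^5 + 2*t^4 - 2*t^3 + 2*t^2 - t) * h27 + (- t^5 + 2*t^4 - 2*t^3 + 2*t^2 - t) * h29 + (- t^5 + 3*t^4 - 4*t^3 + 4*t^2 - 3*t + 1) * h30 + (- 2*t^5 +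 5*t^4 - 6*t^3 + 6*t^2 - 4*t + 1) * h31 + (- 2*t^5 + 6*t^4 - 8*t^3 + 8*t^2 - 6*t + 2) * h32 + (- 3*t^5 + 8*t^4 - 10*t^3 + 10*t^2 - 7*t + 2) * h33 + (t^6 - 3*t^5 + 4*t^4 - 4*t^3 + 3*t^2 - t) * h34 + (- t^6 + 3*t^5 - 4*t^4 + 4*t^3 - 3*t^2 + t) * h35 + (- t^6 + 2*t^5 - 2*t^4 + 2*t^3 - t^2) * h36 + (t^6 - 2*t^5 + 2*t^4 - 2*t^3 + t^2) * h37 + (- 2*t^6 + 5*t^5 - 6*t^4 + 6*t^3 - 4*t^2 + t) * h38 + (2*t^6 - 6*t^5 + 8*t^4 - 8*t^3 + 6*t^2 - 2*t) * h39 + (2*t^6 - 5*t^5 + 6*t^4 - 6*t^3 + 4*t^2 - t) * h40 + (- 2*t^6 + 6*t^5 - 8*t^4 + 8*t^3 - 6*t^2 + 2*t) * h41 + (t^5 - 2*t^4 + 2*t^3 - 2*t^2 + t) * h42 + (- t^5 + 2*t^4 - 2*t^3 + 2*t^2 - t) * h43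
  have e18 : (t^4*(t-1)) * (x18 - x19) = 0 := by
    linear_combination (- t^5 + 3*t^4 - 3*t^3 + t^2) * h1 + (- t^4 + 3*t^3 - 3*t^2 + t) * h3 + (- t^5 + 2*t^4 - 2*t^2 + t) * h4 + (- t^6 + 2*t^5 - 2*t^3 + t^2) * h5 + (- t^7 + 2*t^6 - 2*t^4 + t^3) * h6 + (- t^7 + 3*t^6 - 4*t^5 + 5*t^4 - 6*t^3 + 4*t^2 - t) * h7 + (t^7 - 4*t^6 + 7*t^5 - 8*t^4 + 7*t^3 - 4*t^2 + t) * h8 + (t^7 - 3*t^6 + 4*t^5 - 4*t^4 + 3*t^3 - t^2) * h9 + (- t^6 + 3*t^5 - 4*t^4 + 5*t^3 - 6*t^2 + 4*t - 1) * h10 + (t^7 - 6*t^6 + 14*t^5 - 18*t^4 + 16*t^3 - 11*t^2 + 5*t - 1) * h11 + (t^7 - 7*t^6 + 19*t^5 - 29*t^4 + 30*t^3 - 22*t^2 + 10*t - 2) * h12 + (2*t^7 - 12*t^6 + 30*t^5 - 43*t^4 + 41*t^3 - 27*t^2 + 11*t - 2) * h13 + (2*t^7 - 13*t^6 + 35*t^5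 - 54*t^4 + 55*t^3 - 38*t^2 + 16*t - 3) * h14 + (3*t^7 - 18*t^6 + 46*t^5 - 68*t^4 + 66*t^3 - 43*t^2 + 17*t - 3) * h15 + (- t^8 + 7*t^7 - 20*t^6 + 31*t^5 - 31*t^4 + 22*t^3 - 10*t^2 + 2*t) * h16 + (t^8 - 7*t^7 + 20*t^6 - 31*t^5 + 31*t^4 - 22*t^3 + 10*t^2 - 2*t) * h17 + (t^8 - 6*t^7 + 15*t^6 - 21*t^5 + 19*t^4 - 12*t^3 + 5*t^2 - t) * h18 + (- t^8 + 6*t^7 - 15*t^6 + 21*t^5 - 19*t^4 + 12*t^3 - 5*t^2 + t) * h19 + (2*t^8 - 12*t^7 + 31*t^6 - 46*t^5 + 44*t^4 - 28*t^3 + 11*t^2 - 2*t) * h20 + (- 2*t^8 + 13*t^7 - 36*t^6 + 57*t^5 - 58*t^4 + 39*t^3 - 16*t^2 + 3*t) * h21 + (- 2*t^8 + 12*t^7 - 31*t^6 + 46*t^5 - 44*t^4 + 28*t^3 - 11*t^2 + 2*t) * h22 + (2*t^8 - 13*t^7 + 36*t^6 - 57*t^5 + 57*t^4 - 38*t^3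 + 16*t^2 - 3*t) * h23 + (- t^6 + 4*t^5 - 6*t^4 + 4*t^3 - t^2) * h24 + (t^7 - 4*t^6 + 7*t^5 - 8*t^4 + 7*t^3 - 4*t^2 + t) * h25 + (t^6 - 4*t^5 + 6*t^4 - 4*t^3 + t^2) * h26 + (- t^7 + 4*t^6 - 7*t^5 + 8*t^4 - 7*t^3 + 4*t^2 - t) * h27 + (- t^7 + 4*t^6 - 7*t^5 + 8*t^4 - 7*t^3 + 4*t^2 - t) * h29 + (- t^7 + 5*t^6 - 11*t^5 + 15*t^4 - 15*t^3 + 11*t^2 - 5*t + 1) * h30 + (- 2*t^7 + 9*t^6 - 18*t^5 + 23*t^4 - 22*t^3 + 15*t^2 - 6*t + 1) * h31 + (- 2*t^7 + 10*t^6 - 22*t^5 + 30*t^4 - 30*t^3 + 22*t^2 - 10*t + 2) * h32 + (- 3*t^7 + 14*t^6 - 29*t^5 + 38*t^4 - 37*t^3 + 26*t^2 - 11*t + 2) * h33 + (t^8 - 5*t^7 + 11*t^6 - 15*t^5 + 15*t^4 - 11*t^3 + 5*t^2 - t) * h34 + (- t^8 + 5*t^7 - 11*t^6 + 15*t^5 -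 15*t^4 + 11*t^3 - 5*t^2 + t) * h35 + (- t^8 + 4*t^7 - 7*t^6 + 8*t^5 - 7*t^4 + 4*t^3 - t^2) * h36 + (t^8 - 4*t^7 + 7*t^6 - 8*t^5 + 7*t^4 - 4*t^3 + t^2) * h37 + (- 2*t^8 + 9*t^7 - 18*t^6 + 23*t^5 - 22*t^4 + 15*t^3 - 6*t^2 + t) * h38 + (2*t^8 - 10*t^7 + 22*t^6 - 30*t^5 + 30*t^4 - 22*t^3 + 10*t^2 - 2*t) * h39 + (2*t^8 - 9*t^7 + 18*t^6 - 23*t^5 + 22*t^4 - 15*t^3 + 6*t^2 - t) * h40 + (- 2*t^8 + 10*t^7 - 22*t^6 + 30*t^5 - 30*t^4 + 22*t^3 - 10*t^2 + 2*t) * h41 + (t^7 - 4*t^6 + 7*t^5 - 8*t^4 + 7*t^3 - 4*t^2 + t) * h42 + (- t^7 + 4*t^6 - 7*t^5 + 8*t^4 - 7*t^3 + 4*t^2 - t) * h43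
  have e19 : (t^4*(t-1)) * (x19 - x20) = 0 := by
    linear_combination (t^4 - t^3) * h1 + (t^3 - t^2) * h3 + (t^4 - t^2) * h4 + (t^5 - t^3) * h5 + (t^6 - t^4) * h6 + (t^6 - t^5 + t^4 - 2*t^3 + t^2) * h7 + (- t^6 + 2*t^5 - 2*t^4 + 2*t^3 - t^2) * h8 + (- t^6 + t^5 - t^4 + t^3) * h9 + (t^5 - t^4 + t^3 - 2*t^2 + t) * h10 + (- t^6 + 4*t^5 - 5*t^4 + 4*t^3 - 3*t^2 + t) * h11 + (- t^6 + 5*t^5 - 8*t^4 + 8*t^3 - 6*t^2 + 2*t) * h12 + (- 2*t^6 + 8*t^5 - 12*t^4 + 11*t^3 - 7*t^2 + 2*t) * h13 + (- 2*t^6 + 9*t^5 - 15*t^4 + 15*t^3 - 10*t^2 + 3*t) * h14 + (- 3*t^6 + 12*t^5 - 19*t^4 + 18*t^3 - 11*t^2 + 3*t) * h15 + (t^7 - 5*t^6 + 9*t^5 - 9*t^4 + 6*t^3 - 2*t^2) * h16 + (- t^7 + 5*t^6 - 9*t^5 + 9*t^4 - 6*t^3 + 2*t^2) * h17 + (- t^7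 + 4*t^6 - 6*t^5 + 5*t^4 - 3*t^3 + t^2) * h18 + (t^7 - 4*t^6 + 6*t^5 - 5*t^4 + 3*t^3 - t^2) * h19 + (- 2*t^7 + 8*t^6 - 12*t^5 + 11*t^4 - 7*t^3 + 2*t^2) * h20 + (2*t^7 - 9*t^6 + 15*t^5 - 15*t^4 + 10*t^3 - 3*t^2) * h21 + (2*t^7 - 8*t^6 + 12*t^5 - 11*t^4 + 7*t^3 - 2*t^2) * h22 + (- 2*t^7 + 9*t^6 - 15*t^5 + 15*t^4 - 10*t^3 + 3*t^2) * h23 + (t^5 - 2*t^4 + t^3) * h24 + (- t^6 + 2*t^5 - 2*t^4 + 2*t^3 - t^2) * h25 + (- t^5 + 2*t^4 - t^3) * h26 + (t^6 - 2*t^5 + 2*t^4 - 2*t^3 + t^2) * h27 + (t^6 - 2*t^5 + 2*t^4 - 2*t^3 + t^2) * h29 + (t^6 - 3*t^5 + 4*t^4 - 4*t^3 + 3*t^2 - t) * h30 + (2*t^6 - 5*t^5 + 6*t^4 - 6*t^3 + 4*t^2 - t) * h31 + (2*t^6 - 6*t^5 + 8*t^4 - 8*t^3 + 6*t^2 - 2*t)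 * h32 + (3*t^6 - 8*t^5 + 10*t^4 - 10*t^3 + 7*t^2 - 2*t) * h33 + (- t^7 + 3*t^6 - 4*t^5 + 4*t^4 - 3*t^3 + t^2) * h34 + (t^7 - 3*t^6 + 4*t^5 - 4*t^4 + 3*t^3 - t^2) * h35 + (t^7 - 2*t^6 + 2*t^5 - 2*t^4 + t^3) * h36 + (- t^7 + 2*t^6 - 2*t^5 + 2*t^4 - t^3) * h37 + (2*t^7 - 5*t^6 + 6*t^5 - 6*t^4 + 4*t^3 - t^2) * h38 + (- 2*t^7 + 6*t^6 - 8*t^5 + 8*t^4 - 6*t^3 + 2*t^2) * h39 + (- 2*t^7 + 5*t^6 - 6*t^5 + 6*t^4 - 4*t^3 + t^2) * h40 + (2*t^7 - 6*t^6 + 8*t^5 - 8*t^4 + 6*t^3 - 2*t^2) * h41 + (- t^6 + 2*t^5 - 2*t^4 + 2*t^3 - t^2) * h42 + (t^6 - 2*t^5 + 2*t^4 - 2*t^3 + t^2) * h43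
  have e20 : (t^4*(t-1)) * (x20 - x21) = 0 := by
    linear_combination (t^5 - 2*t^4 + t^3) * h1 + (t^4 - 2*t^3 + t^2) * h3 + (t^5 - t^4 - t^3 + t^2) * h4 + (t^6 - t^5 - t^4 + t^3) * h5 + (t^7 - t^6 - t^5 + t^4) * h6 + (t^7 - 2*t^6 + 2*t^5 - 3*t^4 + 3*t^3 - t^2) * h7 + (- t^7 + 3*t^6 - 4*t^5 + 4*t^4 - 3*t^3 + t^2) * h8 + (- t^7 + 2*t^6 - 2*t^5 + 2*t^4 - t^3) * h9 + (t^6 - 2*t^5 + 2*t^4 - 3*t^3 + 3*t^2 - t) * h10 + (- t^7 + 5*t^6 - 9*t^5 + 9*t^4 - 7*t^3 + 4*t^2 - t) * h11 + (- t^7 + 6*t^6 - 13*t^5 + 16*t^4 - 14*t^3 + 8*t^2 - 2*t) * h12 + (- 2*t^7 + 10*t^6 - 20*t^5 + 23*t^4 - 18*t^3 + 9*t^2 - 2*t) * h13 + (- 2*t^7 + 11*t^6 - 24*t^5 + 30*t^4 - 25*t^3 + 13*t^2 - 3*t) * h14 + (- 3*t^7 + 15*t^6 - 31*t^5 + 37*t^4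 - 29*t^3 + 14*t^2 - 3*t) * h15 + (t^8 - 6*t^7 + 14*t^6 - 18*t^5 + 15*t^4 - 8*t^3 + 2*t^2) * h16 + (- t^8 + 6*t^7 - 14*t^6 + 18*t^5 - 15*t^4 + 8*t^3 - 2*t^2) * h17 + (- t^8 + 5*t^7 - 10*t^6 + 12*t^5 - 9*t^4 + 4*t^3 - t^2) * h18 + (t^8 - 5*t^7 + 10*t^6 - 12*t^5 + 9*t^4 - 4*t^3 + t^2) * h19 + (- 2*t^8 + 10*t^7 - 21*t^6 + 25*t^5 - 19*t^4 + 9*t^3 - 2*t^2) * h20 + (2*t^8 - 11*t^7 + 25*t^6 - 32*t^5 + 26*t^4 - 13*t^3 + 3*t^2) * h21 + (2*t^8 - 10*t^7 + 21*t^6 - 25*t^5 + 19*t^4 - 9*t^3 + 2*t^2) * h22 + (- 2*t^8 + 11*t^7 - 25*t^6 + 32*t^5 - 26*t^4 + 13*t^3 - 3*t^2) * h23 + (t^6 - 3*t^5 + 3*t^4 - t^3) * h24 + (- t^7 + 3*t^6 - 4*t^5 + 4*t^4 - 3*t^3 + t^2) * h25 + (- t^6 + 3*t^5 - 3*t^4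 + t^3) * h26 + (t^7 - 3*t^6 + 4*t^5 - 4*t^4 + 3*t^3 - t^2) * h27 + (t^7 - 3*t^6 + 4*t^5 - 4*t^4 + 3*t^3 - t^2) * h29 + (t^7 - 4*t^6 + 7*t^5 - 8*t^4 + 7*t^3 - 4*t^2 + t) * h30 + (2*t^7 - 7*t^6 + 11*t^5 - 12*t^4 + 10*t^3 - 5*t^2 + t) * h31 + (2*t^7 - 8*t^6 + 14*t^5 - 16*t^4 + 14*t^3 - 8*t^2 + 2*t) * h32 + (3*t^7 - 11*t^6 + 18*t^5 - 20*t^4 + 17*t^3 - 9*t^2 + 2*t) * h33 + (- t^8 + 4*t^7 - 7*t^6 + 8*t^5 - 7*t^4 + 4*t^3 - t^2) * h34 + (t^8 - 4*t^7 + 7*t^6 - 8*t^5 + 7*t^4 - 4*t^3 + t^2) * h35 + (t^8 - 3*t^7 + 4*t^6 - 4*t^5 + 3*t^4 - t^3) * h36 + (- t^8 + 3*t^7 - 4*t^6 + 4*t^5 - 3*t^4 + t^3) * h37 + (2*t^8 - 7*t^7 + 11*t^6 - 12*t^5 + 10*t^4 - 5*t^3 + t^2) * h38 + (- 2*t^8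 + 8*t^7 - 14*t^6 + 16*t^5 - 14*t^4 + 8*t^3 - 2*t^2) * h39 + (- 2*t^8 + 7*t^7 - 11*t^6 + 12*t^5 - 10*t^4 + 5*t^3 - t^2) * h40 + (2*t^8 - 8*t^7 + 14*t^6 - 16*t^5 + 14*t^4 - 8*t^3 + 2*t^2) * h41 + (- t^7 + 3*t^6 - 4*t^5 + 4*t^4 - 3*t^3 + t^2) * h42 + (t^7 - 3*t^6 + 4*t^5 - 4*t^4 + 3*t^3 - t^2) * h43
  have e21 : (t^4*(t-1)) * (x21 - x22) = 0 := by
    linear_combination (- t^4 + t^3) * h1 + (- t^3 + t^2) * h3 + (- t^4 + t^2) * h4 + (- t^5 + t^3) * h5 + (- t^6 + t^4) * h6 + (- t^6 + t^5 - t^4 + 2*t^3 - t^2) * h7 + (t^6 - 2*t^5 + 2*t^4 - 2*t^3 + t^2) * h8 + (t^6 - t^5 + t^4 - t^3) * h9 + (- t^5 + t^4 - t^3 + 2*t^2 - t) * h10 + (t^6 - 4*t^5 + 5*t^4 - 4*t^3 + 3*t^2 - t) * h11 + (t^6 - 5*t^5 + 8*t^4 - 8*t^3 + 6*t^2 - 2*t)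 * h12 + (2*t^6 - 8*t^5 + 12*t^4 - 11*t^3 + 7*t^2 - 2*t) * h13 + (2*t^6 - 9*t^5 + 15*t^4 - 15*t^3 + 10*t^2 - 3*t) * h14 + (3*t^6 - 12*t^5 + 19*t^4 - 18*t^3 + 11*t^2 - 3*t) * h15 + (- t^7 + 5*t^6 - 8*t^5 + 8*t^4 - 6*t^3 + 2*t^2) * h16 + (t^7 - 5*t^6 + 8*t^5 - 8*t^4 + 6*t^3 - 2*t^2) * h17 + (t^7 - 4*t^6 + 5*t^5 - 4*t^4 + 3*t^3 - t^2) * h18 + (- t^7 + 4*t^6 - 5*t^5 + 4*t^4 - 3*t^3 + t^2) * h19 + (2*t^7 - 8*t^6 + 12*t^5 - 11*t^4 + 7*t^3 - 2*t^2) * h20 + (- 2*t^7 + 9*t^6 - 15*t^5 + 15*t^4 - 10*t^3 + 3*t^2) * h21 + (- 2*t^7 + 8*t^6 - 12*t^5 + 11*t^4 - 7*t^3 + 2*t^2) * h22 + (2*t^7 - 9*t^6 + 15*t^5 - 15*t^4 + 10*t^3 - 3*t^2) * h23 + (- t^5 + 2*t^4 - t^3) * h24 + (t^6 - 2*t^5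 + 2*t^4 - 2*t^3 + t^2) * h25 + (t^5 - 2*t^4 + t^3) * h26 + (- t^6 + 2*t^5 - 2*t^4 + 2*t^3 - t^2) * h27 + (- t^6 + 2*t^5 - 2*t^4 + 2*t^3 - t^2) * h29 + (- t^6 + 3*t^5 - 4*t^4 + 4*t^3 - 3*t^2 + t) * h30 + (- 2*t^6 + 5*t^5 - 6*t^4 + 6*t^3 - 4*t^2 + t) * h31 + (- 2*t^6 + 6*t^5 - 8*t^4 + 8*t^3 - 6*t^2 + 2*t) * h32 + (- 3*t^6 + 8*t^5 - 10*t^4 + 10*t^3 - 7*t^2 + 2*t) * h33 + (t^7 - 3*t^6 + 4*t^5 - 4*t^4 + 3*t^3 - t^2) * h34 + (- t^7 + 3*t^6 - 4*t^5 + 4*t^4 - 3*t^3 + t^2) * h35 + (- t^7 + 2*t^6 - 2*t^5 + 2*t^4 - t^3) * h36 + (t^7 - 2*t^6 + 2*t^5 - 2*t^4 + t^3) * h37 + (- 2*t^7 + 5*t^6 - 6*t^5 + 6*t^4 - 4*t^3 + t^2) * h38 + (2*t^7 - 6*t^6 + 8*t^5 - 8*t^4 + 6*t^3 - 2*t^2)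 * h39 + (2*t^7 - 5*t^6 + 6*t^5 - 6*t^4 + 4*t^3 - t^2) * h40 + (- 2*t^7 + 6*t^6 - 8*t^5 + 8*t^4 - 6*t^3 + 2*t^2) * h41 + (t^6 - 2*t^5 + 2*t^4 - 2*t^3 + t^2) * h42 + (- t^6 + 2*t^5 - 2*t^4 + 2*t^3 - t^2) * h43
  have e22 : (t^4*(t-1)) * (x22 - x23) = 0 := by
    linear_combination (- t^5 + 4*t^4 - 4*t^3 + t^2) * h1 + (- t^4 + 4*t^3 - 4*t^2 + t) * h3 + (- t^5 + 3*t^4 - 3*t^2 + t) * h4 + (- t^6 + 3*t^5 - 3*t^3 + t^2) * h5 + (- t^7 + 3*t^6 - 3*t^4 + t^3) * h6 + (- t^7 + 4*t^6 - 5*t^5 + 6*t^4 - 8*t^3 + 5*t^2 - t) * h7 + (t^7 - 5*t^6 + 9*t^5 - 10*t^4 + 9*t^3 - 5*t^2 + t) * h8 + (t^7 - 4*t^6 + 5*t^5 - 5*t^4 + 4*t^3 - t^2) * h9 + (- t^6 + 4*t^5 - 5*t^4 + 6*t^3 - 8*t^2 + 5*t - 1) * h10 + (t^7 - 7*t^6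 + 18*t^5 - 23*t^4 + 20*t^3 - 14*t^2 + 6*t - 1) * h11 + (t^7 - 8*t^6 + 24*t^5 - 37*t^4 + 38*t^3 - 28*t^2 + 12*t - 2) * h12 + (2*t^7 - 14*t^6 + 38*t^5 - 55*t^4 + 52*t^3 - 34*t^2 + 13*t - 2) * h13 + (2*t^7 - 15*t^6 + 44*t^5 - 69*t^4 + 70*t^3 - 48*t^2 + 19*t - 3) * h14 + (3*t^7 - 21*t^6 + 58*t^5 - 87*t^4 + 84*t^3 - 54*t^2 + 20*t - 3) * h15 + (- t^8 + 8*t^7 - 25*t^6 + 40*t^5 - 41*t^4 + 29*t^3 - 12*t^2 + 2*t) * h16 + (t^8 - 8*t^7 + 25*t^6 - 40*t^5 + 41*t^4 - 29*t^3 + 12*t^2 - 2*t) * h17 + (t^8 - 7*t^7 + 19*t^6 - 27*t^5 + 25*t^4 - 16*t^3 + 6*t^2 - t) * h18 + (- t^8 + 7*t^7 - 19*t^6 + 27*t^5 - 25*t^4 + 16*t^3 - 6*t^2 + t) * h19 + (2*t^8 - 14*t^7 + 39*t^6 - 58*t^5 + 55*t^4 - 35*t^3 + 13*t^2 - 2*t)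 * h20 + (- 2*t^8 + 15*t^7 - 45*t^6 + 72*t^5 - 73*t^4 + 49*t^3 - 19*t^2 + 3*t) * h21 + (- 2*t^8 + 14*t^7 - 39*t^6 + 58*t^5 - 55*t^4 + 35*t^3 - 13*t^2 + 2*t) * h22 + (2*t^8 - 15*t^7 + 45*t^6 - 72*t^5 + 73*t^4 - 49*t^3 + 19*t^2 - 3*t) * h23 + (- t^6 + 5*t^5 - 7*t^4 + 4*t^3 - t^2) * h24 + (t^7 - 5*t^6 + 9*t^5 - 10*t^4 + 9*t^3 - 5*t^2 + t) * h25 + (t^6 - 5*t^5 + 8*t^4 - 5*t^3 + t^2) * h26 + (- t^7 + 5*t^6 - 9*t^5 + 10*t^4 - 9*t^3 + 5*t^2 - t) * h27 + (- t^7 + 5*t^6 - 9*t^5 + 10*t^4 - 9*t^3 + 5*t^2 - t) * h29 + (- t^7 + 6*t^6 - 14*t^5 + 19*t^4 - 19*t^3 + 14*t^2 - 6*t + 1) * h30 + (- 2*t^7 + 11*t^6 - 23*t^5 + 29*t^4 - 28*t^3 + 19*t^2 - 7*t + 1) * h31 + (- 2*t^7 + 12*t^6 - 28*t^5 + 38*t^4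 - 38*t^3 + 28*t^2 - 12*t + 2) * h32 + (- 3*t^7 + 17*t^6 - 37*t^5 + 48*t^4 - 47*t^3 + 33*t^2 - 13*t + 2) * h33 + (t^8 - 6*t^7 + 14*t^6 - 19*t^5 + 19*t^4 - 14*t^3 + 6*t^2 - t) * h34 + (- t^8 + 6*t^7 - 14*t^6 + 19*t^5 - 19*t^4 + 14*t^3 - 6*t^2 + t) * h35 + (- t^8 + 5*t^7 - 9*t^6 + 10*t^5 - 9*t^4 + 5*t^3 - t^2) * h36 + (t^8 - 5*t^7 + 9*t^6 - 10*t^5 + 9*t^4 - 5*t^3 + t^2) * h37 + (- 2*t^8 + 11*t^7 - 23*t^6 + 29*t^5 - 28*t^4 + 19*t^3 - 7*t^2 + t) * h38 + (2*t^8 - 12*t^7 + 28*t^6 - 38*t^5 + 38*t^4 - 28*t^3 + 12*t^2 - 2*t) * h39 + (2*t^8 - 11*t^7 + 23*t^6 - 29*t^5 + 28*t^4 - 19*t^3 + 7*t^2 - t) * h40 + (- 2*t^8 + 12*t^7 - 28*t^6 + 38*t^5 - 38*t^4 + 28*t^3 - 12*t^2 + 2*t) * h41 + (t^7 - 5*t^6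 + 9*t^5 - 10*t^4 + 9*t^3 - 5*t^2 + t) * h42 + (- t^7 + 5*t^6 - 9*t^5 + 10*t^4 - 9*t^3 + 5*t^2 - t) * h43
  have e23 : (t^4*(t-1)) * (x23 - x24) = 0 := by
    linear_combination (- t^3 + t^2) * h1 + (- t^2 + t) * h3 + (- t^3 + t) * h4 + (- t^4 + t^2) * h5 + (- t^5 + t^3) * h6 + (- t^5 + t^4 - t^3 + 2*t^2 - t) * h7 + (t^5 - 2*t^4 + 2*t^3 - 2*t^2 + t) * h8 + (t^5 - t^4 + t^3 - t^2) * h9 + (- t^4 + t^3 - t^2 + 2*t - 1) * h10 + (t^5 - 4*t^4 + 5*t^3 - 4*t^2 + 3*t - 1) * h11 + (t^5 - 5*t^4 + 8*t^3 - 8*t^2 + 6*t - 2) * h12 + (2*t^5 - 8*t^4 + 12*t^3 - 11*t^2 + 7*t - 2) * h13 + (2*t^5 - 9*t^4 + 15*t^3 - 15*t^2 + 10*t - 3) * h14 + (3*t^5 - 12*t^4 + 19*t^3 - 18*t^2 + 11*t - 3) * h15 + (- t^6 + 5*t^5 - 8*t^4 + 8*t^3 - 6*t^2 + 2*t) * h16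 + (t^6 - 5*t^5 + 8*t^4 - 8*t^3 + 6*t^2 - 2*t) * h17 + (t^6 - 4*t^5 + 5*t^4 - 4*t^3 + 3*t^2 - t) * h18 + (- t^6 + 4*t^5 - 5*t^4 + 4*t^3 - 3*t^2 + t) * h19 + (2*t^6 - 8*t^5 + 12*t^4 - 11*t^3 + 7*t^2 - 2*t) * h20 + (- 2*t^6 + 9*t^5 - 15*t^4 + 15*t^3 - 10*t^2 + 3*t) * h21 + (- 2*t^6 + 8*t^5 - 12*t^4 + 11*t^3 - 7*t^2 + 2*t) * h22 + (2*t^6 - 9*t^5 + 15*t^4 - 15*t^3 + 10*t^2 - 3*t) * h23 + (- 2*t^4 + 3*t^3 - t^2) * h24 + (t^5 - t^4 + t^3 - 2*t^2 + t) * h25 + (t^4 - 2*t^3 + t^2) * h26 + (- t^5 + 2*t^4 - 2*t^3 + 2*t^2 - t) * h27 + (- t^5 + 2*t^4 - 2*t^3 + 2*t^2 - t) * h29 + (- t^5 + 3*t^4 - 4*t^3 + 4*t^2 - 3*t + 1) * h30 + (- 2*t^5 + 5*t^4 - 6*t^3 + 6*t^2 - 4*t + 1) * h31 + (- 2*t^5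 + 6*t^4 - 8*t^3 + 8*t^2 - 6*t + 2) * h32 + (- 3*t^5 + 8*t^4 - 10*t^3 + 10*t^2 - 7*t + 2) * h33 + (t^6 - 3*t^5 + 4*t^4 - 4*t^3 + 3*t^2 - t) * h34 + (- t^6 + 3*t^5 - 4*t^4 + 4*t^3 - 3*t^2 + t) * h35 + (- t^6 + 2*t^5 - 2*t^4 + 2*t^3 - t^2) * h36 + (t^6 - 2*t^5 + 2*t^4 - 2*t^3 + t^2) * h37 + (- 2*t^6 + 5*t^5 - 6*t^4 + 6*t^3 - 4*t^2 + t) * h38 + (2*t^6 - 6*t^5 + 8*t^4 - 8*t^3 + 6*t^2 - 2*t) * h39 + (2*t^6 - 5*t^5 + 6*t^4 - 6*t^3 + 4*t^2 - t) * h40 + (- 2*t^6 + 6*t^5 - 8*t^4 + 8*t^3 - 6*t^2 + 2*t) * h41 + (t^5 - 2*t^4 + 2*t^3 - 2*t^2 + t) * h42 + (- t^5 + 2*t^4 - 2*t^3 + 2*t^2 - t) * h43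
  have e24 : (t^4*(t-1)) * (x24 - x25) = 0 := by
    linear_combination (2*t^5 - 6*t^4 + 6*t^3 - 2*t^2) * h1 + (2*t^4 - 6*t^3 + 6*t^2 - 2*t) * h3 + (2*t^5 - 4*t^4 + 4*t^2 - 2*t) * h4 + (2*t^6 - 4*t^5 + 4*t^3 - 2*t^2) * h5 + (2*t^7 - 4*t^6 + 4*t^4 - 2*t^3) * h6 + (2*t^7 - 6*t^6 + 8*t^5 - 10*t^4 + 12*t^3 - 8*t^2 + 2*t) * h7 + (- 2*t^7 + 8*t^6 - 14*t^5 + 16*t^4 - 14*t^3 + 8*t^2 - 2*t) * h8 + (- 2*t^7 + 6*t^6 - 8*t^5 + 8*t^4 - 6*t^3 + 2*t^2) * h9 + (2*t^6 - 6*t^5 + 8*t^4 - 10*t^3 + 12*t^2 - 8*t + 2) * h10 + (- 2*t^7 + 12*t^6 - 28*t^5 + 36*t^4 - 32*t^3 + 22*t^2 - 10*t + 2) * h11 + (- 2*t^7 + 14*t^6 - 38*t^5 + 58*t^4 - 60*t^3 + 44*t^2 - 20*t + 4) * h12 + (- 4*t^7 + 24*t^6 - 60*t^5 + 86*t^4 -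 82*t^3 + 54*t^2 - 22*t + 4) * h13 + (- 4*t^7 + 26*t^6 - 70*t^5 + 108*t^4 - 110*t^3 + 76*t^2 - 32*t + 6) * h14 + (- 6*t^7 + 36*t^6 - 92*t^5 + 136*t^4 - 132*t^3 + 86*t^2 - 34*t + 6) * h15 + (2*t^8 - 14*t^7 + 40*t^6 - 63*t^5 + 64*t^4 - 45*t^3 + 20*t^2 - 4*t) * h16 + (- 2*t^8 + 14*t^7 - 40*t^6 + 63*t^5 - 64*t^4 + 45*t^3 - 20*t^2 + 4*t) * h17 + (- 2*t^8 + 12*t^7 - 30*t^6 + 42*t^5 - 38*t^4 + 24*t^3 - 10*t^2 + 2*t) * h18 + (2*t^8 - 12*t^7 + 30*t^6 - 42*t^5 + 38*t^4 - 24*t^3 + 10*t^2 - 2*t) * h19 + (- 4*t^8 + 24*t^7 - 61*t^6 + 89*t^5 - 85*t^4 + 55*t^3 - 22*t^2 + 4*t) * h20 + (4*t^8 - 26*t^7 + 71*t^6 - 111*t^5 + 113*t^4 - 77*t^3 + 32*t^2 - 6*t) * h21 + (4*t^8 - 24*t^7 + 61*t^6 - 89*t^5 + 85*t^4 - 55*t^3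 + 22*t^2 - 4*t) * h22 + (- 4*t^8 + 26*t^7 - 71*t^6 + 111*t^5 - 113*t^4 + 77*t^3 - 32*t^2 + 6*t) * h23 + (2*t^6 - 8*t^5 + 12*t^4 - 8*t^3 + 2*t^2) * h24 + (- 2*t^7 + 8*t^6 - 13*t^5 + 14*t^4 - 13*t^3 + 8*t^2 - 2*t) * h25 + (- 2*t^6 + 8*t^5 - 12*t^4 + 8*t^3 - 2*t^2) * h26 + (2*t^7 - 8*t^6 + 13*t^5 - 15*t^4 + 14*t^3 - 8*t^2 + 2*t) * h27 + (2*t^7 - 8*t^6 + 14*t^5 - 16*t^4 + 14*t^3 - 8*t^2 + 2*t) * h29 + (2*t^7 - 10*t^6 + 22*t^5 - 30*t^4 + 30*t^3 - 22*t^2 + 10*t - 2) * h30 + (4*t^7 - 18*t^6 + 36*t^5 - 46*t^4 + 44*t^3 - 30*t^2 + 12*t - 2) * h31 + (4*t^7 - 20*t^6 + 44*t^5 - 60*t^4 + 60*t^3 - 44*t^2 + 20*t - 4) * h32 + (6*t^7 - 28*t^6 + 58*t^5 - 76*t^4 + 74*t^3 - 52*t^2 + 22*t - 4) * h33 + (-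 2*t^8 + 10*t^7 - 22*t^6 + 30*t^5 - 30*t^4 + 22*t^3 - 10*t^2 + 2*t) * h34 + (2*t^8 - 10*t^7 + 22*t^6 - 30*t^5 + 30*t^4 - 22*t^3 + 10*t^2 - 2*t) * h35 + (2*t^8 - 8*t^7 + 14*t^6 - 16*t^5 + 14*t^4 - 8*t^3 + 2*t^2) * h36 + (- 2*t^8 + 8*t^7 - 14*t^6 + 16*t^5 - 14*t^4 + 8*t^3 - 2*t^2) * h37 + (4*t^8 - 18*t^7 + 36*t^6 - 46*t^5 + 44*t^4 - 30*t^3 + 12*t^2 - 2*t) * h38 + (- 4*t^8 + 20*t^7 - 44*t^6 + 60*t^5 - 60*t^4 + 44*t^3 - 20*t^2 + 4*t) * h39 + (- 4*t^8 + 18*t^7 - 36*t^6 + 46*t^5 - 44*t^4 + 30*t^3 - 12*t^2 + 2*t) * h40 + (4*t^8 - 20*t^7 + 44*t^6 - 60*t^5 + 60*t^4 - 44*t^3 + 20*t^2 - 4*t) * h41 + (- 2*t^7 + 8*t^6 - 14*t^5 + 16*t^4 - 14*t^3 + 8*t^2 - 2*t) * h42 + (2*t^7 - 8*t^6 + 14*t^5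 - 16*t^4 + 14*t^3 - 8*t^2 + 2*t) * h43
  have e25 : (t^4*(t-1)) * (x25 - x26) = 0 := by
    linear_combination (t^4 - t^3) * h1 + (t^3 - t^2) * h3 + (t^4 - t^2) * h4 + (t^5 - t^3) * h5 + (t^6 - t^4) * h6 + (t^6 - t^5 + t^4 - 2*t^3 + t^2) * h7 + (- t^6 + 2*t^5 - 2*t^4 + 2*t^3 - t^2) * h8 + (- t^6 + t^5 - t^4 + t^3) * h9 + (t^5 - t^4 + t^3 - 2*t^2 + t) * h10 + (- t^6 + 4*t^5 - 5*t^4 + 4*t^3 - 3*t^2 + t) * h11 + (- t^6 + 5*t^5 - 8*t^4 + 8*t^3 - 6*t^2 + 2*t) * h12 + (- 2*t^6 + 8*t^5 - 12*t^4 + 11*t^3 - 7*t^2 + 2*t) * h13 + (- 2*t^6 + 9*t^5 - 15*t^4 + 15*t^3 - 10*t^2 + 3*t) * h14 + (- 3*t^6 + 12*t^5 - 19*t^4 + 18*t^3 - 11*t^2 + 3*t) * h15 + (t^7 - 5*t^6 + 8*t^5 - 8*t^4 + 6*t^3 - 2*t^2) * h16 + (- t^7 + 5*t^6 - 8*t^5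 + 8*t^4 - 6*t^3 + 2*t^2) * h17 + (- t^7 + 4*t^6 - 5*t^5 + 4*t^4 - 3*t^3 + t^2) * h18 + (t^7 - 4*t^6 + 5*t^5 - 4*t^4 + 3*t^3 - t^2) * h19 + (- 2*t^7 + 8*t^6 - 12*t^5 + 11*t^4 - 7*t^3 + 2*t^2) * h20 + (2*t^7 - 9*t^6 + 15*t^5 - 15*t^4 + 10*t^3 - 3*t^2) * h21 + (2*t^7 - 8*t^6 + 12*t^5 - 11*t^4 + 7*t^3 - 2*t^2) * h22 + (- 2*t^7 + 9*t^6 - 15*t^5 + 15*t^4 - 10*t^3 + 3*t^2) * h23 + (2*t^5 - 3*t^4 + t^3) * h24 + (- t^6 + t^5 - t^4 + 2*t^3 - t^2) * h25 + (- 2*t^5 + 3*t^4 - t^3) * h26 + (t^6 - t^5 + t^4 - 2*t^3 + t^2) * h27 + (t^6 - 2*t^5 + 2*t^4 - 2*t^3 + t^2) * h29 + (t^6 - 3*t^5 + 4*t^4 - 4*t^3 + 3*t^2 - t) * h30 + (2*t^6 - 5*t^5 + 6*t^4 - 6*t^3 + 4*t^2 - t) * h31 + (2*t^6 - 6*t^5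 + 8*t^4 - 8*t^3 + 6*t^2 - 2*t) * h32 + (3*t^6 - 8*t^5 + 10*t^4 - 10*t^3 + 7*t^2 - 2*t) * h33 + (- t^7 + 3*t^6 - 4*t^5 + 4*t^4 - 3*t^3 + t^2) * h34 + (t^7 - 3*t^6 + 4*t^5 - 4*t^4 + 3*t^3 - t^2) * h35 + (t^7 - 2*t^6 + 2*t^5 - 2*t^4 + t^3) * h36 + (- t^7 + 2*t^6 - 2*t^5 + 2*t^4 - t^3) * h37 + (2*t^7 - 5*t^6 + 6*t^5 - 6*t^4 + 4*t^3 - t^2) * h38 + (- 2*t^7 + 6*t^6 - 8*t^5 + 8*t^4 - 6*t^3 + 2*t^2) * h39 + (- 2*t^7 + 5*t^6 - 6*t^5 + 6*t^4 - 4*t^3 + t^2) * h40 + (2*t^7 - 6*t^6 + 8*t^5 - 8*t^4 + 6*t^3 - 2*t^2) * h41 + (- t^6 + 2*t^5 - 2*t^4 + 2*t^3 - t^2) * h42 + (t^6 - 2*t^5 + 2*t^4 - 2*t^3 + t^2) * h43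
  have e26 : (t^4*(t-1)) * (x26 - x27) = 0 := by
    linear_combination (t^4 - t^3) * h1 + (t^4 - t^3) * h2 + (t^3 - t^2) * h3 + (t^3 - t^2) * h4 + (t^4 - t^3) * h5 + (t^5 - t^4) * h6 + (t^5 - 2*t^4 + t^3) * h7 + (- t^5 + 2*t^4 - t^3) * h8 + (- t^5 + t^4) * h9 + (t^4 - 2*t^3 + t^2) * h10 + (- t^5 + 3*t^4 - 3*t^3 + t^2) * h11 + (- t^5 + 4*t^4 - 5*t^3 + 2*t^2) * h12 + (- 2*t^5 + 6*t^4 - 6*t^3 + 2*t^2) * h13 + (- 2*t^5 + 7*t^4 - 8*t^3 + 3*t^2) * h14 + (- 3*t^5 + 9*t^4 - 9*t^3 + 3*t^2) * h15 + (t^6 - 4*t^5 + 5*t^4 - 2*t^3) * h16 + (- t^6 + 4*t^5 - 5*t^4 + 2*t^3) * h17 + (- t^6 + 3*t^5 - 3*t^4 + t^3) * h18 + (t^6 - 3*t^5 + 3*t^4 - t^3) * h19 + (- 2*t^6 + 6*t^5 - 6*t^4 + 2*t^3) * h20 + (2*t^6 - 7*t^5 + 8*t^4 - 3*t^3) * h21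 + (2*t^6 - 6*t^5 + 6*t^4 - 2*t^3) * h22 + (- 2*t^6 + 7*t^5 - 8*t^4 + 3*t^3) * h23 + (- t^5 + 2*t^4 - t^3) * h25 + (t^5 - 2*t^4 + t^3) * h27 + (t^5 - 2*t^4 + t^3) * h29 + (t^5 - 3*t^4 + 3*t^3 - t^2) * h30 + (2*t^5 - 5*t^4 + 4*t^3 - t^2) * h31 + (2*t^5 - 6*t^4 + 6*t^3 - 2*t^2) * h32 + (3*t^5 - 8*t^4 + 7*t^3 - 2*t^2) * h33 + (- t^6 + 3*t^5 - 3*t^4 + t^3) * h34 + (t^6 - 3*t^5 + 3*t^4 - t^3) * h35 + (t^6 - 2*t^5 + t^4) * h36 + (- t^6 + 2*t^5 - t^4) * h37 + (2*t^6 - 5*t^5 + 4*t^4 - t^3) * h38 + (- 2*t^6 + 6*t^5 - 6*t^4 + 2*t^3) * h39 + (- 2*t^6 + 5*t^5 - 4*t^4 + t^3) * h40 + (2*t^6 - 6*t^5 + 6*t^4 - 2*t^3) * h41 + (- t^5 + 2*t^4 - t^3) * h42 + (t^5 - 2*t^4 + t^3) * h43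
  have e27 : (t^4*(t-1)) * (x27 - x28) = 0 := by
    linear_combination (- t^4 + t^3) * h1 + (- t^4 + t^3) * h2 + (- t^3 + t^2) * h3 + (- t^3 + t^2) * h4 + (- t^4 + t^3) * h5 + (- t^5 + t^4) * h6 + (- t^5 + t^4) * h7 + (t^5 - t^4) * h8 + (t^5 - t^4) * h9 + (- t^4 + t^3) * h10 + (- t^4 + t^3) * h11 + (- t^4 + t^3) * h12 + (- t^4 + t^3) * h13 + (- t^4 + t^3) * h14 + (- t^4 + t^3) * h15 + (t^5 - t^4) * h16 + (- t^5 + t^4) * h17 + (- t^5 + t^4) * h18 + (t^5 - t^4) * h19 + (- t^5 + t^4) * h20 + (t^5 - t^4) * h21 + (t^5 - t^4) * h22 + (- t^5 + t^4) * h23 + (- t^5 + t^4) * h24 + (t^5 - t^4) * h25 + (t^5 - t^4) * h26 + (- t^5 + t^4) * h27 + (- t^5 + t^4) * h29 + (- t^5 + 2*t^4 - t^3) * h30 + (- 2*t^5 + 3*t^4 - t^3) * h31 + (- 2*t^5 + 4*t^4 - 2*t^3) * h32 + (- 3*t^5 + 5*t^4 - 2*t^3) * h33 + (t^6 - 2*t^5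 + t^4) * h34 + (- t^6 + 2*t^5 - t^4) * h35 + (- t^6 + t^5) * h36 + (t^6 - t^5) * h37 + (- 2*t^6 + 3*t^5 - t^4) * h38 + (2*t^6 - 4*t^5 + 2*t^4) * h39 + (2*t^6 - 3*t^5 + t^4) * h40 + (- 2*t^6 + 4*t^5 - 2*t^4) * h41 + (t^5 - t^4) * h42 + (- t^5 + t^4) * h43
  have e28 : (t^4*(t-1)) * (x28 - x29) = 0 := by
    linear_combination (- t^4 + t^3) * h1 + (- t^3 + t^2) * h3 + (- t^4 + t^2) * h4 + (- t^5 + t^3) * h5 + (- t^6 + t^4) * h6 + (- t^6 + t^5 + t^3 - t^2) * h7 + (t^6 - 2*t^5 + t^4 - t^3 + t^2) * h8 + (t^6 - t^5 + t^4 - t^3) * h9 + (- t^5 + t^4 + t^2 - t) * h10 + (t^6 - 3*t^5 + 3*t^4 - 2*t^3 + 2*t^2 - t) * h11 + (t^6 - 4*t^5 + 5*t^4 - 4*t^3 + 4*t^2 - 2*t) * h12 + (2*t^6 - 6*t^5 + 7*t^4 - 6*t^3 + 5*t^2 - 2*t) * h13 + (2*t^6 - 7*t^5 + 9*t^4 -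 8*t^3 + 7*t^2 - 3*t) * h14 + (3*t^6 - 9*t^5 + 11*t^4 - 10*t^3 + 8*t^2 - 3*t) * h15 + (- t^7 + 4*t^6 - 5*t^5 + 4*t^4 - 4*t^3 + 2*t^2) * h16 + (t^7 - 4*t^6 + 5*t^5 - 4*t^4 + 4*t^3 - 2*t^2) * h17 + (t^7 - 3*t^6 + 3*t^5 - 2*t^4 + 2*t^3 - t^2) * h18 + (- t^7 + 3*t^6 - 3*t^5 + 2*t^4 - 2*t^3 + t^2) * h19 + (2*t^7 - 6*t^6 + 7*t^5 - 6*t^4 + 5*t^3 - 2*t^2) * h20 + (- 2*t^7 + 7*t^6 - 9*t^5 + 8*t^4 - 7*t^3 + 3*t^2) * h21 + (- 2*t^7 + 6*t^6 - 7*t^5 + 6*t^4 - 5*t^3 + 2*t^2) * h22 + (2*t^7 - 7*t^6 + 9*t^5 - 8*t^4 + 7*t^3 - 3*t^2) * h23 + (- t^5 + 2*t^4 - t^3) * h24 + (t^6 - t^5 - t^3 + t^2) * h25 + (t^5 - 2*t^4 + t^3) * h26 + (- t^6 + t^5 + t^3 - t^2) * h27 + (- t^6 + t^5 + t^3 - t^2)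 * h29 + (- t^6 + 2*t^5 - t^4 + t^3 - 2*t^2 + t) * h30 + (- 2*t^6 + 3*t^5 - t^4 + 2*t^3 - 3*t^2 + t) * h31 + (- 2*t^6 + 4*t^5 - 2*t^4 + 2*t^3 - 4*t^2 + 2*t) * h32 + (- 3*t^6 + 5*t^5 - 2*t^4 + 3*t^3 - 5*t^2 + 2*t) * h33 + (t^7 - 2*t^6 + t^5 - t^4 + 2*t^3 - t^2) * h34 + (- t^7 + 2*t^6 - t^5 + t^4 - 2*t^3 + t^2) * h35 + (- t^7 + t^6 + t^4 - t^3) * h36 + (t^7 - t^6 - t^4 + t^3) * h37 + (- 2*t^7 + 3*t^6 - t^5 + 2*t^4 - 3*t^3 + t^2) * h38 + (2*t^7 - 4*t^6 + 2*t^5 - 2*t^4 + 4*t^3 - 2*t^2) * h39 + (2*t^7 - 3*t^6 + t^5 - 2*t^4 + 3*t^3 - t^2) * h40 + (- 2*t^7 + 4*t^6 - 2*t^5 + 2*t^4 - 4*t^3 + 2*t^2) * h41 + (t^6 - t^5 - t^3 + t^2) * h42 + (- t^6 + t^5 + t^3 - t^2) * h43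
  have e29 : (t^4*(t-1)) * (x29 - x30) = 0 := by
    linear_combination (t^5 - t^4) * h1 + (t^4 - t^3) * h3 + (t^5 - t^3) * h4 + (t^6 - t^4) * h5 + (t^7 - t^5) * h6 + (t^7 - t^6 - t^4 + t^3) * h7 + (- t^7 + 2*t^6 - t^5 + t^4 - t^3) * h8 + (- t^7 + t^6 - t^5 + t^4) * h9 + (t^6 - t^5 - t^3 + t^2) * h10 + (- t^7 + 3*t^6 - 3*t^5 + 2*t^4 - 2*t^3 + t^2) * h11 + (- t^7 + 4*t^6 - 5*t^5 + 4*t^4 - 4*t^3 + 2*t^2) * h12 + (- 2*t^7 + 6*t^6 - 7*t^5 + 6*t^4 - 5*t^3 + 2*t^2) * h13 + (- 2*t^7 + 7*t^6 - 9*t^5 + 8*t^4 - 7*t^3 + 3*t^2) * h14 + (- 3*t^7 + 9*t^6 - 11*t^5 + 10*t^4 - 8*t^3 + 3*t^2) * h15 + (t^8 - 4*t^7 + 5*t^6 - 4*t^5 + 4*t^4 - 2*t^3) * h16 + (- t^8 + 4*t^7 - 5*t^6 + 4*t^5 - 4*t^4 + 2*t^3) * h17 + (- t^8 + 3*t^7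 - 3*t^6 + 2*t^5 - 2*t^4 + t^3) * h18 + (t^8 - 3*t^7 + 3*t^6 - 2*t^5 + 2*t^4 - t^3) * h19 + (- 2*t^8 + 6*t^7 - 7*t^6 + 6*t^5 - 5*t^4 + 2*t^3) * h20 + (2*t^8 - 7*t^7 + 9*t^6 - 8*t^5 + 7*t^4 - 3*t^3) * h21 + (2*t^8 - 6*t^7 + 7*t^6 - 6*t^5 + 5*t^4 - 2*t^3) * h22 + (- 2*t^8 + 7*t^7 - 9*t^6 + 8*t^5 - 7*t^4 + 3*t^3) * h23 + (t^6 - 2*t^5 + t^4) * h24 + (- t^7 + t^6 + t^4 - t^3) * h25 + (- t^6 + 2*t^5 - t^4) * h26 + (t^7 - t^6 - t^4 + t^3) * h27 + (- t^5 + t^4) * h28 + (t^7 - t^6 - t^4 + t^3) * h29 + (t^7 - 2*t^6 + t^5 - t^4 + 2*t^3 - t^2) * h30 + (2*t^7 - 3*t^6 + t^5 - 2*t^4 + 3*t^3 - t^2) * h31 + (2*t^7 - 4*t^6 + 2*t^5 - 2*t^4 + 4*t^3 - 2*t^2) * h32 + (3*t^7 - 5*t^6 + 2*t^5 - 3*t^4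 + 5*t^3 - 2*t^2) * h33 + (- t^8 + 2*t^7 - t^6 + t^5 - 2*t^4 + t^3) * h34 + (t^8 - 2*t^7 + t^6 - t^5 + 2*t^4 - t^3) * h35 + (t^8 - t^7 - t^5 + t^4) * h36 + (- t^8 + t^7 + t^5 - t^4) * h37 + (2*t^8 - 3*t^7 + t^6 - 2*t^5 + 3*t^4 - t^3) * h38 + (- 2*t^8 + 4*t^7 - 2*t^6 + 2*t^5 - 4*t^4 + 2*t^3) * h39 + (- 2*t^8 + 3*t^7 - t^6 + 2*t^5 - 3*t^4 + t^3) * h40 + (2*t^8 - 4*t^7 + 2*t^6 - 2*t^5 + 4*t^4 - 2*t^3) * h41 + (- t^7 + t^6 + t^4 - t^3) * h42 + (t^7 - t^6 - t^4 + t^3) * h43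
  have e30 : (t^4*(t-1)) * (x30 - x31) = 0 := by
    linear_combination (- t^4 + t^3) * h1 + (- t^3 + t^2) * h3 + (- t^4 + t^2) * h4 + (- t^5 + t^3) * h5 + (- t^6 + t^4) * h6 + (- t^6 + t^5 + t^3 - t^2) * h7 + (t^6 - 2*t^5 + t^4 - t^3 + t^2) * h8 + (t^6 - t^5 + t^4 - t^3) * h9 + (- t^5 + t^4 + t^2 - t) * h10 + (t^6 - 3*t^5 + 3*t^4 - 2*t^3 + 2*t^2 - t) * h11 + (t^6 - 4*t^5 + 5*t^4 - 4*t^3 + 4*t^2 - 2*t) * h12 + (2*t^6 - 6*t^5 + 7*t^4 - 6*t^3 + 5*t^2 - 2*t) * h13 + (2*t^6 - 7*t^5 + 9*t^4 - 8*t^3 + 7*t^2 - 3*t) * h14 + (3*t^6 - 9*t^5 + 11*t^4 - 10*t^3 + 8*t^2 - 3*t) * h15 + (- t^7 + 4*t^6 - 5*t^5 + 4*t^4 - 4*t^3 + 2*t^2) * h16 + (t^7 - 4*t^6 + 5*t^5 - 4*t^4 + 4*t^3 - 2*t^2) * h17 + (t^7 - 3*t^6 + 3*t^5 - 2*t^4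 + 2*t^3 - t^2) * h18 + (- t^7 + 3*t^6 - 3*t^5 + 2*t^4 - 2*t^3 + t^2) * h19 + (2*t^7 - 6*t^6 + 7*t^5 - 6*t^4 + 5*t^3 - 2*t^2) * h20 + (- 2*t^7 + 7*t^6 - 9*t^5 + 8*t^4 - 7*t^3 + 3*t^2) * h21 + (- 2*t^7 + 6*t^6 - 7*t^5 + 6*t^4 - 5*t^3 + 2*t^2) * h22 + (2*t^7 - 7*t^6 + 9*t^5 - 8*t^4 + 7*t^3 - 3*t^2) * h23 + (- t^5 + 2*t^4 - t^3) * h24 + (t^6 - t^5 - t^3 + t^2) * h25 + (t^5 - 2*t^4 + t^3) * h26 + (- t^6 + t^5 + t^3 - t^2) * h27 + (t^4 - t^3) * h28 + (- t^6 + t^5 + t^4 - t^2) * h29 + (- t^6 + 2*t^5 - t^4 + t^3 - 2*t^2 + t) * h30 + (- 2*t^6 + 3*t^5 - t^4 + 2*t^3 - 3*t^2 + t) * h31 + (- 2*t^6 + 4*t^5 - 2*t^4 + 2*t^3 - 4*t^2 + 2*t) * h32 + (- 3*t^6 + 5*t^5 - 2*t^4 + 3*t^3 - 5*t^2 + 2*t)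 * h33 + (t^7 - 2*t^6 + t^5 - t^4 + 2*t^3 - t^2) * h34 + (- t^7 + 2*t^6 - t^5 + t^4 - 2*t^3 + t^2) * h35 + (- t^7 + t^6 + t^4 - t^3) * h36 + (t^7 - t^6 - t^4 + t^3) * h37 + (- 2*t^7 + 3*t^6 - t^5 + 2*t^4 - 3*t^3 + t^2) * h38 + (2*t^7 - 4*t^6 + 2*t^5 - 2*t^4 + 4*t^3 - 2*t^2) * h39 + (2*t^7 - 3*t^6 + t^5 - 2*t^4 + 3*t^3 - t^2) * h40 + (- 2*t^7 + 4*t^6 - 2*t^5 + 2*t^4 - 4*t^3 + 2*t^2) * h41 + (t^6 - t^5 - t^3 + t^2) * h42 + (- t^6 + t^5 + t^3 - t^2) * h43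
  have e31 : (t^4*(t-1)) * (x31 - x32) = 0 := by
    linear_combination (t^5 - t^4) * h1 + (t^4 - t^3) * h3 + (t^5 - t^3) * h4 + (t^6 - t^4) * h5 + (t^7 - t^5) * h6 + (t^7 - t^6 - t^4 + t^3) * h7 + (- t^7 + 2*t^6 - t^5 + t^4 - t^3) * h8 + (- t^7 + t^6 - t^5 + t^4) * h9 + (t^6 - t^5 - t^3 + t^2) * h10 + (- t^7 + 3*t^6 - 3*t^5 + 2*t^4 - 2*t^3 + t^2) * h11 + (- t^7 + 4*t^6 - 5*t^5 + 4*t^4 - 4*t^3 + 2*t^2) * h12 + (- 2*t^7 + 6*t^6 - 7*t^5 + 6*t^4 - 5*t^3 + 2*t^2) * h13 + (- 2*t^7 + 7*t^6 - 9*t^5 + 8*t^4 - 7*t^3 + 3*t^2) * h14 + (- 3*t^7 + 9*t^6 - 11*t^5 + 10*t^4 - 8*t^3 + 3*t^2) * h15 + (t^8 - 4*t^7 + 5*t^6 - 4*t^5 + 4*t^4 - 2*t^3) * h16 + (- t^8 + 4*t^7 - 5*t^6 + 4*t^5 - 4*t^4 + 2*t^3) * h17 + (- t^8 + 3*t^7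 - 3*t^6 + 2*t^5 - 2*t^4 + t^3) * h18 + (t^8 - 3*t^7 + 3*t^6 - 2*t^5 + 2*t^4 - t^3) * h19 + (- 2*t^8 + 6*t^7 - 7*t^6 + 6*t^5 - 5*t^4 + 2*t^3) * h20 + (2*t^8 - 7*t^7 + 9*t^6 - 8*t^5 + 7*t^4 - 3*t^3) * h21 + (2*t^8 - 6*t^7 + 7*t^6 - 6*t^5 + 5*t^4 - 2*t^3) * h22 + (- 2*t^8 + 7*t^7 - 9*t^6 + 8*t^5 - 7*t^4 + 3*t^3) * h23 + (t^6 - 2*t^5 + t^4) * h24 + (- t^7 + t^6 + t^4 - t^3) * h25 + (- t^6 + 2*t^5 - t^4) * h26 + (t^7 - t^6 - t^4 + t^3) * h27 + (- t^5 + t^4) * h28 + (t^7 - t^6 - t^5 + t^3) * h29 + (t^7 - 2*t^6 + 2*t^3 - t^2) * h30 + (2*t^7 - 3*t^6 + t^5 - 2*t^4 + 3*t^3 - t^2) * h31 + (2*t^7 - 4*t^6 + 2*t^5 - 2*t^4 + 4*t^3 - 2*t^2) * h32 + (3*t^7 - 5*t^6 + 2*t^5 - 3*t^4 + 5*t^3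 - 2*t^2) * h33 + (- t^8 + 2*t^7 - t^6 + t^5 - 2*t^4 + t^3) * h34 + (t^8 - 2*t^7 + t^6 - t^5 + 2*t^4 - t^3) * h35 + (t^8 - t^7 - t^5 + t^4) * h36 + (- t^8 + t^7 + t^5 - t^4) * h37 + (2*t^8 - 3*t^7 + t^6 - 2*t^5 + 3*t^4 - t^3) * h38 + (- 2*t^8 + 4*t^7 - 2*t^6 + 2*t^5 - 4*t^4 + 2*t^3) * h39 + (- 2*t^8 + 3*t^7 - t^6 + 2*t^5 - 3*t^4 + t^3) * h40 + (2*t^8 - 4*t^7 + 2*t^6 - 2*t^5 + 4*t^4 - 2*t^3) * h41 + (- t^7 + t^6 + t^4 - t^3) * h42 + (t^7 - t^6 - t^4 + t^3) * h43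
  have e32 : (t^4*(t-1)) * (x32 - x33) = 0 := by
    linear_combination (- t^4 + t^3) * h1 + (- t^3 + t^2) * h3 + (- t^4 + t^2) * h4 + (- t^5 + t^3) * h5 + (- t^6 + t^4) * h6 + (- t^6 + t^5 + t^3 - t^2) * h7 + (t^6 - 2*t^5 + t^4 - t^3 + t^2) * h8 + (t^6 - t^5 + t^4 - t^3) * h9 + (- t^5 + t^4 + t^2 - t) * h10 + (t^6 - 3*t^5 + 3*t^4 - 2*t^3 + 2*t^2 - t) * h11 + (t^6 - 4*t^5 + 5*t^4 - 4*t^3 + 4*t^2 - 2*t) * h12 + (2*t^6 - 6*t^5 + 7*t^4 - 6*t^3 + 5*t^2 - 2*t) * h13 + (2*t^6 - 7*t^5 + 9*t^4 - 8*t^3 + 7*t^2 - 3*t) * h14 + (3*t^6 - 9*t^5 + 11*t^4 - 10*t^3 + 8*t^2 - 3*t) * h15 + (- t^7 + 4*t^6 - 5*t^5 + 4*t^4 - 4*t^3 + 2*t^2) * h16 + (t^7 - 4*t^6 + 5*t^5 - 4*t^4 + 4*t^3 - 2*t^2) * h17 + (t^7 - 3*t^6 + 3*t^5 - 2*t^4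 + 2*t^3 - t^2) * h18 + (- t^7 + 3*t^6 - 3*t^5 + 2*t^4 - 2*t^3 + t^2) * h19 + (2*t^7 - 6*t^6 + 7*t^5 - 6*t^4 + 5*t^3 - 2*t^2) * h20 + (- 2*t^7 + 7*t^6 - 9*t^5 + 8*t^4 - 7*t^3 + 3*t^2) * h21 + (- 2*t^7 + 6*t^6 - 7*t^5 + 6*t^4 - 5*t^3 + 2*t^2) * h22 + (2*t^7 - 7*t^6 + 9*t^5 - 8*t^4 + 7*t^3 - 3*t^2) * h23 + (- t^5 + 2*t^4 - t^3) * h24 + (t^6 - t^5 - t^3 + t^2) * h25 + (t^5 - 2*t^4 + t^3) * h26 + (- t^6 + t^5 + t^3 - t^2) * h27 + (t^4 - t^3) * h28 + (- t^6 + t^5 + t^4 - t^2) * h29 + (- t^6 + 2*t^5 - 2*t^2 + t) * h30 + (- 2*t^6 + 3*t^5 + t^3 - 3*t^2 + t) * h31 + (- 2*t^6 + 4*t^5 - 2*t^4 + 2*t^3 - 4*t^2 + 2*t) * h32 + (- 3*t^6 + 5*t^5 - 2*t^4 + 3*t^3 - 5*t^2 + 2*t) * h33 + (t^7 - 2*t^6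 + t^5 - t^4 + 2*t^3 - t^2) * h34 + (- t^7 + 2*t^6 - t^5 + t^4 - 2*t^3 + t^2) * h35 + (- t^7 + t^6 + t^4 - t^3) * h36 + (t^7 - t^6 - t^4 + t^3) * h37 + (- 2*t^7 + 3*t^6 - t^5 + 2*t^4 - 3*t^3 + t^2) * h38 + (2*t^7 - 4*t^6 + 2*t^5 - 2*t^4 + 4*t^3 - 2*t^2) * h39 + (2*t^7 - 3*t^6 + t^5 - 2*t^4 + 3*t^3 - t^2) * h40 + (- 2*t^7 + 4*t^6 - 2*t^5 + 2*t^4 - 4*t^3 + 2*t^2) * h41 + (t^6 - t^5 - t^3 + t^2) * h42 + (- t^6 + t^5 + t^3 - t^2) * h43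
  have e33 : (t^4*(t-1)) * (x33 - x34) = 0 := by
    linear_combination (t^5 - t^4) * h1 + (t^4 - t^3) * h3 + (t^5 - t^3) * h4 + (t^6 - t^4) * h5 + (t^7 - t^5) * h6 + (t^7 - t^6 - t^4 + t^3) * h7 + (- t^7 + 2*t^6 - t^5 + t^4 - t^3) * h8 + (- t^7 + t^6 - t^5 + t^4) * h9 + (t^6 - t^5 - t^3 + t^2) * h10 + (- t^7 + 3*t^6 - 3*t^5 + 2*t^4 - 2*t^3 + t^2) * h11 + (- t^7 + 4*t^6 - 5*t^5 + 4*t^4 - 4*t^3 + 2*t^2) * h12 + (- 2*t^7 + 6*t^6 - 7*t^5 + 6*t^4 - 5*t^3 + 2*t^2) * h13 + (- 2*t^7 + 7*t^6 - 9*t^5 + 8*t^4 - 7*t^3 + 3*t^2) * h14 + (- 3*t^7 + 9*t^6 - 11*t^5 + 10*t^4 - 8*t^3 + 3*t^2) * h15 + (t^8 - 4*t^7 + 5*t^6 - 4*t^5 + 4*t^4 - 2*t^3) * h16 + (- t^8 + 4*t^7 - 5*t^6 + 4*t^5 - 4*t^4 + 2*t^3) * h17 + (- t^8 + 3*t^7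 - 3*t^6 + 2*t^5 - 2*t^4 + t^3) * h18 + (t^8 - 3*t^7 + 3*t^6 - 2*t^5 + 2*t^4 - t^3) * h19 + (- 2*t^8 + 6*t^7 - 7*t^6 + 6*t^5 - 5*t^4 + 2*t^3) * h20 + (2*t^8 - 7*t^7 + 9*t^6 - 8*t^5 + 7*t^4 - 3*t^3) * h21 + (2*t^8 - 6*t^7 + 7*t^6 - 6*t^5 + 5*t^4 - 2*t^3) * h22 + (- 2*t^8 + 7*t^7 - 9*t^6 + 8*t^5 - 7*t^4 + 3*t^3) * h23 + (t^6 - 2*t^5 + t^4) * h24 + (- t^7 + t^6 + t^4 - t^3) * h25 + (- t^6 + 2*t^5 - t^4) * h26 + (t^7 - t^6 - t^4 + t^3) * h27 + (- t^5 + t^4) * h28 + (t^7 - t^6 - t^5 + t^3) * h29 + (t^7 - 2*t^6 + 2*t^3 - t^2) * h30 + (2*t^7 - 3*t^6 - t^4 + 3*t^3 - t^2) * h31 + (2*t^7 - 4*t^6 + t^5 - t^4 + 4*t^3 - 2*t^2) * h32 + (3*t^7 - 5*t^6 + 2*t^5 - 3*t^4 + 5*t^3 - 2*t^2) * h33 +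 (- t^8 + 2*t^7 - t^6 + t^5 - 2*t^4 + t^3) * h34 + (t^8 - 2*t^7 + t^6 - t^5 + 2*t^4 - t^3) * h35 + (t^8 - t^7 - t^5 + t^4) * h36 + (- t^8 + t^7 + t^5 - t^4) * h37 + (2*t^8 - 3*t^7 + t^6 - 2*t^5 + 3*t^4 - t^3) * h38 + (- 2*t^8 + 4*t^7 - 2*t^6 + 2*t^5 - 4*t^4 + 2*t^3) * h39 + (- 2*t^8 + 3*t^7 - t^6 + 2*t^5 - 3*t^4 + t^3) * h40 + (2*t^8 - 4*t^7 + 2*t^6 - 2*t^5 + 4*t^4 - 2*t^3) * h41 + (- t^7 + t^6 + t^4 - t^3) * h42 + (t^7 - t^6 - t^4 + t^3) * h43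
  have e34 : (t^4*(t-1)) * (x34 - x35) = 0 := by
    linear_combination (- t^4 + t^3) * h1 + (- t^3 + t^2) * h3 + (- t^4 + t^2) * h4 + (- t^5 + t^3) * h5 + (- t^6 + t^4) * h6 + (- t^6 + t^5 + t^3 - t^2) * h7 + (t^6 - 2*t^5 + t^4 - t^3 + t^2) * h8 + (t^6 - t^5 + t^4 - t^3) * h9 + (- t^5 + t^4 + t^2 - t) * h10 + (t^6 - 3*t^5 + 3*t^4 - 2*t^3 + 2*t^2 - t) * h11 + (t^6 - 4*t^5 + 5*t^4 - 4*t^3 + 4*t^2 - 2*t) * h12 + (2*t^6 - 6*t^5 + 7*t^4 - 6*t^3 + 5*t^2 - 2*t) * h13 + (2*t^6 - 7*t^5 + 9*t^4 - 8*t^3 + 7*t^2 - 3*t) * h14 + (3*t^6 - 9*t^5 + 11*t^4 - 10*t^3 + 8*t^2 - 3*t) * h15 + (- t^7 + 4*t^6 - 5*t^5 + 4*t^4 - 4*t^3 + 2*t^2) * h16 + (t^7 - 4*t^6 + 5*t^5 - 4*t^4 + 4*t^3 - 2*t^2) * h17 + (t^7 - 3*t^6 + 3*t^5 - 2*t^4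 + 2*t^3 - t^2) * h18 + (- t^7 + 3*t^6 - 3*t^5 + 2*t^4 - 2*t^3 + t^2) * h19 + (2*t^7 - 6*t^6 + 7*t^5 - 6*t^4 + 5*t^3 - 2*t^2) * h20 + (- 2*t^7 + 7*t^6 - 9*t^5 + 8*t^4 - 7*t^3 + 3*t^2) * h21 + (- 2*t^7 + 6*t^6 - 7*t^5 + 6*t^4 - 5*t^3 + 2*t^2) * h22 + (2*t^7 - 7*t^6 + 9*t^5 - 8*t^4 + 7*t^3 - 3*t^2) * h23 + (- t^5 + 2*t^4 - t^3) * h24 + (t^6 - t^5 - t^3 + t^2) * h25 + (t^5 - 2*t^4 + t^3) * h26 + (- t^6 + t^5 + t^3 - t^2) * h27 + (t^4 - t^3) * h28 + (- t^6 + t^5 + t^4 - t^2) * h29 + (- t^6 + 2*t^5 - 2*t^2 + t) * h30 + (- 2*t^6 + 3*t^5 + t^3 - 3*t^2 + t) * h31 + (- 2*t^6 + 4*t^5 - t^4 + t^3 - 4*t^2 + 2*t) * h32 + (- 3*t^6 + 5*t^5 - t^4 + 2*t^3 - 5*t^2 + 2*t) * h33 + (t^7 - 2*t^6 + t^5 -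 t^4 + 2*t^3 - t^2) * h34 + (- t^7 + 2*t^6 - t^5 + t^4 - 2*t^3 + t^2) * h35 + (- t^7 + t^6 + t^4 - t^3) * h36 + (t^7 - t^6 - t^4 + t^3) * h37 + (- 2*t^7 + 3*t^6 - t^5 + 2*t^4 - 3*t^3 + t^2) * h38 + (2*t^7 - 4*t^6 + 2*t^5 - 2*t^4 + 4*t^3 - 2*t^2) * h39 + (2*t^7 - 3*t^6 + t^5 - 2*t^4 + 3*t^3 - t^2) * h40 + (- 2*t^7 + 4*t^6 - 2*t^5 + 2*t^4 - 4*t^3 + 2*t^2) * h41 + (t^6 - t^5 - t^3 + t^2) * h42 + (- t^6 + t^5 + t^3 - t^2) * h43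
  have e35 : (t^4*(t-1)) * (x35 - x36) = 0 := by
    linear_combination (- t^4 + 3*t^3 - 2*t^2) * h1 + (- t^3 + 3*t^2 - 2*t) * h3 + (- t^4 + 2*t^3 + t^2 - 2*t) * h4 + (- t^5 + 2*t^4 + t^3 - 2*t^2) * h5 + (- t^6 + 2*t^5 + t^4 - 2*t^3) * h6 + (- t^6 + 3*t^5 - 2*t^4 + t^3 - 3*t^2 + 2*t) * h7 + (t^6 - 4*t^5 + 5*t^4 - 3*t^3 + 3*t^2 - 2*t) * h8 + (t^6 - 3*t^5 + 3*t^4 - 3*t^3 + 2*t^2) * h9 + (- t^5 + 3*t^4 - 2*t^3 + t^2 - 3*t + 2) * h10 + (t^6 - 5*t^5 + 9*t^4 - 8*t^3 + 6*t^2 - 5*t + 2) * h11 + (t^6 - 6*t^5 + 13*t^4 - 14*t^3 + 12*t^2 - 10*t + 4) * h12 + (2*t^6 - 10*t^5 + 19*t^4 - 20*t^3 + 17*t^2 - 12*t + 4) * h13 + (2*t^6 - 11*t^5 + 23*t^4 - 26*t^3 + 23*t^2 - 17*t + 6) * h14 + (3*t^6 - 15*t^5 + 29*t^4 - 32*t^3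 + 28*t^2 - 19*t + 6) * h15 + (- t^7 + 6*t^6 - 13*t^5 + 14*t^4 - 12*t^3 + 10*t^2 - 4*t) * h16 + (t^7 - 6*t^6 + 13*t^5 - 14*t^4 + 12*t^3 - 10*t^2 + 4*t) * h17 + (t^7 - 5*t^6 + 9*t^5 - 8*t^4 + 6*t^3 - 5*t^2 + 2*t) * h18 + (- t^7 + 5*t^6 - 9*t^5 + 8*t^4 - 6*t^3 + 5*t^2 - 2*t) * h19 + (2*t^7 - 10*t^6 + 19*t^5 - 20*t^4 + 17*t^3 - 12*t^2 + 4*t) * h20 + (- 2*t^7 + 11*t^6 - 23*t^5 + 26*t^4 - 23*t^3 + 17*t^2 - 6*t) * h21 + (- 2*t^7 + 10*t^6 - 19*t^5 + 20*t^4 - 17*t^3 + 12*t^2 - 4*t) * h22 + (2*t^7 - 11*t^6 + 23*t^5 - 26*t^4 + 23*t^3 - 17*t^2 + 6*t) * h23 + (- t^5 + 4*t^4 - 5*t^3 + 2*t^2) * h24 + (t^6 - 3*t^5 + 2*t^4 - t^3 + 3*t^2 - 2*t) * h25 + (t^5 - 4*t^4 + 5*t^3 - 2*t^2) * h26 + (-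 t^6 + 3*t^5 - 2*t^4 + t^3 - 3*t^2 + 2*t) * h27 + (t^4 - 3*t^3 + 2*t^2) * h28 + (- t^6 + 3*t^5 - t^4 - 2*t^3 - t^2 + 2*t) * h29 + (- t^6 + 4*t^5 - 4*t^4 - 2*t^2 + 5*t - 2) * h30 + (- 2*t^6 + 7*t^5 - 6*t^4 + t^3 - 5*t^2 + 7*t - 2) * h31 + (- 2*t^6 + 8*t^5 - 9*t^4 + 3*t^3 - 6*t^2 + 10*t - 4) * h32 + (- 3*t^6 + 11*t^5 - 11*t^4 + 4*t^3 - 9*t^2 + 12*t - 4) * h33 + (t^7 - 4*t^6 + 4*t^5 + 2*t^3 - 5*t^2 + 2*t) * h34 + (- t^7 + 4*t^6 - 4*t^5 + t^4 - 3*t^3 + 5*t^2 - 2*t) * h35 + (- t^7 + 3*t^6 - t^5 - t^4 - 2*t^3 + 2*t^2) * h36 + (t^7 - 3*t^6 + t^5 + t^4 + 2*t^3 - 2*t^2) * h37 + (- 2*t^7 + 7*t^6 - 6*t^5 + 2*t^4 - 6*t^3 + 7*t^2 - 2*t) * h38 + (2*t^7 - 8*t^6 + 9*t^5 - 3*t^4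 + 6*t^3 - 10*t^2 + 4*t) * h39 + (2*t^7 - 7*t^6 + 6*t^5 - 2*t^4 + 6*t^3 - 7*t^2 + 2*t) * h40 + (- 2*t^7 + 8*t^6 - 9*t^5 + 3*t^4 - 6*t^3 + 10*t^2 - 4*t) * h41 + (t^6 - 3*t^5 + 2*t^4 - t^3 + 3*t^2 - 2*t) * h42 + (- t^6 + 3*t^5 - 2*t^4 + t^3 - 3*t^2 + 2*t) * h43
  have e36 : (t^4*(t-1)) * (x36 - x37) = 0 := by
    linear_combination (- t^3 + t^2) * h1 + (- t^2 + t) * h3 + (- t^3 + t) * h4 + (- t^4 + t^2) * h5 + (- t^5 + t^3) * h6 + (- t^5 + t^4 + t^2 - t) * h7 + (t^5 - 2*t^4 + t^3 - t^2 + t) * h8 + (t^5 - t^4 + t^3 - t^2) * h9 + (- t^4 + t^3 + t - 1) * h10 + (t^5 - 3*t^4 + 3*t^3 - 2*t^2 + 2*t - 1) * h11 + (t^5 - 4*t^4 + 5*t^3 - 4*t^2 + 4*t - 2) * h12 + (2*t^5 - 6*t^4 + 7*t^3 - 6*t^2 + 5*t - 2) * h13 + (2*t^5 - 7*t^4 +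 9*t^3 - 8*t^2 + 7*t - 3) * h14 + (3*t^5 - 9*t^4 + 11*t^3 - 10*t^2 + 8*t - 3) * h15 + (- t^6 + 4*t^5 - 5*t^4 + 4*t^3 - 4*t^2 + 2*t) * h16 + (t^6 - 4*t^5 + 5*t^4 - 4*t^3 + 4*t^2 - 2*t) * h17 + (t^6 - 3*t^5 + 3*t^4 - 2*t^3 + 2*t^2 - t) * h18 + (- t^6 + 3*t^5 - 3*t^4 + 2*t^3 - 2*t^2 + t) * h19 + (2*t^6 - 6*t^5 + 7*t^4 - 6*t^3 + 5*t^2 - 2*t) * h20 + (- 2*t^6 + 7*t^5 - 9*t^4 + 8*t^3 - 7*t^2 + 3*t) * h21 + (- 2*t^6 + 6*t^5 - 7*t^4 + 6*t^3 - 5*t^2 + 2*t) * h22 + (2*t^6 - 7*t^5 + 9*t^4 - 8*t^3 + 7*t^2 - 3*t) * h23 + (- t^4 + 2*t^3 - t^2) * h24 + (t^5 - t^4 - t^2 + t) * h25 + (t^4 - 2*t^3 + t^2) * h26 + (- t^5 + t^4 + t^2 - t) * h27 + (t^3 - t^2) * h28 + (- t^5 + t^4 + t^3 - t) * h29 + (-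 t^5 + 2*t^4 - 2*t + 1) * h30 + (- 2*t^5 + 3*t^4 + t^2 - 3*t + 1) * h31 + (- 2*t^5 + 4*t^4 - t^3 + t^2 - 4*t + 2) * h32 + (- 3*t^5 + 5*t^4 - t^3 + 2*t^2 - 5*t + 2) * h33 + (t^6 - 2*t^5 + 2*t^2 - t) * h34 + (- t^6 + 2*t^5 - t^4 + t^3 - 2*t^2 + t) * h35 + (- t^6 + t^5 + t^4 - t^2) * h36 + (t^6 - t^5 - t^3 + t^2) * h37 + (- 2*t^6 + 3*t^5 + t^3 - 3*t^2 + t) * h38 + (2*t^6 - 4*t^5 + t^4 - t^3 + 4*t^2 - 2*t) * h39 + (2*t^6 - 3*t^5 - t^3 + 3*t^2 - t) * h40 + (- 2*t^6 + 4*t^5 - t^4 + t^3 - 4*t^2 + 2*t) * h41 + (t^5 - t^4 - t^2 + t) * h42 + (- t^5 + t^4 + t^2 - t) * h43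
  have e37 : (t^4*(t-1)) * (x37 - x38) = 0 := by
    linear_combination (- 2*t^5 + 6*t^4 - 5*t^3 + t^2) * h1 + (- 2*t^4 + 6*t^3 - 5*t^2 + t) * h3 + (- 2*t^5 + 4*t^4 + t^3 - 4*t^2 + t) * h4 + (- 2*t^6 + 4*t^5 + t^4 - 4*t^3 + t^2) * h5 + (- 2*t^7 + 4*t^6 + t^5 - 4*t^4 + t^3) * h6 + (- 2*t^7 + 6*t^6 - 5*t^5 + 3*t^4 - 6*t^3 + 5*t^2 - t) * h7 + (2*t^7 - 8*t^6 + 11*t^5 - 8*t^4 + 7*t^3 - 5*t^2 + t) * h8 + (2*t^7 - 6*t^6 + 7*t^5 - 7*t^4 + 5*t^3 - t^2) * h9 + (- 2*t^6 + 6*t^5 - 5*t^4 + 3*t^3 - 6*t^2 + 5*t - 1) * h10 + (2*t^7 - 10*t^6 + 19*t^5 - 19*t^4 + 15*t^3 - 12*t^2 + 6*t - 1) * h11 + (2*t^7 - 12*t^6 + 27*t^5 - 32*t^4 + 29*t^3 - 24*t^2 + 12*t - 2) * h12 + (4*t^7 - 20*t^6 + 40*t^5 - 46*t^4 + 41*t^3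 - 30*t^2 + 13*t - 2) * h13 + (4*t^7 - 22*t^6 + 48*t^5 - 59*t^4 + 55*t^3 - 42*t^2 + 19*t - 3) * h14 + (6*t^7 - 30*t^6 + 61*t^5 - 73*t^4 + 67*t^3 - 48*t^2 + 20*t - 3) * h15 + (- 2*t^8 + 12*t^7 - 27*t^6 + 32*t^5 - 29*t^4 + 24*t^3 - 12*t^2 + 2*t) * h16 + (2*t^8 - 12*t^7 + 27*t^6 - 32*t^5 + 29*t^4 - 24*t^3 + 12*t^2 - 2*t) * h17 + (2*t^8 - 10*t^7 + 19*t^6 - 19*t^5 + 15*t^4 - 12*t^3 + 6*t^2 - t) * h18 + (- 2*t^8 + 10*t^7 - 19*t^6 + 19*t^5 - 15*t^4 + 12*t^3 - 6*t^2 + t) * h19 + (4*t^8 - 20*t^7 + 40*t^6 - 46*t^5 + 41*t^4 - 30*t^3 + 13*t^2 - 2*t) * h20 + (- 4*t^8 + 22*t^7 - 48*t^6 + 59*t^5 - 55*t^4 + 42*t^3 - 19*t^2 + 3*t) * h21 + (- 4*t^8 + 20*t^7 - 40*t^6 + 46*t^5 - 41*t^4 + 30*t^3 - 13*t^2 + 2*t)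 * h22 + (4*t^8 - 22*t^7 + 48*t^6 - 59*t^5 + 55*t^4 - 42*t^3 + 19*t^2 - 3*t) * h23 + (- 2*t^6 + 8*t^5 - 11*t^4 + 6*t^3 - t^2) * h24 + (2*t^7 - 6*t^6 + 5*t^5 - 3*t^4 + 6*t^3 - 5*t^2 + t) * h25 + (2*t^6 - 8*t^5 + 11*t^4 - 6*t^3 + t^2) * h26 + (- 2*t^7 + 6*t^6 - 5*t^5 + 3*t^4 - 6*t^3 + 5*t^2 - t) * h27 + (2*t^5 - 6*t^4 + 5*t^3 - t^2) * h28 + (- 2*t^7 + 6*t^6 - 3*t^5 - 3*t^4 - t^3 + 4*t^2 - t) * h29 + (- 2*t^7 + 8*t^6 - 9*t^5 + 2*t^4 - 4*t^3 + 10*t^2 - 6*t + 1) * h30 + (- 4*t^7 + 14*t^6 - 14*t^5 + 5*t^4 - 10*t^3 + 15*t^2 - 7*t + 1) * h31 + (- 4*t^7 + 16*t^6 - 20*t^5 + 10*t^4 - 13*t^3 + 21*t^2 - 12*t + 2) * h32 + (- 6*t^7 + 22*t^6 - 25*t^5 + 13*t^4 - 19*t^3 + 26*t^2 - 13*t + 2)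 * h33 + (2*t^8 - 8*t^7 + 10*t^6 - 4*t^5 + 5*t^4 - 10*t^3 + 6*t^2 - t) * h34 + (- 2*t^8 + 8*t^7 - 10*t^6 + 4*t^5 - 5*t^4 + 10*t^3 - 6*t^2 + t) * h35 + (- 2*t^8 + 6*t^7 - 4*t^6 - 4*t^4 + 5*t^3 - t^2) * h36 + (2*t^8 - 6*t^7 + 4*t^6 + 3*t^4 - 4*t^3 + t^2) * h37 + (- 4*t^8 + 14*t^7 - 15*t^6 + 8*t^5 - 13*t^4 + 16*t^3 - 7*t^2 + t) * h38 + (4*t^8 - 16*t^7 + 21*t^6 - 12*t^5 + 14*t^4 - 21*t^3 + 12*t^2 - 2*t) * h39 + (4*t^8 - 14*t^7 + 15*t^6 - 8*t^5 + 13*t^4 - 16*t^3 + 7*t^2 - t) * h40 + (- 4*t^8 + 16*t^7 - 21*t^6 + 12*t^5 - 14*t^4 + 21*t^3 - 12*t^2 + 2*t) * h41 + (2*t^7 - 6*t^6 + 5*t^5 - 3*t^4 + 6*t^3 - 5*t^2 + t) * h42 + (- 2*t^7 + 6*t^6 - 5*t^5 + 3*t^4 - 6*t^3 + 5*t^2 -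 t) * h43
  have e38 : (t^4*(t-1)) * (x38 - x39) = 0 := by
    linear_combination (- t^4 + t^3) * h1 + (- t^3 + t^2) * h3 + (- t^4 + t^2) * h4 + (- t^5 + t^3) * h5 + (- t^6 + t^4) * h6 + (- t^6 + t^5 + t^3 - t^2) * h7 + (t^6 - 2*t^5 + t^4 - t^3 + t^2) * h8 + (t^6 - t^5 + t^4 - t^3) * h9 + (- t^5 + t^4 + t^2 - t) * h10 + (t^6 - 3*t^5 + 3*t^4 - 2*t^3 + 2*t^2 - t) * h11 + (t^6 - 4*t^5 + 5*t^4 - 4*t^3 + 4*t^2 - 2*t) * h12 + (2*t^6 - 6*t^5 + 7*t^4 - 6*t^3 + 5*t^2 - 2*t) * h13 + (2*t^6 - 7*t^5 + 9*t^4 - 8*t^3 + 7*t^2 - 3*t) * h14 + (3*t^6 - 9*t^5 + 11*t^4 - 10*t^3 + 8*t^2 - 3*t) * h15 + (- t^7 + 4*t^6 - 5*t^5 + 4*t^4 - 4*t^3 + 2*t^2) * h16 + (t^7 - 4*t^6 + 5*t^5 - 4*t^4 + 4*t^3 - 2*t^2) * h17 + (t^7 - 3*t^6 + 3*t^5 -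 2*t^4 + 2*t^3 - t^2) * h18 + (- t^7 + 3*t^6 - 3*t^5 + 2*t^4 - 2*t^3 + t^2) * h19 + (2*t^7 - 6*t^6 + 7*t^5 - 6*t^4 + 5*t^3 - 2*t^2) * h20 + (- 2*t^7 + 7*t^6 - 9*t^5 + 8*t^4 - 7*t^3 + 3*t^2) * h21 + (- 2*t^7 + 6*t^6 - 7*t^5 + 6*t^4 - 5*t^3 + 2*t^2) * h22 + (2*t^7 - 7*t^6 + 9*t^5 - 8*t^4 + 7*t^3 - 3*t^2) * h23 + (- t^5 + 2*t^4 - t^3) * h24 + (t^6 - t^5 - t^3 + t^2) * h25 + (t^5 - 2*t^4 + t^3) * h26 + (- t^6 + t^5 + t^3 - t^2) * h27 + (t^4 - t^3) * h28 + (- t^6 + t^5 + t^4 - t^2) * h29 + (- t^6 + 2*t^5 - 2*t^2 + t) * h30 + (- 2*t^6 + 3*t^5 + t^3 - 3*t^2 + t) * h31 + (- 2*t^6 + 4*t^5 - t^4 + t^3 - 4*t^2 + 2*t) * h32 + (- 3*t^6 + 5*t^5 - t^4 + 2*t^3 - 5*t^2 + 2*t) * h33 + (t^7 - 2*t^6 +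 2*t^3 - t^2) * h34 + (- t^7 + 2*t^6 - 2*t^3 + t^2) * h35 + (- t^7 + t^6 + t^5 - t^3) * h36 + (t^7 - t^6 - t^5 + t^3) * h37 + (- 2*t^7 + 3*t^6 + t^4 - 3*t^3 + t^2) * h38 + (2*t^7 - 4*t^6 + t^5 - t^4 + 4*t^3 - 2*t^2) * h39 + (2*t^7 - 3*t^6 - t^4 + 3*t^3 - t^2) * h40 + (- 2*t^7 + 4*t^6 - t^5 + t^4 - 4*t^3 + 2*t^2) * h41 + (t^6 - t^5 - t^3 + t^2) * h42 + (- t^6 + t^5 + t^3 - t^2) * h43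
  have e39 : (t^4*(t-1)) * (x39 - x40) = 0 := by
    linear_combination (t^5 - t^4) * h1 + (t^4 - t^3) * h3 + (t^5 - t^3) * h4 + (t^6 - t^4) * h5 + (t^7 - t^5) * h6 + (t^7 - t^6 - t^4 + t^3) * h7 + (- t^7 + 2*t^6 - t^5 + t^4 - t^3) * h8 + (- t^7 + t^6 - t^5 + t^4) * h9 + (t^6 - t^5 - t^3 + t^2) * h10 + (- t^7 + 3*t^6 - 3*t^5 + 2*t^4 - 2*t^3 + t^2) * h11 + (- t^7 + 4*t^6 - 5*t^5 + 4*t^4 - 4*t^3 + 2*t^2) * h12 + (- 2*t^7 + 6*t^6 - 7*t^5 + 6*t^4 - 5*t^3 + 2*t^2) * h13 + (- 2*t^7 + 7*t^6 - 9*t^5 + 8*t^4 - 7*t^3 + 3*t^2) * h14 + (- 3*t^7 + 9*t^6 - 11*t^5 + 10*t^4 - 8*t^3 + 3*t^2) * h15 + (t^8 - 4*t^7 + 5*t^6 - 4*t^5 + 4*t^4 - 2*t^3) * h16 + (- t^8 + 4*t^7 - 5*t^6 + 4*t^5 - 4*t^4 + 2*t^3) * h17 + (- t^8 + 3*t^7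 - 3*t^6 + 2*t^5 - 2*t^4 + t^3) * h18 + (t^8 - 3*t^7 + 3*t^6 - 2*t^5 + 2*t^4 - t^3) * h19 + (- 2*t^8 + 6*t^7 - 7*t^6 + 6*t^5 - 5*t^4 + 2*t^3) * h20 + (2*t^8 - 7*t^7 + 9*t^6 - 8*t^5 + 7*t^4 - 3*t^3) * h21 + (2*t^8 - 6*t^7 + 7*t^6 - 6*t^5 + 5*t^4 - 2*t^3) * h22 + (- 2*t^8 + 7*t^7 - 9*t^6 + 8*t^5 - 7*t^4 + 3*t^3) * h23 + (t^6 - 2*t^5 + t^4) * h24 + (- t^7 + t^6 + t^4 - t^3) * h25 + (- t^6 + 2*t^5 - t^4) * h26 + (t^7 - t^6 - t^4 + t^3) * h27 + (- t^5 + t^4) * h28 + (t^7 - t^6 - t^5 + t^3) * h29 + (t^7 - 2*t^6 + 2*t^3 - t^2) * h30 + (2*t^7 - 3*t^6 - t^4 + 3*t^3 - t^2) * h31 + (2*t^7 - 4*t^6 + t^5 - t^4 + 4*t^3 - 2*t^2) * h32 + (3*t^7 - 5*t^6 + t^5 - 2*t^4 + 5*t^3 - 2*t^2) * h33 + (- t^8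 + 2*t^7 - t^6 + t^5 - 2*t^4 + t^3) * h34 + (t^8 - 2*t^7 + t^6 - t^5 + 2*t^4 - t^3) * h35 + (t^8 - t^7 - 2*t^5 + 2*t^4) * h36 + (- t^8 + t^7 + 2*t^5 - 2*t^4) * h37 + (2*t^8 - 3*t^7 + t^6 - 3*t^5 + 4*t^4 - t^3) * h38 + (- 2*t^8 + 4*t^7 - 2*t^6 + 3*t^5 - 5*t^4 + 2*t^3) * h39 + (- 2*t^8 + 3*t^7 - t^6 + 3*t^5 - 4*t^4 + t^3) * h40 + (2*t^8 - 4*t^7 + 2*t^6 - 3*t^5 + 5*t^4 - 2*t^3) * h41 + (- t^7 + t^6 + t^4 - t^3) * h42 + (t^7 - t^6 - t^4 + t^3) * h43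
  have e40 : (t^4*(t-1)) * (x40 - x41) = 0 := by
    linear_combination (- t^4 + t^3) * h1 + (- t^3 + t^2) * h3 + (- t^4 + t^2) * h4 + (- t^5 + t^3) * h5 + (- t^6 + t^4) * h6 + (- t^6 + t^5 + t^3 - t^2) * h7 + (t^6 - 2*t^5 + t^4 - t^3 + t^2) * h8 + (t^6 - t^5 + t^4 - t^3) * h9 + (- t^5 + t^4 + t^2 - t) * h10 + (t^6 - 3*t^5 + 3*t^4 - 2*t^3 + 2*t^2 - t) * h11 + (t^6 - 4*t^5 + 5*t^4 - 4*t^3 + 4*t^2 - 2*t) * h12 + (2*t^6 - 6*t^5 + 7*t^4 - 6*t^3 + 5*t^2 - 2*t) * h13 + (2*t^6 - 7*t^5 + 9*t^4 - 8*t^3 + 7*t^2 - 3*t) * h14 + (3*t^6 - 9*t^5 + 11*t^4 - 10*t^3 + 8*t^2 - 3*t) * h15 + (- t^7 + 4*t^6 - 5*t^5 + 4*t^4 - 4*t^3 + 2*t^2) * h16 + (t^7 - 4*t^6 + 5*t^5 - 4*t^4 + 4*t^3 - 2*t^2) * h17 + (t^7 - 3*t^6 + 3*t^5 - 2*t^4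 + 2*t^3 - t^2) * h18 + (- t^7 + 3*t^6 - 3*t^5 + 2*t^4 - 2*t^3 + t^2) * h19 + (2*t^7 - 6*t^6 + 7*t^5 - 6*t^4 + 5*t^3 - 2*t^2) * h20 + (- 2*t^7 + 7*t^6 - 9*t^5 + 8*t^4 - 7*t^3 + 3*t^2) * h21 + (- 2*t^7 + 6*t^6 - 7*t^5 + 6*t^4 - 5*t^3 + 2*t^2) * h22 + (2*t^7 - 7*t^6 + 9*t^5 - 8*t^4 + 7*t^3 - 3*t^2) * h23 + (- t^5 + 2*t^4 - t^3) * h24 + (t^6 - t^5 - t^3 + t^2) * h25 + (t^5 - 2*t^4 + t^3) * h26 + (- t^6 + t^5 + t^3 - t^2) * h27 + (t^4 - t^3) * h28 + (- t^6 + t^5 + t^4 - t^2) * h29 + (- t^6 + 2*t^5 - 2*t^2 + t) * h30 + (- 2*t^6 + 3*t^5 + t^3 - 3*t^2 + t) * h31 + (- 2*t^6 + 4*t^5 - t^4 + t^3 - 4*t^2 + 2*t) * h32 + (- 3*t^6 + 5*t^5 - t^4 + 2*t^3 - 5*t^2 + 2*t) * h33 + (t^7 - 2*t^6 + t^5 -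 t^4 + 2*t^3 - t^2) * h34 + (- t^7 + 2*t^6 - t^5 + t^4 - 2*t^3 + t^2) * h35 + (- t^7 + t^6 + t^4 - t^3) * h36 + (t^7 - t^6 - t^4 + t^3) * h37 + (- 2*t^7 + 3*t^6 + t^4 - 3*t^3 + t^2) * h38 + (2*t^7 - 4*t^6 + t^5 - t^4 + 4*t^3 - 2*t^2) * h39 + (2*t^7 - 3*t^6 - t^4 + 3*t^3 - t^2) * h40 + (- 2*t^7 + 4*t^6 - t^5 + t^4 - 4*t^3 + 2*t^2) * h41 + (t^6 - t^5 - t^3 + t^2) * h42 + (- t^6 + t^5 + t^3 - t^2) * h43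
  have e41 : (t^4*(t-1)) * (x41 - x42) = 0 := by
    linear_combination (- t^5 + 4*t^4 - 5*t^3 + 2*t^2) * h1 + (- t^4 + 4*t^3 - 5*t^2 + 2*t) * h3 + (- t^5 + 3*t^4 - t^3 - 3*t^2 + 2*t) * h4 + (- t^6 + 3*t^5 - t^4 - 3*t^3 + 2*t^2) * h5 + (- t^7 + 3*t^6 - t^5 - 3*t^4 + 2*t^3) * h6 + (- t^7 + 4*t^6 - 5*t^5 + 3*t^4 - 4*t^3 + 5*t^2 - 2*t) * h7 + (t^7 - 5*t^6 + 9*t^5 - 8*t^4 + 6*t^3 - 5*t^2 + 2*t) * h8 + (t^7 - 4*t^6 + 6*t^5 - 6*t^4 + 5*t^3 - 2*t^2) * h9 + (- t^6 + 4*t^5 - 5*t^4 + 3*t^3 - 4*t^2 + 5*t - 2) * h10 + (t^7 - 6*t^6 + 14*t^5 - 17*t^4 + 14*t^3 - 11*t^2 + 7*t - 2) * h11 + (t^7 - 7*t^6 + 19*t^5 - 27*t^4 + 26*t^3 - 22*t^2 + 14*t - 4) * h12 + (2*t^7 - 12*t^6 + 29*t^5 - 39*t^4 + 37*t^3 - 29*t^2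 + 16*t - 4) * h13 + (2*t^7 - 13*t^6 + 34*t^5 - 49*t^4 + 49*t^3 - 40*t^2 + 23*t - 6) * h14 + (3*t^7 - 18*t^6 + 44*t^5 - 61*t^4 + 60*t^3 - 47*t^2 + 25*t - 6) * h15 + (- t^8 + 7*t^7 - 19*t^6 + 27*t^5 - 26*t^4 + 22*t^3 - 14*t^2 + 4*t) * h16 + (t^8 - 7*t^7 + 19*t^6 - 27*t^5 + 26*t^4 - 22*t^3 + 14*t^2 - 4*t) * h17 + (t^8 - 6*t^7 + 14*t^6 - 17*t^5 + 14*t^4 - 11*t^3 + 7*t^2 - 2*t) * h18 + (- t^8 + 6*t^7 - 14*t^6 + 17*t^5 - 14*t^4 + 11*t^3 - 7*t^2 + 2*t) * h19 + (2*t^8 - 12*t^7 + 29*t^6 - 39*t^5 + 37*t^4 - 29*t^3 + 16*t^2 - 4*t) * h20 + (- 2*t^8 + 13*t^7 - 34*t^6 + 49*t^5 - 49*t^4 + 40*t^3 - 23*t^2 + 6*t) * h21 + (- 2*t^8 + 12*t^7 - 29*t^6 + 39*t^5 - 37*t^4 + 29*t^3 - 16*t^2 + 4*t) * h22 + (2*t^8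 - 13*t^7 + 34*t^6 - 49*t^5 + 49*t^4 - 40*t^3 + 23*t^2 - 6*t) * h23 + (- t^6 + 5*t^5 - 9*t^4 + 7*t^3 - 2*t^2) * h24 + (t^7 - 4*t^6 + 5*t^5 - 3*t^4 + 4*t^3 - 5*t^2 + 2*t) * h25 + (t^6 - 5*t^5 + 9*t^4 - 7*t^3 + 2*t^2) * h26 + (- t^7 + 4*t^6 - 5*t^5 + 3*t^4 - 4*t^3 + 5*t^2 - 2*t) * h27 + (t^5 - 4*t^4 + 5*t^3 - 2*t^2) * h28 + (- t^7 + 4*t^6 - 4*t^5 - t^4 + t^3 + 3*t^2 - 2*t) * h29 + (- t^7 + 5*t^6 - 8*t^5 + 4*t^4 - 2*t^3 + 7*t^2 - 7*t + 2) * h30 + (- 2*t^7 + 9*t^6 - 13*t^5 + 7*t^4 - 6*t^3 + 12*t^2 - 9*t + 2) * h31 + (- 2*t^7 + 10*t^6 - 17*t^5 + 12*t^4 - 9*t^3 + 16*t^2 - 14*t + 4) * h32 + (- 3*t^7 + 14*t^6 - 22*t^5 + 15*t^4 - 13*t^3 + 21*t^2 - 16*t + 4) * h33 + (t^8 - 5*t^7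 + 9*t^6 - 7*t^5 + 5*t^4 - 8*t^3 + 7*t^2 - 2*t) * h34 + (- t^8 + 5*t^7 - 9*t^6 + 7*t^5 - 5*t^4 + 8*t^3 - 7*t^2 + 2*t) * h35 + (- t^8 + 4*t^7 - 5*t^6 + 3*t^5 - 4*t^4 + 5*t^3 - 2*t^2) * h36 + (t^8 - 4*t^7 + 5*t^6 - 3*t^5 + 4*t^4 - 5*t^3 + 2*t^2) * h37 + (- 2*t^8 + 9*t^7 - 14*t^6 + 10*t^5 - 9*t^4 + 13*t^3 - 9*t^2 + 2*t) * h38 + (2*t^8 - 10*t^7 + 18*t^6 - 15*t^5 + 12*t^4 - 17*t^3 + 14*t^2 - 4*t) * h39 + (2*t^8 - 9*t^7 + 14*t^6 - 10*t^5 + 10*t^4 - 14*t^3 + 9*t^2 - 2*t) * h40 + (- 2*t^8 + 10*t^7 - 18*t^6 + 15*t^5 - 12*t^4 + 17*t^3 - 14*t^2 + 4*t) * h41 + (t^7 - 4*t^6 + 5*t^5 - 3*t^4 + 4*t^3 - 5*t^2 + 2*t) * h42 + (- t^7 + 4*t^6 - 5*t^5 + 3*t^4 - 4*t^3 + 5*t^2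 - 2*t) * h43
  have e42 : (t^4*(t-1)) * (x42 - x43) = 0 := by
    linear_combination (t^3 - t^2) * h1 + (t^2 - t) * h3 + (t^3 - t) * h4 + (t^4 - t^2) * h5 + (t^5 - t^3) * h6 + (t^5 - t^4 - t^2 + t) * h7 + (- t^5 + 2*t^4 - t^3 + t^2 - t) * h8 + (- t^5 + t^4 - t^3 + t^2) * h9 + (t^4 - t^3 - t + 1) * h10 + (- t^5 + 3*t^4 - 3*t^3 + 2*t^2 - 2*t + 1) * h11 + (- t^5 + 4*t^4 - 5*t^3 + 4*t^2 - 4*t + 2) * h12 + (- 2*t^5 + 6*t^4 - 7*t^3 + 6*t^2 - 5*t + 2) * h13 + (- 2*t^5 + 7*t^4 - 9*t^3 + 8*t^2 - 7*t + 3) * h14 + (- 3*t^5 + 9*t^4 - 11*t^3 + 10*t^2 - 8*t + 3) * h15 + (t^6 - 4*t^5 + 5*t^4 - 4*t^3 + 4*t^2 - 2*t) * h16 + (- t^6 + 4*t^5 - 5*t^4 + 4*t^3 - 4*t^2 + 2*t) * h17 + (- t^6 + 3*t^5 - 3*t^4 + 2*t^3 - 2*t^2 + t) * h18 + (t^6 -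 3*t^5 + 3*t^4 - 2*t^3 + 2*t^2 - t) * h19 + (- 2*t^6 + 6*t^5 - 7*t^4 + 6*t^3 - 5*t^2 + 2*t) * h20 + (2*t^6 - 7*t^5 + 9*t^4 - 8*t^3 + 7*t^2 - 3*t) * h21 + (2*t^6 - 6*t^5 + 7*t^4 - 6*t^3 + 5*t^2 - 2*t) * h22 + (- 2*t^6 + 7*t^5 - 9*t^4 + 8*t^3 - 7*t^2 + 3*t) * h23 + (t^4 - 2*t^3 + t^2) * h24 + (- t^5 + t^4 + t^2 - t) * h25 + (- t^4 + 2*t^3 - t^2) * h26 + (t^5 - t^4 - t^2 + t) * h27 + (- t^3 + t^2) * h28 + (t^5 - t^4 - t^3 + t) * h29 + (t^5 - 2*t^4 + 2*t - 1) * h30 + (2*t^5 - 3*t^4 - t^2 + 3*t - 1) * h31 + (2*t^5 - 4*t^4 + t^3 - t^2 + 4*t - 2) * h32 + (3*t^5 - 5*t^4 + t^3 - 2*t^2 + 5*t - 2) * h33 + (- t^6 + 2*t^5 - t^4 + t^3 - 2*t^2 + t) * h34 + (t^6 - 2*t^5 + t^4 - t^3 + 2*t^2 - t) * h35 + (t^6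 - t^5 - t^3 + t^2) * h36 + (- t^6 + t^5 + t^3 - t^2) * h37 + (2*t^6 - 3*t^5 - t^3 + 3*t^2 - t) * h38 + (- 2*t^6 + 4*t^5 - t^4 + t^3 - 4*t^2 + 2*t) * h39 + (- 2*t^6 + 3*t^5 - t^4 + 2*t^3 - 3*t^2 + t) * h40 + (2*t^6 - 4*t^5 + 2*t^4 - 2*t^3 + 4*t^2 - 2*t) * h41 + (- t^5 + t^4 + t^2 - t) * h42 + (t^5 - t^4 - t^2 + t) * h43
  have e43 : (t^4*(t-1)) * (x43 - x44) = 0 := by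
    linear_combination (t^5 - 5*t^4 + 6*t^3 - 2*t^2) * h1 + (t^4 - 5*t^3 + 6*t^2 - 2*t) * h3 + (t^5 - 4*t^4 + t^3 + 4*t^2 - 2*t) * h4 + (t^6 - 4*t^5 + t^4 + 4*t^3 - 2*t^2) * h5 + (t^7 - 4*t^6 + t^5 + 4*t^4 - 2*t^3) * h6 + (t^7 - 5*t^6 + 6*t^5 - 3*t^4 + 5*t^3 - 6*t^2 + 2*t) * h7 + (- t^7 + 6*t^6 - 11*t^5 + 9*t^4 - 7*t^3 + 6*t^2 - 2*t) * h8 + (- t^7 + 5*t^6 - 7*t^5 + 7*t^4 - 6*t^3 + 2*t^2) * h9 + (t^6 - 5*t^5 + 6*t^4 - 3*t^3 + 5*t^2 - 6*t + 2) * h10 + (- t^7 + 7*t^6 - 17*t^5 + 20*t^4 - 16*t^3 + 13*t^2 - 8*t + 2) * h11 + (- t^7 + 8*t^6 - 23*t^5 + 32*t^4 - 30*t^3 + 26*t^2 - 16*t + 4) * h12 + (- 2*t^7 + 14*t^6 - 35*t^5 + 46*t^4 - 43*t^3 + 34*t^2 - 18*t + 4) * h13 + (- 2*t^7 + 15*t^6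 - 41*t^5 + 58*t^4 - 57*t^3 + 47*t^2 - 26*t + 6) * h14 + (- 3*t^7 + 21*t^6 - 53*t^5 + 72*t^4 - 70*t^3 + 55*t^2 - 28*t + 6) * h15 + (t^8 - 8*t^7 + 23*t^6 - 32*t^5 + 30*t^4 - 26*t^3 + 16*t^2 - 4*t) * h16 + (- t^8 + 8*t^7 - 23*t^6 + 32*t^5 - 30*t^4 + 26*t^3 - 16*t^2 + 4*t) * h17 + (- t^8 + 7*t^7 - 17*t^6 + 20*t^5 - 16*t^4 + 13*t^3 - 8*t^2 + 2*t) * h18 + (t^8 - 7*t^7 + 17*t^6 - 20*t^5 + 16*t^4 - 13*t^3 + 8*t^2 - 2*t) * h19 + (- 2*t^8 + 14*t^7 - 35*t^6 + 46*t^5 - 43*t^4 + 34*t^3 - 18*t^2 + 4*t) * h20 + (2*t^8 - 15*t^7 + 41*t^6 - 58*t^5 + 57*t^4 - 47*t^3 + 26*t^2 - 6*t) * h21 + (2*t^8 - 14*t^7 + 35*t^6 - 46*t^5 + 43*t^4 - 34*t^3 + 18*t^2 - 4*t) * h22 + (- 2*t^8 + 15*t^7 - 41*t^6 + 58*t^5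 - 57*t^4 + 47*t^3 - 26*t^2 + 6*t) * h23 + (t^6 - 6*t^5 + 11*t^4 - 8*t^3 + 2*t^2) * h24 + (- t^7 + 5*t^6 - 6*t^5 + 3*t^4 - 5*t^3 + 6*t^2 - 2*t) * h25 + (- t^6 + 6*t^5 - 11*t^4 + 8*t^3 - 2*t^2) * h26 + (t^7 - 5*t^6 + 6*t^5 - 3*t^4 + 5*t^3 - 6*t^2 + 2*t) * h27 + (- t^5 + 5*t^4 - 6*t^3 + 2*t^2) * h28 + (t^7 - 5*t^6 + 5*t^5 + 2*t^4 - t^3 - 4*t^2 + 2*t) * h29 + (t^7 - 6*t^6 + 10*t^5 - 4*t^4 + 2*t^3 - 9*t^2 + 8*t - 2) * h30 + (2*t^7 - 11*t^6 + 16*t^5 - 7*t^4 + 7*t^3 - 15*t^2 + 10*t - 2) * h31 + (2*t^7 - 12*t^6 + 21*t^5 - 13*t^4 + 10*t^3 - 20*t^2 + 16*t - 4) * h32 + (3*t^7 - 17*t^6 + 27*t^5 - 16*t^4 + 15*t^3 - 26*t^2 + 18*t - 4) * h33 + (- t^8 + 6*t^7 - 11*t^6 + 8*t^5 - 6*t^4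 + 10*t^3 - 8*t^2 + 2*t) * h34 + (t^8 - 6*t^7 + 11*t^6 - 8*t^5 + 6*t^4 - 10*t^3 + 8*t^2 - 2*t) * h35 + (t^8 - 5*t^7 + 6*t^6 - 3*t^5 + 6*t^4 - 7*t^3 + 2*t^2) * h36 + (- t^8 + 5*t^7 - 6*t^6 + 3*t^5 - 6*t^4 + 7*t^3 - 2*t^2) * h37 + (2*t^8 - 11*t^7 + 17*t^6 - 11*t^5 + 12*t^4 - 17*t^3 + 10*t^2 - 2*t) * h38 + (- 2*t^8 + 12*t^7 - 22*t^6 + 17*t^5 - 15*t^4 + 22*t^3 - 16*t^2 + 4*t) * h39 + (- 2*t^8 + 11*t^7 - 17*t^6 + 11*t^5 - 12*t^4 + 17*t^3 - 10*t^2 + 2*t) * h40 + (2*t^8 - 12*t^7 + 22*t^6 - 17*t^5 + 14*t^4 - 21*t^3 + 16*t^2 - 4*t) * h41 + (- t^7 + 5*t^6 - 6*t^5 + 3*t^4 - 5*t^3 + 6*t^2 - 2*t) * h42 + (t^7 - 5*t^6 + 6*t^5 - 2*t^4 + 4*t^3 - 6*t^2 + 2*t) * h43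
  have e44 : (t^4*(t-1)) * (x44 - x45) = 0 := by
    linear_combination (2*t^3 - 2*t^2) * h1 + (t^3 - t^2) * h2 + (2*t^2 - 2*t) * h3 + (t^3 + t^2 - 2*t) * h4 + (t^4 + t^3 - 2*t^2) * h5 + (t^5 + t^4 - 2*t^3) * h6 + (t^5 - t^3 - t^2 + t) * h7 + (- t^5 + t^4 + t^2 - t) * h8 + (- t^5 + t^2) * h9 + (t^4 - t^2 - t + 1) * h10 + (- t^5 + 3*t^4 - 2*t^3 + t^2 - 2*t + 1) * h11 + (- t^5 + 4*t^4 - 4*t^3 + 3*t^2 - 4*t + 2) * h12 + (- 2*t^5 + 6*t^4 - 6*t^3 + 5*t^2 - 5*t + 2) * h13 + (- 2*t^5 + 7*t^4 - 8*t^3 + 7*t^2 - 7*t + 3) * h14 + (- 3*t^5 + 9*t^4 - 10*t^3 + 9*t^2 - 8*t + 3) * h15 + (t^6 - 4*t^5 + 4*t^4 - 3*t^3 + 4*t^2 - 2*t) * h16 + (- t^6 + 4*t^5 - 4*t^4 + 3*t^3 - 4*t^2 + 2*t) * h17 + (- t^6 + 3*t^5 - 2*t^4 + t^3 - 2*t^2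 + t) * h18 + (t^6 - 3*t^5 + 2*t^4 - t^3 + 2*t^2 - t) * h19 + (- 2*t^6 + 6*t^5 - 6*t^4 + 5*t^3 - 5*t^2 + 2*t) * h20 + (2*t^6 - 7*t^5 + 8*t^4 - 7*t^3 + 7*t^2 - 3*t) * h21 + (2*t^6 - 6*t^5 + 6*t^4 - 5*t^3 + 5*t^2 - 2*t) * h22 + (- 2*t^6 + 7*t^5 - 8*t^4 + 7*t^3 - 7*t^2 + 3*t) * h23 + (2*t^4 - 3*t^3 + t^2) * h24 + (- t^5 + t^3 + t^2 - t) * h25 + (- 2*t^4 + 3*t^3 - t^2) * h26 + (t^5 - t^3 - t^2 + t) * h27 + (t^5 - t^4 - t^2 + t) * h29 + (t^5 - 2*t^4 + t^3 - t^2 + 2*t - 1) * h30 + (2*t^5 - 3*t^4 + t^3 - 2*t^2 + 3*t - 1) * h31 + (2*t^5 - 4*t^4 + 2*t^3 - 2*t^2 + 4*t - 2) * h32 + (3*t^5 - 5*t^4 + 2*t^3 - 3*t^2 + 5*t - 2) * h33 + (- t^6 + 2*t^5 - t^4 + t^3 - 2*t^2 + t) * h34 + (t^6 - 2*t^5 +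 t^4 - t^3 + 2*t^2 - t) * h35 + (t^6 - t^5 - t^3 + t^2) * h36 + (- t^6 + t^5 + t^3 - t^2) * h37 + (2*t^6 - 3*t^5 + t^4 - 2*t^3 + 3*t^2 - t) * h38 + (- 2*t^6 + 4*t^5 - 2*t^4 + 2*t^3 - 4*t^2 + 2*t) * h39 + (- 2*t^6 + 3*t^5 - t^4 + 2*t^3 - 3*t^2 + t) * h40 + (2*t^6 - 4*t^5 + 2*t^4 - 2*t^3 + 4*t^2 - 2*t) * h41 + (- t^5 + t^3 + t^2 - t) * h42 + (t^5 - t^4 - t^2 + t) * h43 + (t^4 - t^3) * h44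
  refine ⟨?_, ?_, ?_, ?_, ?_, ?_, ?_, ?_, ?_, ?_, ?_, ?_, ?_, ?_, ?_, ?_, ?_, ?_, ?_, ?_, ?_, ?_, ?_, ?_, ?_, ?_, ?_, ?_, ?_, ?_, ?_, ?_, ?_, ?_, ?_, ?_, ?_, ?_, ?_, ?_, ?_, ?_, ?_, ?_⟩
  · exact sub_eq_zero.mp ((mul_eq_zero.mp e1).resolve_left hD)
  · exact sub_eq_zero.mp ((mul_eq_zero.mp e2).resolve_left hD)
  · exact sub_eq_zero.mp ((mul_eq_zero.mp e3).resolve_left hD)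
  · exact sub_eq_zero.mp ((mul_eq_zero.mp e4).resolve_left hD)
  · exact sub_eq_zero.mp ((mul_eq_zero.mp e5).resolve_left hD)
  · exact sub_eq_zero.mp ((mul_eq_zero.mp e6).resolve_left hD)
  · exact sub_eq_zero.mp ((mul_eq_zero.mp e7).resolve_left hD)
  · exact sub_eq_zero.mp ((mul_eq_zero.mp e8).resolve_left hD)
  · exact sub_eq_zero.mp ((mul_eq_zero.mp e9).resolve_left hD)
  · exact sub_eq_zero.mp ((mul_eq_zero.mp e10).resolve_left hD)
  · exact sub_eq_zero.mp ((mul_eq_zero.mp e11).resolve_left hD)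
  · exact sub_eq_zero.mp ((mul_eq_zero.mp e12).resolve_left hD)
  · exact sub_eq_zero.mp ((mul_eq_zero.mp e13).resolve_left hD)
  · exact sub_eq_zero.mp ((mul_eq_zero.mp e14).resolve_left hD)
  · exact sub_eq_zero.mp ((mul_eq_zero.mp e15).resolve_left hD)
  · exact sub_eq_zero.mp ((mul_eq_zero.mp e16).resolve_left hD)
  · exact sub_eq_zero.mp ((mul_eq_zero.mp e17).resolve_left hD)
  · exact sub_eq_zero.mp ((mul_eq_zero.mp e18).resolve_left hD)
  · exact sub_eq_zero.mp ((mul_eq_zero.mp e19).resolve_left hD)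
  · exact sub_eq_zero.mp ((mul_eq_zero.mp e20).resolve_left hD)
  · exact sub_eq_zero.mp ((mul_eq_zero.mp e21).resolve_left hD)
  · exact sub_eq_zero.mp ((mul_eq_zero.mp e22).resolve_left hD)
  · exact sub_eq_zero.mp ((mul_eq_zero.mp e23).resolve_left hD)
  · exact sub_eq_zero.mp ((mul_eq_zero.mp e24).resolve_left hD)
  · exact sub_eq_zero.mp ((mul_eq_zero.mp e25).resolve_left hD)
  · exact sub_eq_zero.mp ((mul_eq_zero.mp e26).resolve_left hD)
  · exact sub_eq_zero.mp ((mul_eq_zero.mp e27).resolve_left hD)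
  · exact sub_eq_zero.mp ((mul_eq_zero.mp e28).resolve_left hD)
  · exact sub_eq_zero.mp ((mul_eq_zero.mp e29).resolve_left hD)
  · exact sub_eq_zero.mp ((mul_eq_zero.mp e30).resolve_left hD)
  · exact sub_eq_zero.mp ((mul_eq_zero.mp e31).resolve_left hD)
  · exact sub_eq_zero.mp ((mul_eq_zero.mp e32).resolve_left hD)
  · exact sub_eq_zero.mp ((mul_eq_zero.mp e33).resolve_left hD)
  · exact sub_eq_zero.mp ((mul_eq_zero.mp e34).resolve_left hD)
  · exact sub_eq_zero.mp ((mul_eq_zero.mp e35).resolve_left hD)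
  · exact sub_eq_zero.mp ((mul_eq_zero.mp e36).resolve_left hD)
  · exact sub_eq_zero.mp ((mul_eq_zero.mp e37).resolve_left hD)
  · exact sub_eq_zero.mp ((mul_eq_zero.mp e38).resolve_left hD)
  · exact sub_eq_zero.mp ((mul_eq_zero.mp e39).resolve_left hD)
  · exact sub_eq_zero.mp ((mul_eq_zero.mp e40).resolve_left hD)
  · exact sub_eq_zero.mp ((mul_eq_zero.mp e41).resolve_left hD)
  · exact sub_eq_zero.mp ((mul_eq_zero.mp e42).resolve_left hD)
  · exact sub_eq_zero.mp ((mul_eq_zero.mp e43).resolve_left hD)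
  · exact sub_eq_zero.mp ((mul_eq_zero.mp e44).resolve_left hD)
end

section
/- Let n ≥ 1 and let t ∈ ℤ/nℤ be such that both t and t − 1 are units. Then the number of solutions over ℤ/nℤ of the Alexander quandle coloring system of the connected sum of two Hopf links equals the number of solutions over ℤ/nℤ of the Alexander quandle coloring system of the Allen–Swenberg link. Hence the Alexander quandle counting invariant cannot distinguish these two links. -/
/-- The Alexander quandle coloring system of the connected sum of two Hopf links over
a commutative ring `R` with parameter `t`, as a predicate on `x : Fin 4 → R`. -/
def HopfSumSystem {R : Type*} [CommRing R] (t : R) (x : Fin 4 → R) : Prop :=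
  x 1 = t * x 2 + (1 - t) * x 0 ∧
    x 2 = t * x 1 + (1 - t) * x 3 ∧
    x 0 = t * x 0 + (1 - t) * x 2 ∧
    x 3 = t * x 3 + (1 - t) * x 2

/-- The Alexander quandle coloring system of the Allen–Swenberg link over a
commutative ring `R` with parameter `t`, as a predicate on `x : Fin 45 → R`
(`x i` is the color of arc `xᵢ₊₁`). -/
def AllenSwenbergSystem {R : Type*} [CommRing R] (t : R) (x : Fin 45 → R) : Prop :=
  x 1 = t * x 0 + (1 - t) * x 25 ∧
    x 25 = t * x 26 + (1 - t) * x 0 ∧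
    x 0 = t * x 1 + (1 - t) * x 2 ∧
    x 2 = t * x 3 + (1 - t) * x 0 ∧
    x 3 = t * x 4 + (1 - t) * x 2 ∧
    x 4 = t * x 5 + (1 - t) * x 6 ∧
    x 7 = t * x 6 + (1 - t) * x 5 ∧
    x 28 = t * x 27 + (1 - t) * x 5 ∧
    x 2 = t * x 5 + (1 - t) * x 27 ∧
    x 8 = t * x 7 + (1 - t) * x 6 ∧
    x 6 = t * x 9 + (1 - t) * x 8 ∧
    x 10 = t * x 8 + (1 - t) * x 9 ∧
    x 9 = t * x 11 + (1 - t) * x 10 ∧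
    x 12 = t * x 10 + (1 - t) * x 11 ∧
    x 11 = t * x 13 + (1 - t) * x 12 ∧
    x 18 = t * x 14 + (1 - t) * x 13 ∧
    x 21 = t * x 14 + (1 - t) * x 12 ∧
    x 19 = t * x 15 + (1 - t) * x 13 ∧
    x 20 = t * x 15 + (1 - t) * x 12 ∧
    x 13 = t * x 16 + (1 - t) * x 20 ∧
    x 12 = t * x 17 + (1 - t) * x 20 ∧
    x 19 = t * x 16 + (1 - t) * x 21 ∧
    x 18 = t * x 17 + (1 - t) * x 21 ∧
    x 20 = t * x 22 + (1 - t) * x 19 ∧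
    x 21 = t * x 23 + (1 - t) * x 19 ∧
    x 25 = t * x 22 + (1 - t) * x 18 ∧
    x 24 = t * x 23 + (1 - t) * x 18 ∧
    x 29 = t * x 27 + (1 - t) * x 28 ∧
    x 28 = t * x 30 + (1 - t) * x 29 ∧
    x 31 = t * x 29 + (1 - t) * x 30 ∧
    x 30 = t * x 32 + (1 - t) * x 31 ∧
    x 33 = t * x 31 + (1 - t) * x 32 ∧
    x 32 = t * x 34 + (1 - t) * x 33 ∧
    x 39 = t * x 35 + (1 - t) * x 34 ∧
    x 37 = t * x 35 + (1 - t) * x 33 ∧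
    x 40 = t * x 36 + (1 - t) * x 34 ∧
    x 38 = t * x 36 + (1 - t) * x 33 ∧
    x 34 = t * x 41 + (1 - t) * x 38 ∧
    x 33 = t * x 42 + (1 - t) * x 38 ∧
    x 40 = t * x 41 + (1 - t) * x 37 ∧
    x 39 = t * x 42 + (1 - t) * x 37 ∧
    x 24 = t * x 43 + (1 - t) * x 39 ∧
    x 38 = t * x 43 + (1 - t) * x 40 ∧
    x 26 = t * x 44 + (1 - t) * x 39 ∧
    x 37 = t * x 44 + (1 - t) * x 40

set_option maxHeartbeats 1600000 in
/-- Over `ℤ/nℤ` with `n ≥ 1` and both `t` and `t − 1` units, the Alexander quandle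
counting invariants of the connected sum of two Hopf links and of the Allen–Swenberg
link coincide; hence the Alexander quandle cannot distinguish these two links. -/
theorem hopf_sum_allen_swenberg_same_count (n : ℕ) (hn : 1 ≤ n) (t : ZMod n)
    (ht : IsUnit t) (ht1 : IsUnit (t - 1)) :
    {x : Fin 4 → ZMod n | HopfSumSystem t x}.ncard =
      {x : Fin 45 → ZMod n | AllenSwenbergSystem t x}.ncard := by
  have hu : IsUnit (t ^ 4 * (t - 1)) := (ht.pow 4).mul ht1
  have hA : {x : Fin 4 → ZMod n | HopfSumSystem t x} =
      Set.range (fun c : ZMod n => fun _ : Fin 4 => c) := by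
    ext x
    constructor
    · rintro ⟨h1, h2, h3, h4⟩
      have e0 : x 0 = x 2 := ht1.mul_left_cancel (by linear_combination -h3)
      have e3 : x 3 = x 2 := ht1.mul_left_cancel (by linear_combination -h4)
      have e1 : x 1 = x 2 := by linear_combination h1 + (1 - t) * e0
      refine ⟨x 2, funext fun i => ?_⟩
      fin_cases i
      exacts [e0.symm, e1.symm, rfl, e3.symm]
    · rintro ⟨c, rfl⟩
      exact ⟨by ring, by ring, by ring, by ring⟩
  have hB : {x : Fin 45 → ZMod n | AllenSwenbergSystem t x} =
      Set.range (fun c : ZMod n => fun _ : Fin 45 => c) := by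
    ext x
    constructor
    · rintro ⟨h0, h1, h2, h3, h4, h5, h6, h7, h8, h9, h10, h11, h12, h13, h14, h15, h16,
        h17, h18, h19, h20, h21, h22, h23, h24, h25, h26, h27, h28, h29, h30, h31, h32,
        h33, h34, h35, h36, h37, h38, h39, h40, h41, h42, h43, h44⟩
      have e44 : x (44 : Fin 45) = x 44 := rfl
      have e37 : x (37 : Fin 45) = x 44 := hu.mul_left_cancel (by linear_combination ((1)*t^5 + (-4)*t^4 + (6)*t^3 + (-3)*t^2) * h0 + ((1)*t^3 + (-1)*t^2) * h1 + ((1)*t^4 + (-4)*t^3 + (6)*t^2 + (-3)*t) * h2 + ((1)*t^5 + (-3)*t^4 + (1)*t^3 + (4)*t^2 + (-3)*t) * h3 + ((1)*t^6 + (-3)*t^5 + (1)*t^4 + (4)*t^3 + (-3)*t^2) * h4 + ((1)*t^7 + (-3)*t^6 + (1)*t^5 + (4)*t^4 + (-3)*t^3) * h5 + ((1)*t^7 + (-4)*t^6 + (5)*t^5 + (-2)*t^4 + (3)*t^3 + (-5)*t^2 + (2)*t) * h6 + ((-1)*t^7 + (5)*t^6 + (-9)*t^5 + (7)*t^4 +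 (-5)*t^3 + (5)*t^2 + (-2)*t) * h7 + ((-1)*t^7 + (4)*t^6 + (-6)*t^5 + (5)*t^4 + (-4)*t^3 + (2)*t^2) * h8 + ((1)*t^6 + (-4)*t^5 + (5)*t^4 + (-2)*t^3 + (3)*t^2 + (-5)*t + (2)) * h9 + ((-1)*t^7 + (6)*t^6 + (-14)*t^5 + (17)*t^4 + (-13)*t^3 + (10)*t^2 + (-7)*t + (2)) * h10 + ((-1)*t^7 + (7)*t^6 + (-19)*t^5 + (27)*t^4 + (-25)*t^3 + (21)*t^2 + (-14)*t + (4)) * h11 + ((-2)*t^7 + (12)*t^6 + (-29)*t^5 + (39)*t^4 + (-36)*t^3 + (28)*t^2 + (-16)*t + (4)) * h12 + ((-2)*t^7 + (13)*t^6 + (-34)*t^5 + (49)*t^4 + (-48)*t^3 + (39)*t^2 + (-23)*t + (6)) * h13 + ((-3)*t^7 + (18)*t^6 + (-44)*t^5 + (61)*t^4 + (-59)*t^3 + (46)*t^2 + (-25)*t + (6)) * h14 + ((1)*t^8 + (-7)*t^7 + (19)*t^6 + (-27)*t^5 + (25)*t^4 + (-21)*t^3 + (14)*t^2 + (-4)*t)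 * h15 + ((-1)*t^8 + (7)*t^7 + (-19)*t^6 + (27)*t^5 + (-25)*t^4 + (21)*t^3 + (-14)*t^2 + (4)*t) * h16 + ((-1)*t^8 + (6)*t^7 + (-14)*t^6 + (17)*t^5 + (-13)*t^4 + (10)*t^3 + (-7)*t^2 + (2)*t) * h17 + ((1)*t^8 + (-6)*t^7 + (14)*t^6 + (-17)*t^5 + (13)*t^4 + (-10)*t^3 + (7)*t^2 + (-2)*t) * h18 + ((-2)*t^8 + (12)*t^7 + (-29)*t^6 + (39)*t^5 + (-36)*t^4 + (28)*t^3 + (-16)*t^2 + (4)*t) * h19 + ((2)*t^8 + (-13)*t^7 + (34)*t^6 + (-49)*t^5 + (48)*t^4 + (-39)*t^3 + (23)*t^2 + (-6)*t) * h20 + ((2)*t^8 + (-12)*t^7 + (29)*t^6 + (-39)*t^5 + (36)*t^4 + (-28)*t^3 + (16)*t^2 + (-4)*t) * h21 + ((-2)*t^8 + (13)*t^7 + (-34)*t^6 + (49)*t^5 + (-48)*t^4 + (39)*t^3 + (-23)*t^2 + (6)*t) * h22 + ((1)*t^6 + (-5)*t^5 + (10)*t^4 + (-8)*t^3 + (2)*t^2)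 * h23 + ((-1)*t^7 + (4)*t^6 + (-5)*t^5 + (2)*t^4 + (-3)*t^3 + (5)*t^2 + (-2)*t) * h24 + ((-1)*t^6 + (5)*t^5 + (-10)*t^4 + (8)*t^3 + (-2)*t^2) * h25 + ((1)*t^7 + (-4)*t^6 + (5)*t^5 + (-2)*t^4 + (3)*t^3 + (-5)*t^2 + (2)*t) * h26 + ((-1)*t^5 + (4)*t^4 + (-4)*t^3 + (1)*t^2) * h27 + ((1)*t^7 + (-4)*t^6 + (4)*t^5 + (1)*t^4 + (-4)*t^2 + (2)*t) * h28 + ((1)*t^7 + (-5)*t^6 + (8)*t^5 + (-4)*t^4 + (3)*t^3 + (-8)*t^2 + (7)*t + (-2)) * h29 + ((2)*t^7 + (-9)*t^6 + (13)*t^5 + (-7)*t^4 + (7)*t^3 + (-13)*t^2 + (9)*t + (-2)) * h30 + ((2)*t^7 + (-10)*t^6 + (17)*t^5 + (-12)*t^4 + (10)*t^3 + (-17)*t^2 + (14)*t + (-4)) * h31 + ((3)*t^7 + (-14)*t^6 + (22)*t^5 + (-15)*t^4 + (14)*t^3 + (-22)*t^2 + (16)*t + (-4)) * h32 + ((-1)*t^8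 + (5)*t^7 + (-9)*t^6 + (7)*t^5 + (-6)*t^4 + (9)*t^3 + (-7)*t^2 + (2)*t) * h33 + ((1)*t^8 + (-5)*t^7 + (9)*t^6 + (-7)*t^5 + (6)*t^4 + (-9)*t^3 + (7)*t^2 + (-2)*t) * h34 + ((1)*t^8 + (-4)*t^7 + (5)*t^6 + (-3)*t^5 + (5)*t^4 + (-6)*t^3 + (2)*t^2) * h35 + ((-1)*t^8 + (4)*t^7 + (-5)*t^6 + (3)*t^5 + (-5)*t^4 + (6)*t^3 + (-2)*t^2) * h36 + ((2)*t^8 + (-9)*t^7 + (14)*t^6 + (-10)*t^5 + (10)*t^4 + (-14)*t^3 + (9)*t^2 + (-2)*t) * h37 + ((-2)*t^8 + (10)*t^7 + (-18)*t^6 + (15)*t^5 + (-13)*t^4 + (18)*t^3 + (-14)*t^2 + (4)*t) * h38 + ((-2)*t^8 + (9)*t^7 + (-14)*t^6 + (10)*t^5 + (-10)*t^4 + (14)*t^3 + (-9)*t^2 + (2)*t) * h39 + ((2)*t^8 + (-10)*t^7 + (18)*t^6 + (-15)*t^5 + (13)*t^4 + (-18)*t^3 + (14)*t^2 + (-4)*t)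 * h40 + ((-1)*t^7 + (4)*t^6 + (-5)*t^5 + (2)*t^4 + (-3)*t^3 + (5)*t^2 + (-2)*t) * h41 + ((1)*t^7 + (-4)*t^6 + (5)*t^5 + (-2)*t^4 + (3)*t^3 + (-5)*t^2 + (2)*t) * h42 + ((1)*t^4 + (-1)*t^3) * h43)
      have e34 : x (34 : Fin 45) = x 44 := hu.mul_left_cancel (by linear_combination ((-1)*t^5 + (1)*t^4 + (3)*t^3 + (-3)*t^2) * h0 + ((1)*t^3 + (-1)*t^2) * h1 + ((-1)*t^4 + (1)*t^3 + (3)*t^2 + (-3)*t) * h2 + ((-1)*t^5 + (3)*t^3 + (1)*t^2 + (-3)*t) * h3 + ((-1)*t^6 + (3)*t^4 + (1)*t^3 + (-3)*t^2) * h4 + ((-1)*t^7 + (3)*t^5 + (1)*t^4 + (-3)*t^3) * h5 + ((-1)*t^7 + (1)*t^6 + (2)*t^5 + (-2)*t^3 + (-2)*t^2 + (2)*t) * h6 + ((1)*t^7 + (-2)*t^6 + (-1)*t^5 + (2)*t^4 + (2)*t^2 + (-2)*t) * h7 + ((1)*t^7 + (-1)*t^6 + (-1)*t^5 + (-1)*t^3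 + (2)*t^2) * h8 + ((-1)*t^6 + (1)*t^5 + (2)*t^4 + (-2)*t^2 + (-2)*t + (2)) * h9 + ((1)*t^7 + (-3)*t^6 + (1)*t^5 + (4)*t^4 + (-3)*t^3 + (2)*t^2 + (-4)*t + (2)) * h10 + ((1)*t^7 + (-4)*t^6 + (3)*t^5 + (4)*t^4 + (-5)*t^3 + (5)*t^2 + (-8)*t + (4)) * h11 + ((2)*t^7 + (-6)*t^6 + (3)*t^5 + (6)*t^4 + (-8)*t^3 + (9)*t^2 + (-10)*t + (4)) * h12 + ((2)*t^7 + (-7)*t^6 + (5)*t^5 + (6)*t^4 + (-10)*t^3 + (12)*t^2 + (-14)*t + (6)) * h13 + ((3)*t^7 + (-9)*t^6 + (5)*t^5 + (8)*t^4 + (-13)*t^3 + (16)*t^2 + (-16)*t + (6)) * h14 + ((-1)*t^8 + (4)*t^7 + (-3)*t^6 + (-4)*t^5 + (5)*t^4 + (-5)*t^3 + (8)*t^2 + (-4)*t) * h15 + ((1)*t^8 + (-4)*t^7 + (3)*t^6 + (4)*t^5 + (-5)*t^4 + (5)*t^3 + (-8)*t^2 + (4)*t) * h16 + ((1)*t^8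 + (-3)*t^7 + (1)*t^6 + (4)*t^5 + (-3)*t^4 + (2)*t^3 + (-4)*t^2 + (2)*t) * h17 + ((-1)*t^8 + (3)*t^7 + (-1)*t^6 + (-4)*t^5 + (3)*t^4 + (-2)*t^3 + (4)*t^2 + (-2)*t) * h18 + ((2)*t^8 + (-6)*t^7 + (3)*t^6 + (6)*t^5 + (-8)*t^4 + (9)*t^3 + (-10)*t^2 + (4)*t) * h19 + ((-2)*t^8 + (7)*t^7 + (-5)*t^6 + (-6)*t^5 + (10)*t^4 + (-12)*t^3 + (14)*t^2 + (-6)*t) * h20 + ((-2)*t^8 + (6)*t^7 + (-3)*t^6 + (-6)*t^5 + (8)*t^4 + (-9)*t^3 + (10)*t^2 + (-4)*t) * h21 + ((2)*t^8 + (-7)*t^7 + (5)*t^6 + (6)*t^5 + (-10)*t^4 + (12)*t^3 + (-14)*t^2 + (6)*t) * h22 + ((-1)*t^6 + (2)*t^5 + (2)*t^4 + (-5)*t^3 + (2)*t^2) * h23 + ((1)*t^7 + (-1)*t^6 + (-2)*t^5 + (2)*t^3 + (2)*t^2 + (-2)*t) * h24 + ((1)*t^6 + (-2)*t^5 + (-2)*t^4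 + (5)*t^3 + (-2)*t^2) * h25 + ((-1)*t^7 + (1)*t^6 + (2)*t^5 + (-2)*t^3 + (-2)*t^2 + (2)*t) * h26 + ((1)*t^5 + (-1)*t^4 + (-1)*t^3 + (1)*t^2) * h27 + ((-1)*t^7 + (1)*t^6 + (3)*t^5 + (-2)*t^4 + (-2)*t^3 + (-1)*t^2 + (2)*t) * h28 + ((-1)*t^7 + (2)*t^6 + (2)*t^5 + (-4)*t^4 + (-1)*t^3 + (4)*t + (-2)) * h29 + ((-2)*t^7 + (3)*t^6 + (4)*t^5 + (-5)*t^4 + (-2)*t^3 + (-2)*t^2 + (6)*t + (-2)) * h30 + ((-2)*t^7 + (4)*t^6 + (3)*t^5 + (-7)*t^4 + (-1)*t^3 + (-1)*t^2 + (8)*t + (-4)) * h31 + ((-3)*t^7 + (5)*t^6 + (5)*t^5 + (-8)*t^4 + (-2)*t^3 + (-3)*t^2 + (10)*t + (-4)) * h32 + ((1)*t^8 + (-2)*t^7 + (-2)*t^6 + (5)*t^5 + (-1)*t^4 + (1)*t^3 + (-4)*t^2 + (2)*t) * h33 + ((-1)*t^8 + (2)*t^7 + (2)*t^6 + (-5)*t^5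 + (1)*t^4 + (-1)*t^3 + (4)*t^2 + (-2)*t) * h34 + ((-1)*t^8 + (1)*t^7 + (3)*t^6 + (-3)*t^5 + (1)*t^4 + (-3)*t^3 + (2)*t^2) * h35 + ((1)*t^8 + (-1)*t^7 + (-3)*t^6 + (3)*t^5 + (-1)*t^4 + (3)*t^3 + (-2)*t^2) * h36 + ((-2)*t^8 + (3)*t^7 + (4)*t^6 + (-5)*t^5 + (-1)*t^4 + (-3)*t^3 + (6)*t^2 + (-2)*t) * h37 + ((2)*t^8 + (-4)*t^7 + (-3)*t^6 + (8)*t^5 + (-1)*t^4 + (2)*t^3 + (-8)*t^2 + (4)*t) * h38 + ((2)*t^8 + (-3)*t^7 + (-4)*t^6 + (5)*t^5 + (1)*t^4 + (3)*t^3 + (-6)*t^2 + (2)*t) * h39 + ((-2)*t^8 + (4)*t^7 + (3)*t^6 + (-8)*t^5 + (1)*t^4 + (-2)*t^3 + (8)*t^2 + (-4)*t) * h40 + ((1)*t^7 + (-1)*t^6 + (-2)*t^5 + (2)*t^3 + (2)*t^2 + (-2)*t) * h41 + ((-1)*t^7 + (1)*t^6 + (2)*t^5 + (-2)*t^3 +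 (-2)*t^2 + (2)*t) * h42 + ((1)*t^4 + (-1)*t^3) * h43)
      have e0 : x (0 : Fin 45) = x 44 := hu.mul_left_cancel (by linear_combination ((2)*t^5 + (-7)*t^4 + (7)*t^3 + (-3)*t^2) * h0 + ((1)*t^3 + (-1)*t^2) * h1 + ((2)*t^4 + (-7)*t^3 + (7)*t^2 + (-3)*t) * h2 + ((2)*t^5 + (-4)*t^4 + (-1)*t^3 + (5)*t^2 + (-3)*t) * h3 + ((2)*t^6 + (-4)*t^5 + (-1)*t^4 + (5)*t^3 + (-3)*t^2) * h4 + ((2)*t^7 + (-4)*t^6 + (-1)*t^5 + (5)*t^4 + (-3)*t^3) * h5 + ((2)*t^7 + (-6)*t^6 + (5)*t^5 + (-3)*t^4 + (6)*t^3 + (-6)*t^2 + (2)*t) * h6 + ((-2)*t^7 + (8)*t^6 + (-11)*t^5 + (9)*t^4 + (-8)*t^3 + (6)*t^2 + (-2)*t) * h7 + ((-2)*t^7 + (6)*t^6 + (-7)*t^5 + (7)*t^4 + (-5)*t^3 + (2)*t^2) * h8 + ((2)*t^6 + (-6)*t^5 + (5)*t^4 + (-3)*t^3 + (6)*t^2 +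 (-6)*t + (2)) * h9 + ((-2)*t^7 + (10)*t^6 + (-20)*t^5 + (22)*t^4 + (-18)*t^3 + (14)*t^2 + (-8)*t + (2)) * h10 + ((-2)*t^7 + (12)*t^6 + (-28)*t^5 + (36)*t^4 + (-35)*t^3 + (29)*t^2 + (-16)*t + (4)) * h11 + ((-4)*t^7 + (20)*t^6 + (-42)*t^5 + (53)*t^4 + (-50)*t^3 + (37)*t^2 + (-18)*t + (4)) * h12 + ((-4)*t^7 + (22)*t^6 + (-50)*t^5 + (67)*t^4 + (-67)*t^3 + (52)*t^2 + (-26)*t + (6)) * h13 + ((-6)*t^7 + (30)*t^6 + (-64)*t^5 + (84)*t^4 + (-82)*t^3 + (60)*t^2 + (-28)*t + (6)) * h14 + ((2)*t^8 + (-12)*t^7 + (28)*t^6 + (-36)*t^5 + (35)*t^4 + (-29)*t^3 + (16)*t^2 + (-4)*t) * h15 + ((-2)*t^8 + (12)*t^7 + (-28)*t^6 + (36)*t^5 + (-35)*t^4 + (29)*t^3 + (-16)*t^2 + (4)*t) * h16 + ((-2)*t^8 + (10)*t^7 + (-20)*t^6 + (22)*t^5 + (-18)*t^4 + (14)*t^3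 + (-8)*t^2 + (2)*t) * h17 + ((2)*t^8 + (-10)*t^7 + (20)*t^6 + (-22)*t^5 + (18)*t^4 + (-14)*t^3 + (8)*t^2 + (-2)*t) * h18 + ((-4)*t^8 + (20)*t^7 + (-42)*t^6 + (53)*t^5 + (-50)*t^4 + (37)*t^3 + (-18)*t^2 + (4)*t) * h19 + ((4)*t^8 + (-22)*t^7 + (50)*t^6 + (-67)*t^5 + (67)*t^4 + (-52)*t^3 + (26)*t^2 + (-6)*t) * h20 + ((4)*t^8 + (-20)*t^7 + (42)*t^6 + (-53)*t^5 + (50)*t^4 + (-37)*t^3 + (18)*t^2 + (-4)*t) * h21 + ((-4)*t^8 + (22)*t^7 + (-50)*t^6 + (67)*t^5 + (-67)*t^4 + (52)*t^3 + (-26)*t^2 + (6)*t) * h22 + ((2)*t^6 + (-9)*t^5 + (14)*t^4 + (-9)*t^3 + (2)*t^2) * h23 + ((-2)*t^7 + (6)*t^6 + (-5)*t^5 + (3)*t^4 + (-6)*t^3 + (6)*t^2 + (-2)*t) * h24 + ((-2)*t^6 + (9)*t^5 + (-14)*t^4 + (9)*t^3 + (-2)*t^2) * h25 + ((2)*t^7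 + (-6)*t^6 + (5)*t^5 + (-3)*t^4 + (6)*t^3 + (-6)*t^2 + (2)*t) * h26 + ((-2)*t^5 + (5)*t^4 + (-4)*t^3 + (1)*t^2) * h27 + ((2)*t^7 + (-6)*t^6 + (4)*t^5 + (3)*t^3 + (-5)*t^2 + (2)*t) * h28 + ((2)*t^7 + (-8)*t^6 + (10)*t^5 + (-6)*t^4 + (8)*t^3 + (-12)*t^2 + (8)*t + (-2)) * h29 + ((4)*t^7 + (-14)*t^6 + (16)*t^5 + (-11)*t^4 + (15)*t^3 + (-18)*t^2 + (10)*t + (-2)) * h30 + ((4)*t^7 + (-16)*t^6 + (22)*t^5 + (-17)*t^4 + (20)*t^3 + (-25)*t^2 + (16)*t + (-4)) * h31 + ((6)*t^7 + (-22)*t^6 + (28)*t^5 + (-22)*t^4 + (27)*t^3 + (-31)*t^2 + (18)*t + (-4)) * h32 + ((-2)*t^8 + (8)*t^7 + (-12)*t^6 + (11)*t^5 + (-12)*t^4 + (13)*t^3 + (-8)*t^2 + (2)*t) * h33 + ((2)*t^8 + (-8)*t^7 + (12)*t^6 + (-11)*t^5 + (12)*t^4 + (-13)*t^3 + (8)*t^2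 + (-2)*t) * h34 + ((2)*t^8 + (-6)*t^7 + (6)*t^6 + (-6)*t^5 + (9)*t^4 + (-7)*t^3 + (2)*t^2) * h35 + ((-2)*t^8 + (6)*t^7 + (-6)*t^6 + (6)*t^5 + (-9)*t^4 + (7)*t^3 + (-2)*t^2) * h36 + ((4)*t^8 + (-14)*t^7 + (17)*t^6 + (-14)*t^5 + (18)*t^4 + (-19)*t^3 + (10)*t^2 + (-2)*t) * h37 + ((-4)*t^8 + (16)*t^7 + (-23)*t^6 + (20)*t^5 + (-23)*t^4 + (26)*t^3 + (-16)*t^2 + (4)*t) * h38 + ((-4)*t^8 + (14)*t^7 + (-17)*t^6 + (14)*t^5 + (-18)*t^4 + (19)*t^3 + (-10)*t^2 + (2)*t) * h39 + ((4)*t^8 + (-16)*t^7 + (23)*t^6 + (-20)*t^5 + (23)*t^4 + (-26)*t^3 + (16)*t^2 + (-4)*t) * h40 + ((-2)*t^7 + (6)*t^6 + (-5)*t^5 + (3)*t^4 + (-6)*t^3 + (6)*t^2 + (-2)*t) * h41 + ((2)*t^7 + (-6)*t^6 + (5)*t^5 + (-3)*t^4 + (6)*t^3 + (-6)*t^2 +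 (2)*t) * h42 + ((1)*t^4 + (-1)*t^3) * h43)
      have e14 : x (14 : Fin 45) = x 44 := hu.mul_left_cancel (by linear_combination ((5)*t^5 + (-13)*t^4 + (13)*t^3 + (-5)*t^2) * h0 + ((1)*t^3 + (-1)*t^2) * h1 + ((5)*t^4 + (-13)*t^3 + (13)*t^2 + (-5)*t) * h2 + ((5)*t^5 + (-8)*t^4 + (-1)*t^3 + (9)*t^2 + (-5)*t) * h3 + ((5)*t^6 + (-8)*t^5 + (-1)*t^4 + (9)*t^3 + (-5)*t^2) * h4 + ((5)*t^7 + (-8)*t^6 + (-1)*t^5 + (9)*t^4 + (-5)*t^3) * h5 + ((5)*t^7 + (-13)*t^6 + (15)*t^5 + (-16)*t^4 + (19)*t^3 + (-14)*t^2 + (4)*t) * h6 + ((-5)*t^7 + (18)*t^6 + (-28)*t^5 + (28)*t^4 + (-23)*t^3 + (14)*t^2 + (-4)*t) * h7 + ((-5)*t^7 + (13)*t^6 + (-17)*t^5 + (16)*t^4 + (-11)*t^3 + (4)*t^2) * h8 + ((5)*t^6 + (-13)*t^5 + (15)*t^4 + (-16)*t^3 + (19)*t^2 + (-14)*t + (4))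 * h9 + ((-5)*t^7 + (26)*t^6 + (-54)*t^5 + (64)*t^4 + (-54)*t^3 + (37)*t^2 + (-18)*t + (4)) * h10 + ((-5)*t^7 + (31)*t^6 + (-75)*t^5 + (105)*t^4 + (-103)*t^3 + (75)*t^2 + (-36)*t + (8)) * h11 + ((-10)*t^7 + (52)*t^6 + (-116)*t^5 + (154)*t^4 + (-141)*t^3 + (93)*t^2 + (-40)*t + (8)) * h12 + ((-10)*t^7 + (57)*t^6 + (-137)*t^5 + (195)*t^4 + (-190)*t^3 + (131)*t^2 + (-58)*t + (12)) * h13 + ((-15)*t^7 + (78)*t^6 + (-178)*t^5 + (244)*t^4 + (-228)*t^3 + (149)*t^2 + (-62)*t + (12)) * h14 + ((5)*t^8 + (-31)*t^7 + (77)*t^6 + (-109)*t^5 + (105)*t^4 + (-75)*t^3 + (36)*t^2 + (-8)*t) * h15 + ((-5)*t^8 + (31)*t^7 + (-77)*t^6 + (109)*t^5 + (-106)*t^4 + (76)*t^3 + (-36)*t^2 + (8)*t) * h16 + ((-5)*t^8 + (26)*t^7 + (-56)*t^6 + (69)*t^5 + (-58)*t^4 + (38)*t^3 + (-18)*t^2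 + (4)*t) * h17 + ((5)*t^8 + (-26)*t^7 + (56)*t^6 + (-69)*t^5 + (58)*t^4 + (-38)*t^3 + (18)*t^2 + (-4)*t) * h18 + ((-10)*t^8 + (52)*t^7 + (-117)*t^6 + (157)*t^5 + (-144)*t^4 + (94)*t^3 + (-40)*t^2 + (8)*t) * h19 + ((10)*t^8 + (-57)*t^7 + (138)*t^6 + (-197)*t^5 + (191)*t^4 + (-131)*t^3 + (58)*t^2 + (-12)*t) * h20 + ((10)*t^8 + (-52)*t^7 + (117)*t^6 + (-157)*t^5 + (144)*t^4 + (-94)*t^3 + (40)*t^2 + (-8)*t) * h21 + ((-10)*t^8 + (57)*t^7 + (-138)*t^6 + (197)*t^5 + (-191)*t^4 + (131)*t^3 + (-58)*t^2 + (12)*t) * h22 + ((5)*t^6 + (-18)*t^5 + (26)*t^4 + (-17)*t^3 + (4)*t^2) * h23 + ((-5)*t^7 + (16)*t^6 + (-22)*t^5 + (22)*t^4 + (-21)*t^3 + (14)*t^2 + (-4)*t) * h24 + ((-5)*t^6 + (18)*t^5 + (-26)*t^4 + (17)*t^3 + (-4)*t^2) * h25 + ((5)*t^7 + (-16)*t^6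 + (22)*t^5 + (-22)*t^4 + (21)*t^3 + (-14)*t^2 + (4)*t) * h26 + ((-2)*t^5 + (5)*t^4 + (-4)*t^3 + (1)*t^2) * h27 + ((5)*t^7 + (-16)*t^6 + (21)*t^5 + (-19)*t^4 + (18)*t^3 + (-13)*t^2 + (4)*t) * h28 + ((5)*t^7 + (-21)*t^6 + (37)*t^5 + (-42)*t^4 + (42)*t^3 + (-35)*t^2 + (18)*t + (-4)) * h29 + ((10)*t^7 + (-37)*t^6 + (60)*t^5 + (-66)*t^4 + (64)*t^3 + (-49)*t^2 + (22)*t + (-4)) * h30 + ((10)*t^7 + (-42)*t^6 + (76)*t^5 + (-89)*t^4 + (88)*t^3 + (-71)*t^2 + (36)*t + (-8)) * h31 + ((15)*t^7 + (-58)*t^6 + (99)*t^5 + (-113)*t^4 + (110)*t^3 + (-85)*t^2 + (40)*t + (-8)) * h32 + ((-5)*t^8 + (21)*t^7 + (-39)*t^6 + (47)*t^5 + (-46)*t^4 + (36)*t^3 + (-18)*t^2 + (4)*t) * h33 + ((5)*t^8 + (-21)*t^7 + (39)*t^6 + (-47)*t^5 + (46)*t^4 + (-36)*t^3 + (18)*t^2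 + (-4)*t) * h34 + ((5)*t^8 + (-16)*t^7 + (23)*t^6 + (-25)*t^5 + (24)*t^4 + (-15)*t^3 + (4)*t^2) * h35 + ((-5)*t^8 + (16)*t^7 + (-23)*t^6 + (25)*t^5 + (-24)*t^4 + (15)*t^3 + (-4)*t^2) * h36 + ((10)*t^8 + (-37)*t^7 + (61)*t^6 + (-69)*t^5 + (67)*t^4 + (-50)*t^3 + (22)*t^2 + (-4)*t) * h37 + ((-10)*t^8 + (42)*t^7 + (-77)*t^6 + (92)*t^5 + (-91)*t^4 + (72)*t^3 + (-36)*t^2 + (8)*t) * h38 + ((-10)*t^8 + (37)*t^7 + (-61)*t^6 + (69)*t^5 + (-67)*t^4 + (50)*t^3 + (-22)*t^2 + (4)*t) * h39 + ((10)*t^8 + (-42)*t^7 + (77)*t^6 + (-92)*t^5 + (91)*t^4 + (-72)*t^3 + (36)*t^2 + (-8)*t) * h40 + ((-5)*t^7 + (16)*t^6 + (-22)*t^5 + (22)*t^4 + (-21)*t^3 + (14)*t^2 + (-4)*t) * h41 + ((5)*t^7 + (-16)*t^6 + (22)*t^5 + (-22)*t^4 + (21)*t^3 + (-14)*t^2 +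 (4)*t) * h42 + ((1)*t^4 + (-1)*t^3) * h43)
      have e40 : x (40 : Fin 45) = x 44 := ht1.mul_left_cancel (by linear_combination h44 - e37 + t * e44)
      have e36 : x (36 : Fin 45) = x 44 := ht.mul_left_cancel (by linear_combination -h35 + e40 - (1 - t) * e34)
      have e41 : x (41 : Fin 45) = x 44 := ht.mul_left_cancel (by linear_combination -h39 + e40 - (1 - t) * e37)
      have e38 : x (38 : Fin 45) = x 44 := ht1.mul_left_cancel (by linear_combination h37 - e34 + t * e41)
      have e43 : x (43 : Fin 45) = x 44 := ht.mul_left_cancel (by linear_combination -h42 + e38 - (1 - t) * e40)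
      have e33 : x (33 : Fin 45) = x 44 := ht1.mul_left_cancel (by linear_combination h36 - e38 + t * e36)
      have e42 : x (42 : Fin 45) = x 44 := ht.mul_left_cancel (by linear_combination -h38 + e33 - (1 - t) * e38)
      have e39 : x (39 : Fin 45) = x 44 := by linear_combination h40 + t * e42 + (1 - t) * e37
      have e24 : x (24 : Fin 45) = x 44 := by linear_combination h41 + t * e43 + (1 - t) * e39
      have e26 : x (26 : Fin 45) = x 44 := by linear_combination h43 + t * e44 + (1 - t) * e39
      have e25 : x (25 : Fin 45) = x 44 := by linear_combination h1 + t * e26 + (1 - t) * e0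
      have e32 : x (32 : Fin 45) = x 44 := by linear_combination h32 + t * e34 + (1 - t) * e33
      have e35 : x (35 : Fin 45) = x 44 := ht.mul_left_cancel (by linear_combination -h33 + e39 - (1 - t) * e34)
      have e1 : x (1 : Fin 45) = x 44 := by linear_combination h0 + t * e0 + (1 - t) * e25
      have e2 : x (2 : Fin 45) = x 44 := ht1.mul_left_cancel (by linear_combination h2 - e0 + t * e1)
      have e3 : x (3 : Fin 45) = x 44 := ht.mul_left_cancel (by linear_combination -h3 + e2 - (1 - t) * e0)
      have e4 : x (4 : Fin 45) = x 44 := ht.mul_left_cancel (by linear_combination -h4 + e3 - (1 - t) * e2)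
      have e31 : x (31 : Fin 45) = x 44 := ht.mul_left_cancel (by linear_combination -h31 + e33 - (1 - t) * e32)
      have e30 : x (30 : Fin 45) = x 44 := by linear_combination h30 + t * e32 + (1 - t) * e31
      have e29 : x (29 : Fin 45) = x 44 := ht.mul_left_cancel (by linear_combination -h29 + e31 - (1 - t) * e30)
      have e28 : x (28 : Fin 45) = x 44 := by linear_combination h28 + t * e30 + (1 - t) * e29
      have e27 : x (27 : Fin 45) = x 44 := ht.mul_left_cancel (by linear_combination -h27 + e29 - (1 - t) * e28)
      have e5 : x (5 : Fin 45) = x 44 := ht1.mul_left_cancel (by linear_combination h7 - e28 + t * e27)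
      have e6 : x (6 : Fin 45) = x 44 := ht1.mul_left_cancel (by linear_combination h5 - e4 + t * e5)
      have e7 : x (7 : Fin 45) = x 44 := by linear_combination h6 + t * e6 + (1 - t) * e5
      have e8 : x (8 : Fin 45) = x 44 := by linear_combination h9 + t * e7 + (1 - t) * e6
      have e9 : x (9 : Fin 45) = x 44 := ht.mul_left_cancel (by linear_combination -h10 + e6 - (1 - t) * e8)
      have e10 : x (10 : Fin 45) = x 44 := by linear_combination h11 + t * e8 + (1 - t) * e9
      have e11 : x (11 : Fin 45) = x 44 := ht.mul_left_cancel (by linear_combination -h12 + e9 - (1 - t) * e10)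
      have e12 : x (12 : Fin 45) = x 44 := by linear_combination h13 + t * e10 + (1 - t) * e11
      have e13 : x (13 : Fin 45) = x 44 := ht.mul_left_cancel (by linear_combination -h14 + e11 - (1 - t) * e12)
      have e18 : x (18 : Fin 45) = x 44 := by linear_combination h15 + t * e14 + (1 - t) * e13
      have e21 : x (21 : Fin 45) = x 44 := by linear_combination h16 + t * e14 + (1 - t) * e12
      have e17 : x (17 : Fin 45) = x 44 := ht.mul_left_cancel (by linear_combination -h22 + e18 - (1 - t) * e21)
      have e22 : x (22 : Fin 45) = x 44 := ht.mul_left_cancel (by linear_combination -h25 + e25 - (1 - t) * e18)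
      have e23 : x (23 : Fin 45) = x 44 := ht.mul_left_cancel (by linear_combination -h26 + e24 - (1 - t) * e18)
      have e20 : x (20 : Fin 45) = x 44 := ht1.mul_left_cancel (by linear_combination h20 - e12 + t * e17)
      have e19 : x (19 : Fin 45) = x 44 := ht1.mul_left_cancel (by linear_combination h23 - e20 + t * e22)
      have e15 : x (15 : Fin 45) = x 44 := ht.mul_left_cancel (by linear_combination -h17 + e19 - (1 - t) * e13)
      have e16 : x (16 : Fin 45) = x 44 := ht.mul_left_cancel (by linear_combination -h19 + e13 - (1 - t) * e20)
      refine ⟨x 44, funext fun i => ?_⟩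
      fin_cases i
      exacts [e0.symm, e1.symm, e2.symm, e3.symm, e4.symm, e5.symm, e6.symm, e7.symm,
        e8.symm, e9.symm, e10.symm, e11.symm, e12.symm, e13.symm, e14.symm, e15.symm,
        e16.symm, e17.symm, e18.symm, e19.symm, e20.symm, e21.symm, e22.symm, e23.symm,
        e24.symm, e25.symm, e26.symm, e27.symm, e28.symm, e29.symm, e30.symm, e31.symm,
        e32.symm, e33.symm, e34.symm, e35.symm, e36.symm, e37.symm, e38.symm, e39.symm,
        e40.symm, e41.symm, e42.symm, e43.symm, rfl]
    · rintro ⟨c, rfl⟩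
      exact ⟨by ring, by ring, by ring, by ring, by ring, by ring, by ring, by ring, by ring, by ring, by ring, by ring, by ring, by ring, by ring, by ring, by ring, by ring, by ring, by ring, by ring, by ring, by ring, by ring, by ring, by ring, by ring, by ring, by ring, by ring, by ring, by ring, by ring, by ring, by ring, by ring, by ring, by ring, by ring, by ring, by ring, by ring, by ring, by ring, by ring⟩
  rw [hA, hB, ← Set.image_univ, ← Set.image_univ,
    Set.ncard_image_of_injective _ (fun a b h => congrFun h 0),
    Set.ncard_image_of_injective _ (fun a b h => congrFun h 0)]
end
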